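/- arXiv:1704.06195 — 6 statements merged into one kernel-verified Lean document; each statement's English description precedes it below -/
import Mathlib

section
/- Let p ∈ ℝ[x] be a real-rooted polynomial, let q ∈ ℝ[x] be a real-rooted polynomial all of whose roots are ≤ 0, with 1 ≤ deg q < deg p, and let φ > 0. Then q(D)p is real rooted of degree ≥ 1 and smax_φ(q(D)p) ≤ smax_φ(p) − Σ_{α ∈ roots(q)} 1/(φ−α), where the sum is over the roots of q counted with multiplicity. -/
/-- A univariate real polynomial is real rooted if all of its complex roots are real. -/
def RealRooted (p : Polynomial ℝ) : Prop :=
  ∀ z : ℂ, (Polynomial.aeval z) p = 0 → z.im = 0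

/-- `smax φ p` is the largest real root of `p' - φ·p`. -/
noncomputable def smax (φ : ℝ) (p : Polynomial ℝ) : ℝ :=
  sSup {x : ℝ | (Polynomial.derivative p - Polynomial.C φ * p).eval x = 0}

/-- `q(D)p`: substitute the derivative operator `D` for the variable of `q` and apply
the resulting differential operator to `p`. -/
noncomputable def applyDiff (q p : Polynomial ℝ) : Polynomial ℝ :=
  ∑ k ∈ Finset.range (q.natDegree + 1),
    q.coeff k • ((fun r => Polynomial.derivative r)^[k] p)


open Polynomial

lemma rr_ne_zero {p : Polynomial ℝ} (hp : RealRooted p) : p ≠ 0 := by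
  intro h
  have := hp Complex.I (by simp [h])
  simp [Complex.I_im] at this

lemma rr_factor {p p₁ : Polynomial ℝ} (x : ℝ) (h : p = (X - C x) * p₁)
    (hp : RealRooted p) : RealRooted p₁ := by
  intro z hz
  apply hp z
  rw [h, map_mul, hz, mul_zero]

lemma rr_splits {p : Polynomial ℝ} (hp : RealRooted p) : p.Splits := by
  generalize hn : p.natDegree = n
  induction n using Nat.strong_induction_on generalizing p with
  | _ n ih =>
    rcases Nat.lt_or_ge n 2 with h2 | h2
    · exact Splits.of_natDegree_le_one (by omega)
    · -- get a complex root
      have hp0 : p ≠ 0 := rr_ne_zero hp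
      have hdeg : 0 < (p.map (algebraMap ℝ ℂ)).degree := by
        rw [Polynomial.degree_map]
        have : 0 < p.natDegree := by omega
        exact natDegree_pos_iff_degree_pos.mp (hn ▸ this)
      obtain ⟨z, hz⟩ := Complex.exists_root hdeg
      have hz' : (Polynomial.aeval z) p = 0 := by
        rwa [Polynomial.aeval_def, ← Polynomial.eval_map]
      have him : z.im = 0 := hp z hz'
      set x : ℝ := z.re with hx
      have hroot : p.IsRoot x := by
        have : z = (x : ℂ) := Complex.ext rfl (by simp [him])
        have h2 : ((p.eval x : ℝ) : ℂ) = 0 := by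
          rw [← Complex.coe_algebraMap, ← Polynomial.aeval_algebraMap_apply_eq_algebraMap_eval,
            Complex.coe_algebraMap, ← this]
          exact hz'
        exact_mod_cast h2
      obtain ⟨p₁, hp₁⟩ := (Polynomial.dvd_iff_isRoot).mpr hroot
      have hp₁0 : p₁ ≠ 0 := by rintro rfl; simp at hp₁; exact hp0 hp₁
      have hdeg1 : p₁.natDegree = n - 1 := by
        have := Polynomial.natDegree_mul (p := X - C x) (q := p₁) (X_sub_C_ne_zero x) hp₁0
        rw [← hp₁, hn, natDegree_X_sub_C] at this
        omega
      have hsp1 : p₁.Splits :=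
        ih (n-1) (by omega) (rr_factor x hp₁ hp) hdeg1
      rw [hp₁]
      exact (Splits.mul (Splits.of_natDegree_le_one (by simp)) hsp1)

lemma rr_card_roots {p : Polynomial ℝ} (hp : RealRooted p) :
    Multiset.card p.roots = p.natDegree :=
  (Polynomial.splits_iff_card_roots).mp (rr_splits hp)

variable {K : Type*} [Field K]

noncomputable def msProd (s : Multiset K) : Polynomial K :=
  (s.map (fun a => X - C a)).prod

lemma msProd_cons (a : K) (s : Multiset K) :
    msProd (a ::ₘ s) = (X - C a) * msProd s := by
  simp [msProd]

lemma eval_msProd (s : Multiset K) (y : K) :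
    (msProd s).eval y = (s.map (fun a => y - a)).prod := by
  simp [msProd, eval_multiset_prod, Multiset.map_map, Function.comp]

lemma eval_msProd_ne_zero {s : Multiset K} {y : K} (h : ∀ a ∈ s, y ≠ a) :
    (msProd s).eval y ≠ 0 := by
  rw [eval_msProd]
  apply Multiset.prod_ne_zero
  intro h0
  obtain ⟨a, ha, ha0⟩ := Multiset.mem_map.mp h0
  exact h a ha (sub_eq_zero.mp ha0.symm.symm)

lemma eval_derivative_msProd (s : Multiset K) (y : K) (h : ∀ a ∈ s, y ≠ a) :
    (derivative (msProd s)).eval y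
      = (msProd s).eval y * (s.map (fun a => (y - a)⁻¹)).sum := by
  induction s using Multiset.induction_on with
  | empty => simp [msProd]
  | cons a s ihs =>
    have ha : y - a ≠ 0 := sub_ne_zero.mpr (h a (Multiset.mem_cons_self a s))
    have hs : ∀ b ∈ s, y ≠ b := fun b hb => h b (Multiset.mem_cons_of_mem hb)
    rw [msProd_cons, derivative_mul, derivative_X_sub_C]
    simp only [eval_add, eval_mul, eval_one, one_mul, eval_sub, eval_X, eval_C,
      Multiset.map_cons, Multiset.sum_cons]
    rw [ihs hs]
    field_simp

lemma eval_derivative2_msProd (s : Multiset K) (y : K) (h : ∀ a ∈ s, y ≠ a) :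
    (derivative (derivative (msProd s))).eval y
      = (msProd s).eval y *
          ((s.map (fun a => (y - a)⁻¹)).sum ^ 2 - (s.map (fun a => ((y - a)⁻¹)^2)).sum) := by
  induction s using Multiset.induction_on with
  | empty => simp [msProd]
  | cons a s ihs =>
    have ha : y - a ≠ 0 := sub_ne_zero.mpr (h a (Multiset.mem_cons_self a s))
    have hs : ∀ b ∈ s, y ≠ b := fun b hb => h b (Multiset.mem_cons_of_mem hb)
    rw [msProd_cons]
    simp only [derivative_mul, derivative_X_sub_C, derivative_one, derivative_add,
      zero_mul, one_mul, add_zero, zero_add]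
    simp only [eval_add, eval_mul, eval_one, one_mul, eval_sub, eval_X, eval_C,
      Multiset.map_cons, Multiset.sum_cons]
    rw [ihs hs, eval_derivative_msProd s y hs]
    field_simp
    ring

lemma ms_cauchy (R : Multiset ℝ) (f g : ℝ → ℝ) :
    ((R.map fun t => f t * g t).sum)^2
      ≤ (R.map fun t => (f t)^2).sum * (R.map fun t => (g t)^2).sum := by
  induction R using Multiset.induction_on with
  | empty => simp
  | cons a s ih =>
    simp only [Multiset.map_cons, Multiset.sum_cons]
    have hF : 0 ≤ (s.map fun t => (f t)^2).sum :=
      Multiset.sum_nonneg (by intro x hx; obtain ⟨t, _, rfl⟩ := Multiset.mem_map.mp hx; positivity)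
    have hG : 0 ≤ (s.map fun t => (g t)^2).sum :=
      Multiset.sum_nonneg (by intro x hx; obtain ⟨t, _, rfl⟩ := Multiset.mem_map.mp hx; positivity)
    set S := (s.map fun t => f t * g t).sum
    set F := (s.map fun t => (f t)^2).sum
    set G := (s.map fun t => (g t)^2).sum
    have ih' : S^2 ≤ F * G := ih
    have key : 2*(f a * g a)*S ≤ (f a)^2*G + (g a)^2*F := by
      rcases le_or_gt (2*(f a * g a)*S) 0 with h | h
      · nlinarith [sq_nonneg (f a), sq_nonneg (g a), mul_nonneg (mul_nonneg (sq_nonneg (f a)) hG) (sq_nonneg (g a)), mul_nonneg (sq_nonneg (f a)) hG, mul_nonneg (sq_nonneg (g a)) hF]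
      · have h2 : ((f a)^2*G + (g a)^2*F)^2 ≥ (2*(f a * g a)*S)^2 := by
          nlinarith [sq_nonneg ((f a)^2*G - (g a)^2*F), mul_nonneg (sq_nonneg (f a)) hG,
            mul_nonneg (sq_nonneg (g a)) hF, sq_nonneg (f a * g a), sq_nonneg S,
            mul_le_mul_of_nonneg_left ih' (mul_nonneg (sq_nonneg (f a)) (sq_nonneg (g a)))]
        have h3 : 0 ≤ (f a)^2*G + (g a)^2*F :=
          add_nonneg (mul_nonneg (sq_nonneg _) hG) (mul_nonneg (sq_nonneg _) hF)
        nlinarith [h2, h3, h]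
    nlinarith [ih', key]

lemma ms_sum_nonneg {R : Multiset ℝ} {f : ℝ → ℝ} (h : ∀ t ∈ R, 0 ≤ f t) :
    0 ≤ (R.map f).sum :=
  Multiset.sum_nonneg (by intro x hx; obtain ⟨t, ht, rfl⟩ := Multiset.mem_map.mp hx; exact h t ht)

lemma ms_sum_pos {R : Multiset ℝ} (hR : R ≠ 0) {f : ℝ → ℝ} (h : ∀ t ∈ R, 0 < f t) :
    0 < (R.map f).sum := by
  obtain ⟨t0, ht0⟩ := Multiset.exists_mem_of_ne_zero hR
  calc (0:ℝ) < f t0 := h t0 ht0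
  _ ≤ (R.map f).sum := Multiset.single_le_sum
      (by intro x hx; obtain ⟨t, ht, rfl⟩ := Multiset.mem_map.mp hx; exact (h t ht).le)
      _ (Multiset.mem_map_of_mem _ ht0)

lemma core_ineq (R : Multiset ℝ) (hR : R ≠ 0) (y α φ : ℝ) (hα : α ≤ 0) (hφ : 0 < φ)
    (ha : ∀ t ∈ R, 0 < y - t)
    (heq : ((R.map fun t => (y - t)⁻¹).sum - α) * ((R.map fun t => (y - t)⁻¹).sum - φ)
      = (R.map fun t => ((y - t)⁻¹)^2).sum) :
    φ ≤ (R.map fun t => (y + (φ - α)⁻¹ - t)⁻¹).sum := by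
  set A := (R.map fun t => (y - t)⁻¹).sum with hA
  set Ψ := (R.map fun t => ((y - t)⁻¹)^2).sum with hΨ
  have hApos : 0 < A := ms_sum_pos hR (fun t ht => inv_pos.mpr (ha t ht))
  have hΨnn : 0 ≤ Ψ := ms_sum_nonneg (fun t ht => sq_nonneg _)
  set w := A - α with hw
  have hwpos : 0 < w := by simp only [hw]; linarith
  have hAw : A ≤ w := by simp only [hw]; linarith
  have hφα : 0 < φ - α := by linarith
  set m := w^2 - Ψ with hmdef
  have hm : m = w * (φ - α) := by
    rw [hmdef, ← heq]; ring
  have hmpos : 0 < m := by rw [hm]; positivity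
  set δ := (φ - α)⁻¹ with hδ
  have hδpos : 0 < δ := inv_pos.mpr hφα
  have hδm : δ = w / m := by
    rw [hδ, hm, eq_div_iff (by positivity)]
    field_simp
  -- pointwise identity
  have hden : ∀ t ∈ R, 0 < m + w * (y - t)⁻¹ := by
    intro t ht
    have := inv_pos.mpr (ha t ht)
    positivity
  have hpt : ∀ t ∈ R, (y + δ - t)⁻¹
      = (y - t)⁻¹ - w * (((y - t)⁻¹)^2 / (m + w * (y - t)⁻¹)) := by
    intro t ht
    have h1 : 0 < y - t := ha t ht
    have h2 : 0 < m + w * (y - t)⁻¹ := hden t ht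
    rw [hδm]
    have h3 : y + w / m - t = (y - t) + w/m := by ring
    rw [h3]
    have h4 : (y - t) ≠ 0 := ne_of_gt h1
    have h5 : m ≠ 0 := ne_of_gt hmpos
    have h6 : m + w * (y-t)⁻¹ ≠ 0 := ne_of_gt h2
    field_simp
    ring
  have hsum1 : (R.map fun t => (y + δ - t)⁻¹).sum
      = A - w * (R.map fun t => ((y - t)⁻¹)^2 / (m + w * (y - t)⁻¹)).sum := by
    rw [Multiset.map_congr rfl hpt, Multiset.sum_map_sub, ← hA]
    congr 1
    exact Multiset.sum_map_mul_left
  set S2 := (R.map fun t => ((y - t)⁻¹)^2 / (m + w * (y - t)⁻¹)).sum with hS2def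
  set T := (R.map fun t => (y - t)⁻¹ / (m + w * (y - t)⁻¹)).sum with hTdef
  have hTnn : 0 ≤ T := ms_sum_nonneg (fun t ht =>
    div_nonneg (inv_nonneg.mpr (ha t ht).le) (hden t ht).le)
  have hS2 : S2 = w⁻¹ * A - (m/w) * T := by
    have hpt2 : ∀ t ∈ R, ((y - t)⁻¹)^2 / (m + w * (y - t)⁻¹)
        = w⁻¹ * (y - t)⁻¹ - (m/w) * ((y - t)⁻¹ / (m + w * (y - t)⁻¹)) := by
      intro t ht
      have h1 : 0 < y - t := ha t ht
      have h2 : 0 < m + w * (y - t)⁻¹ := hden t ht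
      field_simp
      ring
    rw [hS2def, Multiset.map_congr rfl hpt2, Multiset.sum_map_sub]
    congr 1
    · rw [hA]; exact Multiset.sum_map_mul_left
    · rw [hTdef]; exact Multiset.sum_map_mul_left
  -- Cauchy-Schwarz
  have hCS : A^2 ≤ T * (m*A + w*Ψ) := by
    have hU : (R.map fun t => (y-t)⁻¹ * (m + w*(y-t)⁻¹)).sum = m*A + w*Ψ := by
      have hpt3 : ∀ t ∈ R, (y-t)⁻¹ * (m + w*(y-t)⁻¹)
          = m * (y-t)⁻¹ + w * ((y-t)⁻¹)^2 := by
        intro t ht; ring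
      rw [Multiset.map_congr rfl hpt3, Multiset.sum_map_add, hA, hΨ]
      congr 1 <;> exact Multiset.sum_map_mul_left
    have hcs := ms_cauchy R (fun t => Real.sqrt ((y-t)⁻¹ / (m + w*(y-t)⁻¹)))
      (fun t => Real.sqrt ((y-t)⁻¹ * (m + w*(y-t)⁻¹)))
    have hmap1 : (R.map fun t => Real.sqrt ((y-t)⁻¹ / (m + w*(y-t)⁻¹))
        * Real.sqrt ((y-t)⁻¹ * (m + w*(y-t)⁻¹))).sum = A := by
      rw [hA]
      apply congrArg
      apply Multiset.map_congr rfl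
      intro t ht
      have h1 : 0 < (y - t)⁻¹ := inv_pos.mpr (ha t ht)
      have h2 : 0 < m + w * (y - t)⁻¹ := hden t ht
      rw [← Real.sqrt_mul (by positivity)]
      have : (y-t)⁻¹ / (m + w*(y-t)⁻¹) * ((y-t)⁻¹ * (m + w*(y-t)⁻¹)) = ((y-t)⁻¹)^2 := by
        rw [mul_comm ((y-t)⁻¹ / (m + w*(y-t)⁻¹)) ((y-t)⁻¹ * (m + w*(y-t)⁻¹)), mul_assoc,
          mul_comm (m + w*(y-t)⁻¹) ((y-t)⁻¹ / (m + w*(y-t)⁻¹)), div_mul_cancel₀ _ h2.ne']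
        ring
      rw [this, Real.sqrt_sq h1.le]
    have hmap2 : (R.map fun t => (Real.sqrt ((y-t)⁻¹ / (m + w*(y-t)⁻¹)))^2).sum = T := by
      rw [hTdef]
      apply congrArg
      apply Multiset.map_congr rfl
      intro t ht
      exact Real.sq_sqrt (div_nonneg (inv_pos.mpr (ha t ht)).le (hden t ht).le)
    have hmap3 : (R.map fun t => (Real.sqrt ((y-t)⁻¹ * (m + w*(y-t)⁻¹)))^2).sum
        = m*A + w*Ψ := by
      rw [← hU]
      apply congrArg
      apply Multiset.map_congr rfl
      intro t ht
      exact Real.sq_sqrt (mul_nonneg (inv_pos.mpr (ha t ht)).le (hden t ht).le)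
    rw [hmap1, hmap2, hmap3] at hcs
    exact hcs
  -- conclude
  have hfin : w * S2 ≤ Ψ / w := by
    rw [hS2]
    have hne : w ≠ 0 := ne_of_gt hwpos
    have hred : w * (w⁻¹ * A - m / w * T) = A - m * T := by field_simp
    rw [hred]
    rw [sub_le_iff_le_add, ← sub_le_iff_le_add']
    -- A - Ψ/w ≤ m*T
    rcases le_or_gt (A - Ψ/w) 0 with hc | hc
    · calc A - Ψ/w ≤ 0 := hc
      _ ≤ m * T := mul_nonneg hmpos.le hTnn
    · have hUpos : 0 < m*A + w*Ψ := by positivity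
      have hT : A^2 / (m*A + w*Ψ) ≤ T := (div_le_iff₀ hUpos).mpr (by linarith [hCS])
      have hkey : A - Ψ/w ≤ m * (A^2 / (m*A + w*Ψ)) := by
        rw [sub_le_iff_le_add]
        have hcomb : m*(A^2/(m*A + w*Ψ)) + Ψ/w
            = (m*A^2*w + Ψ*(m*A + w*Ψ))/((m*A + w*Ψ)*w) := by
          field_simp
          try ring
        rw [hcomb, le_div_iff₀ (by positivity), hmdef]
        nlinarith [mul_nonneg (mul_nonneg hΨnn hΨnn) (sub_nonneg.mpr hAw)]
      calc A - Ψ/w ≤ m * (A^2 / (m*A + w*Ψ)) := hkey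
      _ ≤ m * T := by exact mul_le_mul_of_nonneg_left hT hmpos.le
  have hφA : φ = A - Ψ / w := by
    have hne : w ≠ 0 := ne_of_gt hwpos
    have : A - φ = Ψ / w := by rw [eq_div_iff hne]; linarith [heq, mul_comm w (A - φ)]
    linarith
  rw [hsum1, hφA]
  linarith

-- p = C lc * msProd roots
lemma rr_eq_prod {p : Polynomial ℝ} (hp : RealRooted p) :
    p = C p.leadingCoeff * msProd p.roots :=
  (rr_splits hp).eq_prod_roots

lemma rr_deriv_sub_c_mul {p : Polynomial ℝ} (hp : RealRooted p) (hd : 1 ≤ p.natDegree)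
    (c : ℝ) : RealRooted (derivative p - C c * p) := by
  intro z hz
  by_cases hzp : (Polynomial.aeval z) p = 0
  · exact hp z hzp
  -- work with the complex polynomial
  have hz' : (Polynomial.aeval z) (derivative p) = c * (Polynomial.aeval z) p := by
    have := hz
    rw [map_sub, map_mul, aeval_C] at this
    have h2 : ((c : ℂ) * (aeval z) p) = (algebraMap ℝ ℂ c) * (aeval z) p := by norm_cast
    rw [sub_eq_zero] at this
    rw [this]; norm_cast
  -- express aeval via roots
  set s : Multiset ℂ := p.roots.map Complex.ofReal with hs
  have hcard : Multiset.card p.roots = p.natDegree := rr_card_roots hp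
  have hzs : ∀ a ∈ s, z ≠ a := by
    intro a ha hza
    obtain ⟨t, ht, hta⟩ := Multiset.mem_map.mp ha
    apply hzp
    have h0 : p.eval t = 0 := (Polynomial.mem_roots'.mp ht).2
    rw [hza, ← hta, show ((t:ℂ)) = algebraMap ℝ ℂ t from rfl,
      aeval_algebraMap_apply_eq_algebraMap_eval, h0, map_zero]
  -- p over ℂ factors
  have hmap : p.map (algebraMap ℝ ℂ) = C (algebraMap ℝ ℂ p.leadingCoeff) * msProd s := by
    have h1 : (p.map (algebraMap ℝ ℂ)).roots = s := by
      rw [hs, (rr_splits hp).roots_map _]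
      rfl
    have h2 : (p.map (algebraMap ℝ ℂ)) = C (p.map (algebraMap ℝ ℂ)).leadingCoeff *
        msProd (p.map (algebraMap ℝ ℂ)).roots :=
      Splits.eq_prod_roots (IsAlgClosed.splits _)
    rw [h1] at h2
    rw [h2, Polynomial.leadingCoeff_map]
  -- aeval expressions
  have hlc : (algebraMap ℝ ℂ p.leadingCoeff) ≠ 0 := by
    simp [leadingCoeff_eq_zero, rr_ne_zero hp]
  have haevalp : (aeval z) p = (algebraMap ℝ ℂ p.leadingCoeff) * (msProd s).eval z := by
    rw [aeval_def, ← eval_map, hmap]; simp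
  have haevald : (aeval z) (derivative p)
      = (algebraMap ℝ ℂ p.leadingCoeff) * (derivative (msProd s)).eval z := by
    rw [aeval_def, ← eval_map, ← derivative_map, hmap]; simp
  have hQ : (msProd s).eval z ≠ 0 := eval_msProd_ne_zero hzs
  have hsum : (s.map (fun a => (z - a)⁻¹)).sum = (c : ℂ) := by
    have h3 := hz'
    rw [haevald, haevalp, eval_derivative_msProd s z hzs] at h3
    have h5 : ((algebraMap ℝ ℂ p.leadingCoeff) * (msProd s).eval z)
        * (s.map (fun a => (z - a)⁻¹)).sum
        = ((algebraMap ℝ ℂ p.leadingCoeff) * (msProd s).eval z) * (c : ℂ) := by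
      linear_combination h3
    exact mul_left_cancel₀ (mul_ne_zero hlc hQ) h5
  -- imaginary part
  by_contra him
  have himeq : ((s.map (fun a => (z - a)⁻¹)).sum).im = 0 := by rw [hsum]; simp
  have himeq' : ((s.map (fun a => (z - a)⁻¹)).map Complex.im).sum = 0 := by
    rw [show (Complex.im : ℂ → ℝ) = ⇑Complex.imAddGroupHom from rfl, ← map_multiset_sum]
    exact himeq
  rw [hs, Multiset.map_map, Multiset.map_map] at himeq'
  have hrw : Multiset.map ((Complex.im ∘ fun a => (z - a)⁻¹) ∘ Complex.ofReal) p.roots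
      = Multiset.map (fun t : ℝ => -z.im * (Complex.normSq (z - (t:ℂ)))⁻¹) p.roots := by
    apply Multiset.map_congr rfl
    intro t ht
    simp only [Function.comp_apply, Complex.inv_im]
    rw [neg_div, div_eq_mul_inv]
    congr 2
    simp
  rw [hrw, Multiset.sum_map_mul_left] at himeq'
  have himeq := himeq'
  have hpos : 0 < (Multiset.map (fun t : ℝ => (Complex.normSq (z - (t:ℂ)))⁻¹) p.roots).sum := by
    have hne : p.roots ≠ 0 := by
      intro h0
      have := hcard
      rw [h0] at this
      simp at this
      omega
    obtain ⟨t0, ht0⟩ := Multiset.exists_mem_of_ne_zero hne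
    have hmem : (Complex.normSq (z - (t0:ℂ)))⁻¹
        ∈ Multiset.map (fun t : ℝ => (Complex.normSq (z - (t:ℂ)))⁻¹) p.roots :=
      Multiset.mem_map_of_mem _ ht0
    have hall : ∀ x ∈ Multiset.map (fun t : ℝ => (Complex.normSq (z - (t:ℂ)))⁻¹) p.roots,
        0 ≤ x := by
      intro x hx
      obtain ⟨t, ht, rfl⟩ := Multiset.mem_map.mp hx
      exact inv_nonneg.mpr (Complex.normSq_nonneg _)
    have hlt : 0 < (Complex.normSq (z - (t0:ℂ)))⁻¹ := by
      have : z - (t0:ℂ) ≠ 0 := by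
        intro h0
        have : z = (t0:ℂ) := by linear_combination h0
        rw [this] at him
        simp at him
      exact inv_pos.mpr (Complex.normSq_pos.mpr this)
    calc (0:ℝ) < (Complex.normSq (z - (t0:ℂ)))⁻¹ := hlt
    _ ≤ _ := Multiset.single_le_sum hall _ hmem
  have : -z.im * (Multiset.map (fun t : ℝ => (Complex.normSq (z - (t:ℂ)))⁻¹) p.roots).sum ≠ 0 := by
    apply mul_ne_zero
    · simpa using him
    · exact ne_of_gt hpos
  exact this himeq

-- === Section D ===
def Zset (g : Polynomial ℝ) : Set ℝ := {x : ℝ | g.eval x = 0}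

lemma smax_eq_sSup (φ : ℝ) (p : Polynomial ℝ) :
    smax φ p = sSup (Zset (derivative p - C φ * p)) := rfl

lemma Zset_finite {g : Polynomial ℝ} (hg : g ≠ 0) : (Zset g).Finite := by
  apply Set.Finite.subset (g.roots.toFinset.finite_toSet)
  intro x hx
  simp only [Finset.coe_sort_coe, Multiset.mem_toFinset, Finset.mem_coe]
  rw [mem_roots']
  exact ⟨hg, hx⟩

lemma Zset_nonempty {g : Polynomial ℝ} (hg : RealRooted g) (hd : 1 ≤ g.natDegree) :
    (Zset g).Nonempty := by
  have hcard := rr_card_roots hg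
  have : g.roots ≠ 0 := by
    intro h0; rw [h0] at hcard; simp at hcard; omega
  obtain ⟨t, ht⟩ := Multiset.exists_mem_of_ne_zero this
  exact ⟨t, (mem_roots'.mp ht).2⟩

lemma Zset_mem_sSup {g : Polynomial ℝ} (hg : RealRooted g) (hd : 1 ≤ g.natDegree) :
    sSup (Zset g) ∈ Zset g :=
  (Zset_nonempty hg hd).csSup_mem (Zset_finite (rr_ne_zero hg))

lemma Zset_le_sSup {g : Polynomial ℝ} (hg : g ≠ 0) {x : ℝ} (hx : x ∈ Zset g) :
    x ≤ sSup (Zset g) :=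
  le_csSup (Zset_finite hg).bddAbove hx

lemma deg_eq_of_ne {p : Polynomial ℝ} (hd : 1 ≤ p.natDegree) {c : ℝ} (hc : c ≠ 0) :
    (derivative p - C c * p).natDegree = p.natDegree := by
  have h1 : (derivative p).natDegree < (C c * p).natDegree := by
    rw [natDegree_C_mul hc]; exact natDegree_derivative_lt (by omega)
  rw [natDegree_sub_eq_right_of_natDegree_lt h1, natDegree_C_mul hc]

lemma deg_lower {p : Polynomial ℝ} (hp : p ≠ 0) (hd : 1 ≤ p.natDegree) (α : ℝ) :
    p.natDegree - 1 ≤ (derivative p - C α * p).natDegree := by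
  rcases eq_or_ne α 0 with h0 | h0
  · rw [h0, map_zero, zero_mul, sub_zero]
    apply le_natDegree_of_ne_zero
    rw [coeff_derivative]
    have h2 : p.natDegree - 1 + 1 = p.natDegree := by omega
    rw [h2]
    have h3 : p.coeff p.natDegree ≠ 0 := by
      rw [← leadingCoeff]; exact leadingCoeff_ne_zero.mpr hp
    positivity
  · rw [deg_eq_of_ne hd h0]; omega

-- === Section E : the one-step lemma ===
lemma step {p : Polynomial ℝ} (hp : RealRooted p) (h2 : 2 ≤ p.natDegree)
    {α : ℝ} (hα : α ≤ 0) {φ : ℝ} (hφ : 0 < φ) :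
    RealRooted (derivative p - C α * p) ∧
    p.natDegree - 1 ≤ (derivative p - C α * p).natDegree ∧
    smax φ (derivative p - C α * p) ≤ smax φ p - (φ - α)⁻¹ := by
  have hd1 : 1 ≤ p.natDegree := by omega
  have hp0 : p ≠ 0 := rr_ne_zero hp
  set r : Polynomial ℝ := derivative p - C α * p with hrdef
  have hrr : RealRooted r := rr_deriv_sub_c_mul hp hd1 α
  have hrdeg : p.natDegree - 1 ≤ r.natDegree := deg_lower hp0 hd1 α
  refine ⟨hrr, hrdeg, ?_⟩
  have hr1 : 1 ≤ r.natDegree := by omega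
  set R := p.roots with hRdef
  have hcard : Multiset.card R = p.natDegree := rr_card_roots hp
  have hR0 : R ≠ 0 := by intro h0; rw [h0] at hcard; simp at hcard; omega
  have htoF : R.toFinset.Nonempty := by rwa [Multiset.toFinset_nonempty]
  set Λ := R.toFinset.max' htoF with hΛdef
  have hΛmem : Λ ∈ R := Multiset.mem_toFinset.mp (Finset.max'_mem _ _)
  have hΛub : ∀ t ∈ R, t ≤ Λ := fun t ht => Finset.le_max' _ _ (Multiset.mem_toFinset.mpr ht)
  have hsub : ∀ x, Λ < x → ∀ t ∈ R, 0 < x - t := by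
    intro x hx t ht
    have := hΛub t ht; linarith
  have hne : ∀ x, Λ < x → ∀ t ∈ R, x ≠ t := by
    intro x hx t ht h0
    have := hsub x hx t ht; rw [h0] at this; linarith
  have hlc : p.leadingCoeff ≠ 0 := leadingCoeff_ne_zero.mpr hp0
  have hpid : p = C p.leadingCoeff * msProd R := rr_eq_prod hp
  set Φ : ℝ → ℝ := fun x => (R.map fun t => (x - t)⁻¹).sum with hΦdef
  set Ψ : ℝ → ℝ := fun x => (R.map fun t => ((x - t)⁻¹)^2).sum with hΨdef
  have hpe : ∀ x : ℝ, p.eval x = p.leadingCoeff * (msProd R).eval x := by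
    intro x; conv_lhs => rw [hpid]
    simp
  have hprodpos : ∀ x, Λ < x → 0 < (msProd R).eval x := by
    intro x hx
    rw [eval_msProd]
    apply Multiset.prod_pos
    intro a ha
    obtain ⟨t, ht, rfl⟩ := Multiset.mem_map.mp ha
    exact hsub x hx t ht
  have hpne : ∀ x, Λ < x → p.eval x ≠ 0 := by
    intro x hx
    rw [hpe x]
    exact mul_ne_zero hlc (ne_of_gt (hprodpos x hx))
  have hde : ∀ x, Λ < x → (derivative p).eval x = p.eval x * Φ x := by
    intro x hx
    conv_lhs => rw [hpid]
    rw [derivative_C_mul, eval_C_mul, eval_derivative_msProd R x (hne x hx), hpe x]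
    ring
  have hde2 : ∀ x, Λ < x →
      (derivative (derivative p)).eval x = p.eval x * ((Φ x)^2 - Ψ x) := by
    intro x hx
    conv_lhs => rw [hpid]
    rw [derivative_C_mul, derivative_C_mul, eval_C_mul,
      eval_derivative2_msProd R x (hne x hx), hpe x]
    ring
  set g : Polynomial ℝ := derivative p - C φ * p with hgdef
  have hgrr : RealRooted g := rr_deriv_sub_c_mul hp hd1 φ
  have hgdeg : g.natDegree = p.natDegree := deg_eq_of_ne hd1 (ne_of_gt hφ)
  have hg1 : 1 ≤ g.natDegree := by omega
  have hgev : ∀ x, Λ < x → g.eval x = p.eval x * (Φ x - φ) := by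
    intro x hx
    rw [hgdef]
    simp only [eval_sub, eval_mul, eval_C]
    rw [hde x hx]; ring
  set b := smax φ p with hbdef
  have hbs : b = sSup (Zset g) := rfl
  have hbZ : b ∈ Zset g := by rw [hbs]; exact Zset_mem_sSup hgrr hg1
  -- a root of g above Λ
  set n := p.natDegree with hndef
  set x₁ : ℝ := Λ + (φ+1)⁻¹ with hx₁def
  set x₂ : ℝ := Λ + ((n:ℝ)+1)/φ with hx₂def
  have hx₁Λ : Λ < x₁ := by
    rw [hx₁def]
    have : 0 < (φ+1)⁻¹ := by positivity
    linarith
  have hx₂Λ : Λ < x₂ := by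
    rw [hx₂def]
    have : 0 < ((n:ℝ)+1)/φ := by positivity
    linarith
  have hx12 : x₁ ≤ x₂ := by
    rw [hx₁def, hx₂def]
    have h1 : (φ+1)⁻¹ ≤ φ⁻¹ := by
      apply inv_anti₀ hφ; linarith
    have h2 : φ⁻¹ ≤ ((n:ℝ)+1)/φ := by
      rw [div_eq_mul_inv]
      nlinarith [inv_pos.mpr hφ]
    linarith
  have hΦx₁ : φ < Φ x₁ := by
    have hmem : (x₁ - Λ)⁻¹ ∈ R.map (fun t => (x₁ - t)⁻¹) :=
      Multiset.mem_map_of_mem _ hΛmem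
    have h1 : (x₁ - Λ)⁻¹ ≤ Φ x₁ := Multiset.single_le_sum
      (by intro u hu
          obtain ⟨t, ht, rfl⟩ := Multiset.mem_map.mp hu
          exact (inv_pos.mpr (hsub x₁ hx₁Λ t ht)).le) _ hmem
    have h2 : x₁ - Λ = (φ+1)⁻¹ := by rw [hx₁def]; ring
    rw [h2, inv_inv] at h1
    linarith
  have hΦx₂ : Φ x₂ < φ := by
    have h1 : ∀ u ∈ R.map (fun t => (x₂ - t)⁻¹), u ≤ (x₂ - Λ)⁻¹ := by
      intro u hu
      obtain ⟨t, ht, rfl⟩ := Multiset.mem_map.mp hu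
      apply inv_anti₀ (hsub x₂ hx₂Λ Λ hΛmem)
      have := hΛub t ht; linarith
    have h2 := Multiset.sum_le_card_nsmul _ _ h1
    rw [Multiset.card_map, hcard] at h2
    have h3 : x₂ - Λ = ((n:ℝ)+1)/φ := by rw [hx₂def]; ring
    have h5 : (x₂ - Λ)⁻¹ = φ/((n:ℝ)+1) := by rw [h3, inv_div]
    rw [h5, nsmul_eq_mul] at h2
    push_cast at h2
    have h6 : (n:ℝ) * (φ/((n:ℝ)+1)) < φ := by
      rw [mul_div_assoc', div_lt_iff₀ (by positivity)]
      have hn0 : (0:ℝ) ≤ (n:ℝ) := Nat.cast_nonneg n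
      nlinarith
    calc Φ x₂ = (R.map fun t => (x₂ - t)⁻¹).sum := rfl
    _ ≤ (n:ℝ) * (φ/((n:ℝ)+1)) := h2
    _ < φ := h6
  -- IVT
  have hgx₁ : g.eval x₁ = p.leadingCoeff * ((msProd R).eval x₁ * (Φ x₁ - φ)) := by
    rw [hgev x₁ hx₁Λ, hpe x₁]; ring
  have hgx₂ : g.eval x₂ = p.leadingCoeff * ((msProd R).eval x₂ * (Φ x₂ - φ)) := by
    rw [hgev x₂ hx₂Λ, hpe x₂]; ring
  have hcont : ContinuousOn (fun x => g.eval x) (Set.Icc x₁ x₂) :=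
    (Polynomial.continuous g).continuousOn
  have hroot : ∃ x₀ ∈ Set.Icc x₁ x₂, g.eval x₀ = 0 := by
    rcases lt_or_gt_of_ne hlc with hneg | hpos
    · -- lc < 0 : g.eval x₁ < 0 < g.eval x₂
      have e1 : g.eval x₁ < 0 := by
        rw [hgx₁]
        apply mul_neg_of_neg_of_pos hneg
        exact mul_pos (hprodpos x₁ hx₁Λ) (by linarith)
      have e2 : 0 < g.eval x₂ := by
        rw [hgx₂]
        apply mul_pos_of_neg_of_neg hneg
        exact mul_neg_of_pos_of_neg (hprodpos x₂ hx₂Λ) (by linarith)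
      have := intermediate_value_Icc hx12 hcont (Set.mem_Icc.mpr ⟨e1.le, e2.le⟩)
      obtain ⟨x₀, hx₀mem, hx₀⟩ := this
      exact ⟨x₀, hx₀mem, hx₀⟩
    · have e1 : 0 < g.eval x₁ := by
        rw [hgx₁]
        exact mul_pos hpos (mul_pos (hprodpos x₁ hx₁Λ) (by linarith))
      have e2 : g.eval x₂ < 0 := by
        rw [hgx₂]
        apply mul_neg_of_pos_of_neg hpos
        exact mul_neg_of_pos_of_neg (hprodpos x₂ hx₂Λ) (by linarith)
      have := intermediate_value_Icc' hx12 hcont (Set.mem_Icc.mpr ⟨e2.le, e1.le⟩)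
      obtain ⟨x₀, hx₀mem, hx₀⟩ := this
      exact ⟨x₀, hx₀mem, hx₀⟩
  obtain ⟨x₀, hx₀mem, hx₀⟩ := hroot
  have hbx₀ : x₀ ≤ b := by
    rw [hbs]
    exact Zset_le_sSup (rr_ne_zero hgrr) hx₀
  have hΛb : Λ < b := lt_of_lt_of_le (lt_of_lt_of_le hx₁Λ hx₀mem.1) hbx₀
  have hΦb : Φ b = φ := by
    have h0 : g.eval b = 0 := hbZ
    rw [hgev b hΛb] at h0
    rcases mul_eq_zero.mp h0 with h1 | h1
    · exact absurd h1 (hpne b hΛb)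
    · linarith
  set δ : ℝ := (φ - α)⁻¹ with hδdef
  have hφα : 0 < φ - α := by linarith
  have hδpos : 0 < δ := inv_pos.mpr hφα
  have hδφ : δ ≤ φ⁻¹ := by
    rw [hδdef]
    apply inv_anti₀ hφ; linarith
  have hbΛδ : Λ + δ ≤ b := by
    have hbΛpos : 0 < b - Λ := by linarith
    have hmem : (b - Λ)⁻¹ ∈ R.map (fun t => (b - t)⁻¹) :=
      Multiset.mem_map_of_mem _ hΛmem
    have h1 : (b - Λ)⁻¹ ≤ Φ b := Multiset.single_le_sum
      (by intro u hu
          obtain ⟨t, ht, rfl⟩ := Multiset.mem_map.mp hu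
          exact (inv_pos.mpr (hsub b hΛb t ht)).le) _ hmem
    rw [hΦb] at h1
    have h2 := mul_le_mul_of_nonneg_left h1 hbΛpos.le
    rw [mul_inv_cancel₀ hbΛpos.ne'] at h2
    have h3 : 1/φ ≤ b - Λ := (div_le_iff₀ hφ).mpr h2
    rw [one_div] at h3
    linarith
  -- the polynomial for smax φ r
  set rg : Polynomial ℝ := derivative r - C φ * r with hrgdef
  have hrgrr : RealRooted rg := rr_deriv_sub_c_mul hrr hr1 φ
  have hrg1 : 1 ≤ rg.natDegree := by
    rw [hrgdef, deg_eq_of_ne hr1 (ne_of_gt hφ)]; omega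
  show smax φ r ≤ b - δ
  have hsmaxr : smax φ r = sSup (Zset rg) := rfl
  rw [hsmaxr]
  apply csSup_le (Zset_nonempty hrgrr hrg1)
  intro y hy
  rcases le_or_gt y Λ with hyΛ | hΛy
  · linarith
  · have hrg_ev : rg.eval y = p.eval y * ((Φ y - α)*(Φ y - φ) - Ψ y) := by
      rw [hrgdef, hrdef, derivative_sub, derivative_C_mul]
      simp only [eval_sub, eval_mul, eval_C]
      rw [hde y hΛy, hde2 y hΛy]
      ring
    have heqq : (Φ y - α)*(Φ y - φ) = Ψ y := by
      have h0 : rg.eval y = 0 := hy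
      rw [hrg_ev] at h0
      rcases mul_eq_zero.mp h0 with h1 | h1
      · exact absurd h1 (hpne y hΛy)
      · linarith
    have hcore := core_ineq R hR0 y α φ hα hφ (hsub y hΛy) heqq
    have hyb : y + δ ≤ b := by
      by_contra hcon
      push_neg at hcon
      have hΛyδ : Λ < y + δ := by linarith
      have hlt : Φ (y+δ) < Φ b := by
        apply Multiset.sum_lt_sum
        · intro t ht
          apply inv_anti₀ (hsub b hΛb t ht)
          linarith
        · refine ⟨Λ, hΛmem, ?_⟩
          apply inv_strictAnti₀ (by linarith [hsub b hΛb Λ hΛmem])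
          linarith
      rw [hΦb] at hlt
      have : φ ≤ Φ (y + δ) := hcore
      linarith
    linarith

-- === Section F ===
noncomputable def Dop : Module.End ℝ (Polynomial ℝ) := Polynomial.derivative

lemma applyDiff_eq (q p : Polynomial ℝ) : applyDiff q p = (Polynomial.aeval Dop q) p := by
  rw [Polynomial.aeval_eq_sum_range, applyDiff]
  rw [LinearMap.sum_apply]
  apply Finset.sum_congr rfl
  intro k _
  rw [LinearMap.smul_apply, Module.End.pow_apply]
  rfl

lemma applyDiff_one (p : Polynomial ℝ) : applyDiff 1 p = p := by
  rw [applyDiff_eq, map_one]; rfl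

lemma applyDiff_mul (u v p : Polynomial ℝ) :
    applyDiff (u * v) p = applyDiff u (applyDiff v p) := by
  rw [applyDiff_eq, applyDiff_eq, applyDiff_eq, map_mul]
  rfl

lemma applyDiff_C_mul (c : ℝ) (q p : Polynomial ℝ) :
    applyDiff (C c * q) p = c • applyDiff q p := by
  rw [applyDiff_eq, applyDiff_eq, map_mul, aeval_C]
  rw [Module.End.mul_apply, Module.algebraMap_end_apply]

lemma applyDiff_X_sub_C (α : ℝ) (p : Polynomial ℝ) :
    applyDiff (X - C α) p = derivative p - C α * p := by
  rw [applyDiff_eq, map_sub, aeval_X, aeval_C]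
  rw [LinearMap.sub_apply]
  congr 1
  rw [Module.algebraMap_end_apply, smul_eq_C_mul]

lemma main_ind {p : Polynomial ℝ} (hp : RealRooted p) {φ : ℝ} (hφ : 0 < φ)
    (s : Multiset ℝ) (hle : ∀ t ∈ s, t ≤ 0) (hcard : Multiset.card s < p.natDegree) :
    RealRooted (applyDiff (msProd s) p) ∧
    p.natDegree - Multiset.card s ≤ (applyDiff (msProd s) p).natDegree ∧
    smax φ (applyDiff (msProd s) p) ≤ smax φ p - (s.map (fun t => (φ - t)⁻¹)).sum := by
  induction s using Multiset.induction_on with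
  | empty =>
    refine ⟨?_, ?_, ?_⟩
    · rw [show msProd (0 : Multiset ℝ) = 1 by simp [msProd], applyDiff_one]; exact hp
    · rw [show msProd (0 : Multiset ℝ) = 1 by simp [msProd], applyDiff_one]; simp
    · rw [show msProd (0 : Multiset ℝ) = 1 by simp [msProd], applyDiff_one]; simp
  | cons a s ih =>
    have hcards : Multiset.card s < p.natDegree := by
      rw [Multiset.card_cons] at hcard; omega
    obtain ⟨ih1, ih2, ih3⟩ :=
      ih (fun t ht => hle t (Multiset.mem_cons_of_mem ht)) hcards
    have hcard2 : Multiset.card s + 1 < p.natDegree := by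
      rw [Multiset.card_cons] at hcard; omega
    have hdeg2 : 2 ≤ (applyDiff (msProd s) p).natDegree := by omega
    have hstep := step ih1 hdeg2 (hle a (Multiset.mem_cons_self a s)) hφ
    rw [msProd_cons, applyDiff_mul, applyDiff_X_sub_C]
    refine ⟨hstep.1, ?_, ?_⟩
    · rw [Multiset.card_cons]
      have := hstep.2.1
      omega
    · rw [Multiset.map_cons, Multiset.sum_cons]
      have h3 := hstep.2.2
      linarith


/-- If `p` is real rooted, `q` is real rooted with all roots `≤ 0` and
`1 ≤ deg q < deg p`, then for `φ > 0`, `q(D)p` is real rooted of degree `≥ 1` and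
`smax_φ(q(D)p) ≤ smax_φ(p) - Σ_{α ∈ roots q} 1/(φ-α)` (roots counted with multiplicity). -/
theorem smax_shift_of_diff_op (p q : Polynomial ℝ) (hp : RealRooted p) (hq : RealRooted q)
    (hqroots : ∀ α ∈ q.roots, α ≤ 0) (hqdeg : 1 ≤ q.natDegree)
    (hdeg : q.natDegree < p.natDegree) (φ : ℝ) (hφ : 0 < φ) :
    RealRooted (applyDiff q p) ∧ 1 ≤ (applyDiff q p).natDegree ∧
      smax φ (applyDiff q p) ≤ smax φ p - (q.roots.map (fun α => 1 / (φ - α))).sum := by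
  have hq0 : q ≠ 0 := rr_ne_zero hq
  have hlc : q.leadingCoeff ≠ 0 := leadingCoeff_ne_zero.mpr hq0
  have hcards : Multiset.card q.roots = q.natDegree := rr_card_roots hq
  have hAD : applyDiff q p = q.leadingCoeff • applyDiff (msProd q.roots) p := by
    conv_lhs => rw [rr_eq_prod hq]
    rw [applyDiff_C_mul]
  obtain ⟨m1, m2, m3⟩ := main_ind hp hφ q.roots hqroots (by omega)
  set r := applyDiff (msProd q.roots) p with hr
  set c := q.leadingCoeff with hc
  have hsmul : c • r = C c * r := smul_eq_C_mul c ▸ rfl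
  refine ⟨?_, ?_, ?_⟩
  · rw [hAD]
    intro z hz
    apply m1 z
    rw [hsmul, map_mul, aeval_C] at hz
    have : (algebraMap ℝ ℂ c) ≠ 0 := by
      intro h
      apply hlc
      have : ((c:ℝ):ℂ) = 0 := h
      exact_mod_cast this
    exact (mul_eq_zero.mp hz).resolve_left this
  · rw [hAD, hsmul, natDegree_C_mul hlc]
    omega
  · have hZeq : {x : ℝ | (derivative (c • r) - C φ * (c • r)).eval x = 0}
        = {x : ℝ | (derivative r - C φ * r).eval x = 0} := by
      ext x
      simp only [Set.mem_setOf_eq, hsmul, derivative_C_mul]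
      constructor
      · intro h
        have h2 : c * ((derivative r - C φ * r).eval x) = 0 := by
          simp only [eval_sub, eval_mul, eval_C] at h ⊢
          linear_combination h
        exact (mul_eq_zero.mp h2).resolve_left hlc
      · intro h
        simp only [eval_sub, eval_mul, eval_C] at h ⊢
        linear_combination c * h
    have hsm : smax φ (applyDiff q p) = smax φ r := by
      rw [hAD]
      unfold smax
      rw [hZeq]
    rw [hsm]
    have hmapeq : (q.roots.map (fun α => 1 / (φ - α))).sum
        = (q.roots.map (fun t => (φ - t)⁻¹)).sum := by
      congr 1
      apply Multiset.map_congr rfl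
      intro t _
      rw [one_div]
    rw [hmapeq]
    exact m3
end

section
/- Let p and q be monic real-rooted polynomials of degree d ≥ 1 in ℝ[x]. Then for every x ∈ ℝ, (1/d!)·Σ_{k=0}^{d} p^{(k)}(x)·q^{(d−k)}(0) = [Pol(p) ∗ Pol(q)](x, x, …, x), where Pol(p), Pol(q) ∈ ℝ[z_1,…,z_d] are the polarizations of p and q and ∗ is the convolution of multiaffine polynomials in ℝ[z_1,…,z_d]. -/
/-- the operator ∂ⁿ/∂z₁⋯∂zₙ -/
noncomputable def diffAll {n : ℕ} (p : MvPolynomial (Fin n) ℝ) : MvPolynomial (Fin n) ℝ :=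
  (List.finRange n).foldr (fun i g => MvPolynomial.pderiv i g) p

/-- the convolution of multiaffine polynomials: the unique polynomial with
`(p∗q)(2z₁,…,2zₙ) = [∂ⁿ/∂z₁⋯∂zₙ (pq)](z₁,…,zₙ)`. -/
noncomputable def conv {n : ℕ} (p q : MvPolynomial (Fin n) ℝ) : MvPolynomial (Fin n) ℝ :=
  MvPolynomial.aeval (fun i => MvPolynomial.C (2⁻¹ : ℝ) * MvPolynomial.X i) (diffAll (p * q))

/-- the polarization of a univariate polynomial of degree at most `d`:
`Pol(p) = Σ_k (coeff k p) · e_k(z₁,…,z_d) / (d choose k)`. -/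
noncomputable def polarize (d : ℕ) (p : Polynomial ℝ) : MvPolynomial (Fin d) ℝ :=
  ∑ k ∈ Finset.range (d + 1),
    (p.coeff k / (d.choose k : ℝ)) • MvPolynomial.esymm (Fin d) ℝ k


section Aux
open MvPolynomial Finset

lemma sum_single_apply_of_not_mem {n : ℕ} (t : List (Fin n)) (i : Fin n) (hi : i ∉ t) :
    ((t.map fun j => Finsupp.single j (1:ℕ)).sum) i = 0 := by
  induction t with
  | nil => simp
  | cons a s ihs =>
    simp only [List.map_cons, List.sum_cons, Finsupp.add_apply]
    rw [Finsupp.single_apply_eq_zero.2 (fun h => absurd h (by rintro rfl; exact hi List.mem_cons_self)),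
      zero_add]
    exact ihs (fun h => hi (List.mem_cons_of_mem _ h))

lemma foldr_pderiv_monomial {n : ℕ} (l : List (Fin n)) (hl : l.Nodup)
    (u : Fin n →₀ ℕ) (c : ℝ) :
    l.foldr (fun i g => MvPolynomial.pderiv i g) (monomial u c) =
      monomial (u - (l.map fun i => Finsupp.single i 1).sum)
        (c * (l.map fun i => (u i : ℝ)).prod) := by
  induction l with
  | nil => simp
  | cons i t ih =>
    obtain ⟨hi, ht⟩ := List.nodup_cons.mp hl
    simp only [List.foldr_cons, ih ht, pderiv_monomial, List.map_cons, List.sum_cons,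
      List.prod_cons]
    have hS := sum_single_apply_of_not_mem t i hi
    congr 1
    · rw [tsub_tsub, add_comm]
    · rw [Finsupp.tsub_apply, hS, Nat.sub_zero]
      ring

lemma diffAll_monomial {n : ℕ} (u : Fin n →₀ ℕ) (c : ℝ) :
    diffAll (monomial u c) =
      monomial (u - ∑ i : Fin n, Finsupp.single i 1) (c * ∏ i : Fin n, (u i : ℝ)) := by
  rw [diffAll, foldr_pderiv_monomial _ (List.nodup_finRange n)]
  rw [Fin.sum_univ_def, Fin.prod_univ_def]

lemma diffAll_add {n : ℕ} (p q : MvPolynomial (Fin n) ℝ) :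
    diffAll (p + q) = diffAll p + diffAll q := by
  unfold diffAll
  induction (List.finRange n) with
  | nil => simp
  | cons a s ih => simp [ih]

lemma diffAll_smul {n : ℕ} (c : ℝ) (p : MvPolynomial (Fin n) ℝ) :
    diffAll (c • p) = c • diffAll p := by
  unfold diffAll
  induction (List.finRange n) with
  | nil => simp
  | cons a s ih => simp [ih]

lemma diffAll_sum {n : ℕ} {α : Type*} (s : Finset α) (f : α → MvPolynomial (Fin n) ℝ) :
    diffAll (∑ a ∈ s, f a) = ∑ a ∈ s, diffAll (f a) := by
  classical
  induction s using Finset.induction with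
  | empty =>
    simp only [Finset.sum_empty]
    unfold diffAll
    induction (List.finRange n) with
    | nil => simp
    | cons a s ih => simp [ih]
  | insert _ _ h ih => rw [Finset.sum_insert h, diffAll_add, ih, Finset.sum_insert h]

lemma ind_apply {d : ℕ} (S : Finset (Fin d)) (j : Fin d) :
    (∑ i ∈ S, Finsupp.single i (1:ℕ)) j = if j ∈ S then 1 else 0 := by
  rw [Finsupp.finset_sum_apply]
  simp [Finsupp.single_apply, Finset.sum_ite_eq' S j]

lemma eval_diffAll_pair {d : ℕ} (t : ℝ) (S T : Finset (Fin d)) :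
    MvPolynomial.eval (fun _ => t)
        (diffAll (monomial ((∑ i ∈ S, Finsupp.single i 1) + ∑ i ∈ T, Finsupp.single i 1) (1:ℝ))) =
      if S ∪ T = univ then (2*t) ^ (S ∩ T).card else 0 := by
  set w : Fin d →₀ ℕ := (∑ i ∈ S, Finsupp.single i 1) + ∑ i ∈ T, Finsupp.single i 1 with hw
  have hwap : ∀ i, w i = (if i ∈ S then 1 else 0) + (if i ∈ T then 1 else 0) := by
    intro i; rw [hw, Finsupp.add_apply, ind_apply, ind_apply]
  rw [diffAll_monomial, eval_monomial, one_mul]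
  by_cases hST : S ∪ T = univ
  · rw [if_pos hST]
    have h1 : ∀ i : Fin d, w i = if i ∈ S ∩ T then 2 else 1 := by
      intro i
      have : i ∈ S ∪ T := hST ▸ mem_univ i
      rw [hwap]
      rcases mem_union.mp this with h | h <;> by_cases h2 : i ∈ S ∩ T <;>
        simp_all [Finset.mem_inter, Finset.mem_union]
    have hcoeff : (∏ i : Fin d, (w i : ℝ)) = 2 ^ (S ∩ T).card := by
      calc (∏ i : Fin d, (w i : ℝ)) = ∏ i : Fin d, (if i ∈ S ∩ T then (2:ℝ) else 1) := by
            refine Finset.prod_congr rfl fun i _ => ?_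
            rw [h1 i]; split <;> norm_num
        _ = ∏ i ∈ univ ∩ (S ∩ T), (2:ℝ) := Finset.prod_ite_mem _ _ _
        _ = 2 ^ (S ∩ T).card := by rw [Finset.univ_inter, Finset.prod_const]
    have hexp : ∀ i, ((w - ∑ r : Fin d, Finsupp.single r 1 : Fin d →₀ ℕ)) i = if i ∈ S ∩ T then 1 else 0 := by
      intro i
      rw [Finsupp.tsub_apply, ind_apply univ, if_pos (mem_univ i), h1 i]
      split <;> rfl
    have heval : ((w - ∑ r : Fin d, Finsupp.single r 1).prod fun _ e => t ^ e)
        = t ^ (S ∩ T).card := by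
      rw [Finsupp.prod_fintype _ _ (fun i => pow_zero t)]
      calc (∏ i : Fin d, t ^ (((w - ∑ r : Fin d, Finsupp.single r 1 : Fin d →₀ ℕ)) i))
          = ∏ i : Fin d, (if i ∈ S ∩ T then t else 1) := by
            refine Finset.prod_congr rfl fun i _ => ?_
            rw [hexp i]; split <;> simp
        _ = ∏ i ∈ univ ∩ (S ∩ T), t := Finset.prod_ite_mem _ _ _
        _ = t ^ (S ∩ T).card := by rw [Finset.univ_inter, Finset.prod_const]
    rw [hcoeff, heval, mul_pow]
  · rw [if_neg hST]
    obtain ⟨i0, hi0⟩ : ∃ i0, i0 ∉ S ∪ T := by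
      by_contra h
      push_neg at h
      exact hST (Finset.eq_univ_iff_forall.mpr h)
    have : (w i0 : ℝ) = 0 := by
      rw [hwap]
      rcases (by simpa [Finset.mem_union] using hi0 : i0 ∉ S ∧ i0 ∉ T) with ⟨h1, h2⟩
      simp [h1, h2]
    have hz : (∏ i : Fin d, (w i : ℝ)) = 0 := Finset.prod_eq_zero (mem_univ i0) this
    rw [hz, zero_mul]


lemma inner_count {d k j : ℕ} (hk : k ≤ d) (hj : j ≤ d) (hd : d ≤ k + j)
    (S : Finset (Fin d)) (hS : S.card = k) :
    (((powersetCard j (univ : Finset (Fin d)))).filter (fun T => S ∪ T = univ)).card =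
      k.choose (k + j - d) := by
  have hcard : (powersetCard (k + j - d) S).card = k.choose (k + j - d) := by
    rw [Finset.card_powersetCard, hS]
  rw [← hcard]
  apply Finset.card_bij' (fun T _ => S ∩ T) (fun U _ => Sᶜ ∪ U)
  · intro T hT
    simp only [Finset.mem_filter, Finset.mem_powersetCard_univ] at hT
    obtain ⟨hTc, hTu⟩ := hT
    rw [Finset.mem_powersetCard]
    refine ⟨Finset.inter_subset_left, ?_⟩
    have h1 := Finset.card_union_add_card_inter S T
    rw [hTu, Finset.card_univ, Fintype.card_fin, hS, hTc] at h1
    omega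
  · intro U hU
    rw [Finset.mem_powersetCard] at hU
    obtain ⟨hUS, hUc⟩ := hU
    simp only [Finset.mem_filter, Finset.mem_powersetCard_univ]
    constructor
    · have hdisj : Disjoint Sᶜ U :=
        Finset.disjoint_left.mpr fun a ha hb => (Finset.mem_compl.mp ha) (hUS hb)
      rw [Finset.card_union_of_disjoint hdisj, Finset.card_compl, Fintype.card_fin, hS, hUc]
      omega
    · ext i
      simp only [Finset.mem_union, Finset.mem_compl, Finset.mem_univ, iff_true]
      tauto
  · intro T hT
    simp only [Finset.mem_filter] at hT
    have hTu := hT.2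
    ext i
    simp only [Finset.mem_union, Finset.mem_compl, Finset.mem_inter]
    have : i ∈ S ∪ T := hTu ▸ mem_univ i
    rw [Finset.mem_union] at this
    tauto
  · intro U hU
    rw [Finset.mem_powersetCard] at hU
    have hUS := hU.1
    ext i
    simp only [Finset.mem_union, Finset.mem_compl, Finset.mem_inter]
    have := @hUS i
    tauto

lemma card_pairs {d k j : ℕ} (hk : k ≤ d) (hj : j ≤ d) (hd : d ≤ k + j) :
    (((powersetCard k (univ : Finset (Fin d))) ×ˢ powersetCard j univ).filter
      (fun ST => ST.1 ∪ ST.2 = univ)).card = d.choose k * k.choose (k + j - d) := by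
  rw [Finset.card_filter, Finset.sum_product]
  have : ∀ S ∈ powersetCard k (univ : Finset (Fin d)),
      (∑ T ∈ powersetCard j univ, if S ∪ T = univ then 1 else 0) = k.choose (k + j - d) := by
    intro S hS
    rw [← Finset.card_filter]
    exact inner_count hk hj hd S (Finset.mem_powersetCard_univ.mp hS)
  rw [Finset.sum_congr rfl this, Finset.sum_const, Finset.card_powersetCard,
    Finset.card_univ, Fintype.card_fin, smul_eq_mul]

lemma eval_conv {n : ℕ} (x : ℝ) (p q : MvPolynomial (Fin n) ℝ) :
    MvPolynomial.eval (fun _ => x) (conv p q) =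
      MvPolynomial.eval (fun _ => x / 2) (diffAll (p * q)) := by
  rw [conv, aeval_def, MvPolynomial.eval₂_comp_left (MvPolynomial.eval fun _ => x)]
  have h1 : (MvPolynomial.eval (fun _ => x : Fin n → ℝ)).comp
      (algebraMap ℝ (MvPolynomial (Fin n) ℝ)) = RingHom.id ℝ := by
    ext r; simp [MvPolynomial.algebraMap_eq]
  have h2 : ((MvPolynomial.eval fun _ => x) ∘ fun i : Fin n => C (2⁻¹:ℝ) * X i) =
      fun _ => x / 2 := by
    funext i; simp; ring
  rw [h1, h2, MvPolynomial.eval]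
  rfl


lemma scalar_id (d k m : ℕ) (hk : k ≤ d) (hm : m + k ≤ d) (a b x : ℝ) :
    (1 / (d.factorial : ℝ)) * ((((m+k).descFactorial k : ℕ) : ℝ) * a * x^m) *
        ((((d-k).factorial : ℕ) : ℝ) * b) =
      a / (d.choose (m+k) : ℝ) * (b / (d.choose (d-k) : ℝ)) *
        ((d.choose (m+k) : ℝ) * ((m+k).choose m : ℝ)) * x^m := by
  have e1 : (((m+k).descFactorial k : ℕ) : ℝ) = (k.factorial : ℝ) * ((m+k).choose m : ℝ) := by
    have : (m+k).choose m = (m+k).choose k := by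
      rw [← Nat.choose_symm (Nat.le_add_left k m)]
      congr 1
      omega
    rw [this]
    exact_mod_cast Nat.descFactorial_eq_factorial_mul_choose (m+k) k
  have e2 : ((d.choose (d-k) : ℕ) : ℝ) = (d.choose k : ℝ) := by
    norm_cast
    exact Nat.choose_symm hk
  have e3 : ((d.choose k : ℕ) : ℝ) * (k.factorial : ℝ) * ((d-k).factorial : ℝ)
      = (d.factorial : ℝ) := by
    exact_mod_cast Nat.choose_mul_factorial_mul_factorial hk
  have h1 : (d.factorial : ℝ) ≠ 0 := Nat.cast_ne_zero.mpr d.factorial_ne_zero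
  have h2 : (d.choose k : ℝ) ≠ 0 := Nat.cast_ne_zero.mpr (Nat.choose_pos hk).ne'
  have h3 : (d.choose (m+k) : ℝ) ≠ 0 := Nat.cast_ne_zero.mpr (Nat.choose_pos hm).ne'
  rw [e1, e2]
  field_simp
  linear_combination (a * b * x^m * ((m+k).choose m : ℝ)) * e3

lemma eval_diffAll_esymm_mul {d : ℕ} (t : ℝ) (k j : ℕ) (hk : k ≤ d) (hj : j ≤ d) :
    MvPolynomial.eval (fun _ => t) (diffAll (esymm (Fin d) ℝ k * esymm (Fin d) ℝ j)) =
      if d ≤ k + j then (d.choose k * k.choose (k+j-d) : ℝ) * (2*t)^(k+j-d) else 0 := by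
  rw [esymm_eq_sum_monomial, esymm_eq_sum_monomial, Finset.sum_mul_sum]
  simp_rw [monomial_mul, mul_one]
  rw [diffAll_sum, map_sum]
  simp_rw [diffAll_sum, map_sum, eval_diffAll_pair]
  have hcardfix : ∀ S ∈ powersetCard k (univ : Finset (Fin d)), ∀ T ∈ powersetCard j (univ : Finset (Fin d)),
      (if S ∪ T = univ then (2*t) ^ (S ∩ T).card else 0) =
      (if S ∪ T = univ then (2*t) ^ (k + j - d) else 0) := by
    intro S hS T hT
    rw [Finset.mem_powersetCard_univ] at hS hT
    by_cases h : S ∪ T = univ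
    · rw [if_pos h, if_pos h]
      have h1 := Finset.card_union_add_card_inter S T
      rw [h, Finset.card_univ, Fintype.card_fin, hS, hT] at h1
      congr 1
      omega
    · rw [if_neg h, if_neg h]
  rw [Finset.sum_congr rfl (fun S hS => Finset.sum_congr rfl (hcardfix S hS))]
  rw [← Finset.sum_product']
  rw [← Finset.sum_filter]
  rw [Finset.sum_const]
  by_cases hdk : d ≤ k + j
  · rw [if_pos hdk, card_pairs hk hj hdk, nsmul_eq_mul]
    push_cast
    ring
  · rw [if_neg hdk]
    have : ((powersetCard k (univ : Finset (Fin d))) ×ˢ powersetCard j univ).filter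
        (fun ST => ST.1 ∪ ST.2 = univ) = ∅ := by
      rw [Finset.filter_eq_empty_iff]
      rintro ⟨S, T⟩ hST
      rw [Finset.mem_product, Finset.mem_powersetCard_univ, Finset.mem_powersetCard_univ] at hST
      intro h
      have h2 := Finset.card_union_le S T
      rw [h, Finset.card_univ, Fintype.card_fin, hST.1, hST.2] at h2
      omega
    rw [this, Finset.card_empty, zero_smul]

end Aux

open MvPolynomial Finset in
/-- For monic real-rooted `p, q` of degree `d ≥ 1`, the finite free additive convolution
`(1/d!)·Σ_{k=0}^{d} p^{(k)}(x)·q^{(d−k)}(0)` equals the diagonal evaluation of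
`Pol(p) ∗ Pol(q)`. -/
theorem free_conv_eq_polarized_conv (d : ℕ) (hd : 1 ≤ d) (p q : Polynomial ℝ)
    (hpm : p.Monic) (hqm : q.Monic) (hpd : p.natDegree = d) (hqd : q.natDegree = d)
    (hp : RealRooted p) (hq : RealRooted q) (x : ℝ) :
    (1 / (Nat.factorial d : ℝ)) *
        ∑ k ∈ Finset.range (d + 1),
          ((fun r => Polynomial.derivative r)^[k] p).eval x *
            ((fun r => Polynomial.derivative r)^[d - k] q).eval 0 =
      MvPolynomial.eval (fun _ => x) (conv (polarize d p) (polarize d q)) := by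
  have hq0 : ∀ k : ℕ, ((fun r => Polynomial.derivative r)^[d-k] q).eval 0
      = (((d-k).factorial : ℕ) : ℝ) * q.coeff (d-k) := by
    intro k
    rw [← Polynomial.coeff_zero_eq_eval_zero, Polynomial.coeff_iterate_derivative, zero_add,
      Nat.descFactorial_self, nsmul_eq_mul]
  have hpk : ∀ k : ℕ, ((fun r => Polynomial.derivative r)^[k] p).eval x
      = ∑ m ∈ range (d - k + 1), (((m+k).descFactorial k : ℕ) : ℝ) * p.coeff (m+k) * x^m := by
    intro k
    have hdeg : ((fun r => Polynomial.derivative r)^[k] p).natDegree < d - k + 1 :=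
      Nat.lt_succ_of_le (by simpa [hpd] using p.natDegree_iterate_derivative k)
    rw [Polynomial.eval_eq_sum_range' hdeg]
    refine Finset.sum_congr rfl fun m _ => ?_
    rw [Polynomial.coeff_iterate_derivative, nsmul_eq_mul]
  -- LHS to a sigma sum
  have hL : (1 / (Nat.factorial d : ℝ)) *
        ∑ k ∈ Finset.range (d + 1),
          ((fun r => Polynomial.derivative r)^[k] p).eval x *
            ((fun r => Polynomial.derivative r)^[d - k] q).eval 0
      = ∑ z ∈ (range (d+1)).sigma (fun k => range (d - k + 1)),
          (1 / (Nat.factorial d : ℝ)) *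
            ((((z.2+z.1).descFactorial z.1 : ℕ) : ℝ) * p.coeff (z.2+z.1) * x^z.2 *
              ((((d-z.1).factorial : ℕ) : ℝ) * q.coeff (d-z.1))) := by
    rw [Finset.mul_sum]
    rw [Finset.sum_congr rfl (fun k _ => by rw [hpk k, hq0 k, Finset.sum_mul, Finset.mul_sum] :
      ∀ k ∈ range (d+1), 1 / (Nat.factorial d : ℝ) *
          (Polynomial.eval x ((fun r => Polynomial.derivative r)^[k] p) *
            Polynomial.eval 0 ((fun r => Polynomial.derivative r)^[d - k] q)) =
        ∑ m ∈ range (d - k + 1), 1 / (Nat.factorial d : ℝ) *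
          ((((m+k).descFactorial k : ℕ) : ℝ) * p.coeff (m+k) * x^m *
            ((((d-k).factorial : ℕ) : ℝ) * q.coeff (d-k))))]
    exact Finset.sum_sigma' _ _ _
  rw [hL, eval_conv, polarize, polarize, Finset.sum_mul_sum]
  simp_rw [smul_mul_smul_comm]
  rw [diffAll_sum, map_sum]
  simp_rw [diffAll_sum, map_sum, diffAll_smul, MvPolynomial.smul_eval]
  have hRW : ∀ k ∈ range (d+1), ∀ j ∈ range (d+1),
      p.coeff k / (d.choose k : ℝ) * (q.coeff j / (d.choose j : ℝ)) *
        MvPolynomial.eval (fun _ => x/2) (diffAll (esymm (Fin d) ℝ k * esymm (Fin d) ℝ j))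
      = if d ≤ k + j then
          p.coeff k / (d.choose k : ℝ) * (q.coeff j / (d.choose j : ℝ)) *
            ((d.choose k * k.choose (k+j-d) : ℝ) * (2*(x/2))^(k+j-d)) else 0 := by
    intro k hk j hj
    rw [eval_diffAll_esymm_mul (x/2) k j (by simpa using Nat.lt_succ_iff.mp (mem_range.mp hk))
      (by simpa using Nat.lt_succ_iff.mp (mem_range.mp hj))]
    split
    · rfl
    · rw [mul_zero]
  rw [Finset.sum_congr rfl (fun k hk => Finset.sum_congr rfl (fun j hj => hRW k hk j hj))]
  rw [← Finset.sum_product', ← Finset.sum_filter]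
  refine Finset.sum_nbij' (fun z => (z.2 + z.1, d - z.1)) (fun y => ⟨d - y.2, y.1 + y.2 - d⟩)
    ?_ ?_ ?_ ?_ ?_
  · rintro ⟨k, m⟩ hz
    rw [Finset.mem_sigma, mem_range, mem_range] at hz
    simp only [Finset.mem_filter, Finset.mem_product, mem_range]
    dsimp only at hz ⊢
    omega
  · rintro ⟨K, J⟩ hy
    rw [Finset.mem_filter, Finset.mem_product, mem_range, mem_range] at hy
    rw [Finset.mem_sigma, mem_range, mem_range]
    obtain ⟨⟨h1, h2⟩, h3⟩ := hy
    dsimp only at h1 h2 h3 ⊢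
    omega
  · rintro ⟨k, m⟩ hz
    rw [Finset.mem_sigma, mem_range, mem_range] at hz
    dsimp only at hz ⊢
    have e1 : d - (d - k) = k := by omega
    have e2 : m + k + (d - k) - d = m := by omega
    simp only [e1, e2]
  · rintro ⟨K, J⟩ hy
    rw [Finset.mem_filter, Finset.mem_product, mem_range, mem_range] at hy
    obtain ⟨⟨h1, h2⟩, h3⟩ := hy
    dsimp only at h1 h2 h3 ⊢
    have e1 : d - (d - J) = J := by omega
    have e2 : K + J - d + (d - J) = K := by omega
    rw [e1, e2]
  · rintro ⟨k, m⟩ hz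
    rw [Finset.mem_sigma, mem_range, mem_range] at hz
    obtain ⟨h1, h2⟩ := hz
    dsimp only at h1 h2 ⊢
    have e1 : m + k + (d - k) - d = m := by omega
    rw [e1, show (2:ℝ)*(x/2) = x from by ring]
    have h := scalar_id d k m (by omega) (by omega) (p.coeff (m+k)) (q.coeff (d-k)) x
    linear_combination h
end

section
/- Let p and q be multiaffine real stable polynomials in ℝ[z_1,…,z_n] and let r = q(∂)p. Then, as polynomials in the 2n variables z_1,…,z_n,y_1,…,y_n, one has r(z_1+y_1,…,z_n+y_n) = [∏_{i=1}^{n} (∂/∂z_i + ∂/∂y_i)] ( p(z_1,…,z_n)·q̄(y_1,…,y_n) ), where q̄ is the flip of q. -/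
/-- A multivariate real polynomial is real stable if it does not vanish when all
variables take values in the open upper half plane. -/
def RealStable {σ : Type*} (p : MvPolynomial σ ℝ) : Prop :=
  ∀ z : σ → ℂ, (∀ i, 0 < (z i).im) → (MvPolynomial.aeval z) p ≠ 0

/-- degree at most 1 in each variable -/
def MultiAffine {σ : Type*} (p : MvPolynomial σ ℝ) : Prop :=
  ∀ m ∈ p.support, ∀ i, m i ≤ 1

/-- applying the differential-operator monomial `∂^m` to `p` -/
noncomputable def applyMon {σ : Type*} [Fintype σ] (m : σ →₀ ℕ) (p : MvPolynomial σ ℝ) :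
    MvPolynomial σ ℝ :=
  (Finset.univ.toList (α := σ)).foldr
    (fun i g => (fun h => MvPolynomial.pderiv i h)^[m i] g) p

/-- `q(∂)p`: substitute `∂/∂zᵢ` for `zᵢ` in `q` and apply the resulting operator to `p`. -/
noncomputable def diffOp {σ : Type*} [Fintype σ] (q p : MvPolynomial σ ℝ) :
    MvPolynomial σ ℝ :=
  ∑ m ∈ q.support, MvPolynomial.coeff m q • applyMon m p

/-- the flip of a multiaffine polynomial: `z^S ↦ z^{[n]∖S}` -/
noncomputable def flipPoly {σ : Type*} [Finite σ] (q : MvPolynomial σ ℝ) :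
    MvPolynomial σ ℝ :=
  ∑ m ∈ q.support, MvPolynomial.monomial
    (Finsupp.equivFunOnFinite.symm fun i => 1 - m i) (MvPolynomial.coeff m q)

namespace DiffOpAux

open MvPolynomial

variable {n : ℕ}

private lemma nat_cases {k : ℕ} (h : k ≤ 1) : k = 0 ∨ k = 1 :=
  Nat.le_one_iff_eq_zero_or_eq_one.mp h

/-! ### linearity of `applyMon` -/

lemma it_zero (i : Fin n) (k : ℕ) :
    (fun h => MvPolynomial.pderiv i h)^[k] (0 : MvPolynomial (Fin n) ℝ) = 0 := by
  induction k with
  | zero => rfl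
  | succ k ih => rw [Function.iterate_succ_apply]; simpa using ih

lemma it_add (i : Fin n) (k : ℕ) (x y : MvPolynomial (Fin n) ℝ) :
    (fun h => MvPolynomial.pderiv i h)^[k] (x + y)
      = (fun h => MvPolynomial.pderiv i h)^[k] x + (fun h => MvPolynomial.pderiv i h)^[k] y := by
  induction k generalizing x y with
  | zero => rfl
  | succ k ih =>
      rw [Function.iterate_succ_apply, Function.iterate_succ_apply,
        Function.iterate_succ_apply]
      simpa [map_add] using ih (MvPolynomial.pderiv i x) (MvPolynomial.pderiv i y)

lemma foldr_it_zero (m : Fin n →₀ ℕ) (L : List (Fin n)) :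
    L.foldr (fun i g => (fun h => MvPolynomial.pderiv i h)^[m i] g)
      (0 : MvPolynomial (Fin n) ℝ) = 0 := by
  induction L with
  | nil => rfl
  | cons i L ih => simp [List.foldr_cons, ih, it_zero]

lemma foldr_it_add (m : Fin n →₀ ℕ) (L : List (Fin n)) (x y : MvPolynomial (Fin n) ℝ) :
    L.foldr (fun i g => (fun h => MvPolynomial.pderiv i h)^[m i] g) (x + y)
      = L.foldr (fun i g => (fun h => MvPolynomial.pderiv i h)^[m i] g) x
        + L.foldr (fun i g => (fun h => MvPolynomial.pderiv i h)^[m i] g) y := by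
  induction L generalizing x y with
  | nil => rfl
  | cons i L ih => simp [List.foldr_cons, ih, it_add]

lemma applyMon_zero (m : Fin n →₀ ℕ) : applyMon m (0 : MvPolynomial (Fin n) ℝ) = 0 :=
  foldr_it_zero m _

lemma applyMon_add (m : Fin n →₀ ℕ) (x y : MvPolynomial (Fin n) ℝ) :
    applyMon m (x + y) = applyMon m x + applyMon m y :=
  foldr_it_add m _ x y

lemma applyMon_sum (m : Fin n →₀ ℕ) {ι : Type*} (s : Finset ι) (f : ι → MvPolynomial (Fin n) ℝ) :
    applyMon m (∑ x ∈ s, f x) = ∑ x ∈ s, applyMon m (f x) := by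
  classical
  induction s using Finset.induction_on with
  | empty => simpa using applyMon_zero m
  | @insert a s hns ih => rw [Finset.sum_insert hns, Finset.sum_insert hns, applyMon_add, ih]

/-! ### linearity of the foldr of `∂_{zᵢ} + ∂_{yᵢ}` -/

lemma foldrD_add (L : List (Fin n)) (x y : MvPolynomial (Fin n ⊕ Fin n) ℝ) :
    L.foldr (fun i g => MvPolynomial.pderiv (Sum.inl i) g + MvPolynomial.pderiv (Sum.inr i) g)
        (x + y)
      = L.foldr (fun i g => MvPolynomial.pderiv (Sum.inl i) g + MvPolynomial.pderiv (Sum.inr i) g) x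
        + L.foldr (fun i g => MvPolynomial.pderiv (Sum.inl i) g
            + MvPolynomial.pderiv (Sum.inr i) g) y := by
  induction L generalizing x y with
  | nil => rfl
  | cons i L ih =>
      simp only [List.foldr_cons, ih]
      rw [map_add, map_add]
      abel

lemma foldrD_zero (L : List (Fin n)) :
    L.foldr (fun i g => MvPolynomial.pderiv (Sum.inl i) g + MvPolynomial.pderiv (Sum.inr i) g)
      (0 : MvPolynomial (Fin n ⊕ Fin n) ℝ) = 0 := by
  induction L with
  | nil => rfl
  | cons i L ih => simp [List.foldr_cons, ih]

lemma foldrD_smul (L : List (Fin n)) (c : ℝ) (x : MvPolynomial (Fin n ⊕ Fin n) ℝ) :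
    L.foldr (fun i g => MvPolynomial.pderiv (Sum.inl i) g + MvPolynomial.pderiv (Sum.inr i) g)
        (c • x)
      = c • L.foldr (fun i g => MvPolynomial.pderiv (Sum.inl i) g
          + MvPolynomial.pderiv (Sum.inr i) g) x := by
  induction L generalizing x with
  | nil => rfl
  | cons i L ih =>
      simp only [List.foldr_cons, ih]
      rw [Derivation.map_smul, Derivation.map_smul, smul_add]

lemma foldrD_sum (L : List (Fin n)) {ι : Type*} (s : Finset ι)
    (f : ι → MvPolynomial (Fin n ⊕ Fin n) ℝ) :
    L.foldr (fun i g => MvPolynomial.pderiv (Sum.inl i) g + MvPolynomial.pderiv (Sum.inr i) g)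
        (∑ x ∈ s, f x)
      = ∑ x ∈ s, L.foldr (fun i g => MvPolynomial.pderiv (Sum.inl i) g
          + MvPolynomial.pderiv (Sum.inr i) g) (f x) := by
  classical
  induction s using Finset.induction_on with
  | empty => simpa using foldrD_zero L
  | @insert a s hns ih => rw [Finset.sum_insert hns, Finset.sum_insert hns, foldrD_add, ih]

/-! ### per-coordinate factors -/

/-- per-coordinate factor `zⱼ^(α j) yⱼ^(β j)` -/
noncomputable def Fm (α β : Fin n → ℕ) (j : Fin n) : MvPolynomial (Fin n ⊕ Fin n) ℝ :=
  X (Sum.inl j) ^ α j * X (Sum.inr j) ^ β j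

/-- value of `(∂_{zⱼ} + ∂_{yⱼ})` on `Fm α β j` when `α j, β j ≤ 1` -/
noncomputable def Dv (α β : Fin n → ℕ) (j : Fin n) : MvPolynomial (Fin n ⊕ Fin n) ℝ :=
  C ((α j : ℝ)) * X (Sum.inr j) ^ β j + C ((β j : ℝ)) * X (Sum.inl j) ^ α j

lemma Dstep_Fm_self (α β : Fin n → ℕ) (j : Fin n) (hα : α j ≤ 1) (hβ : β j ≤ 1) :
    MvPolynomial.pderiv (Sum.inl j) (Fm α β j) + MvPolynomial.pderiv (Sum.inr j) (Fm α β j)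
      = Dv α β j := by
  rcases nat_cases hα with h1 | h1 <;> rcases nat_cases hβ with h2 | h2 <;>
    simp [Fm, Dv, h1, h2, pderiv_mul, pderiv_X_of_ne, add_comm]

lemma pderiv_Fm_of_ne (α β : Fin n → ℕ) {j : Fin n} {k : Fin n ⊕ Fin n}
    (h1 : k ≠ Sum.inl j) (h2 : k ≠ Sum.inr j) :
    MvPolynomial.pderiv k (Fm α β j) = 0 := by
  simp [Fm, pderiv_mul, pderiv_pow, pderiv_X_of_ne h1.symm, pderiv_X_of_ne h2.symm]

lemma pderiv_Dv_of_ne (α β : Fin n → ℕ) {j : Fin n} {k : Fin n ⊕ Fin n}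
    (h1 : k ≠ Sum.inl j) (h2 : k ≠ Sum.inr j) :
    MvPolynomial.pderiv k (Dv α β j) = 0 := by
  simp [Dv, pderiv_C_mul, pderiv_pow, pderiv_X_of_ne h1.symm, pderiv_X_of_ne h2.symm]

lemma pderiv_prod_eq_zero {ι : Type*} (k : Fin n ⊕ Fin n) (s : Finset ι)
    (f : ι → MvPolynomial (Fin n ⊕ Fin n) ℝ) (h : ∀ j ∈ s, MvPolynomial.pderiv k (f j) = 0) :
    MvPolynomial.pderiv k (∏ j ∈ s, f j) = 0 := by
  classical
  induction s using Finset.induction_on with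
  | empty => simp
  | @insert a s hns ih =>
      rw [Finset.prod_insert hns, pderiv_mul, h a (Finset.mem_insert_self a s),
        ih fun j hj => h j (Finset.mem_insert_of_mem hj)]
      simp

lemma foldrD_prod (α β : Fin n → ℕ) (hα : ∀ i, α i ≤ 1) (hβ : ∀ i, β i ≤ 1)
    (L : List (Fin n)) (hL : L.Nodup) :
    L.foldr (fun i g => MvPolynomial.pderiv (Sum.inl i) g + MvPolynomial.pderiv (Sum.inr i) g)
        (∏ j, Fm α β j)
      = (∏ j ∈ L.toFinset, Dv α β j) * ∏ j ∈ L.toFinsetᶜ, Fm α β j := by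
  classical
  induction L with
  | nil => simp
  | cons i L ih =>
      obtain ⟨hiL, hLn⟩ := List.nodup_cons.mp hL
      rw [List.foldr_cons, ih hLn]
      set A := ∏ j ∈ L.toFinset, Dv α β j with hA
      have hiC : i ∈ L.toFinsetᶜ := by
        simp [Finset.mem_compl, List.mem_toFinset, hiL]
      rw [← Finset.mul_prod_erase _ _ hiC]
      set Cc := ∏ j ∈ L.toFinsetᶜ.erase i, Fm α β j with hCc
      have hdA : ∀ k : Fin n ⊕ Fin n, (k = Sum.inl i ∨ k = Sum.inr i) →
          MvPolynomial.pderiv k A = 0 := by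
        intro k hk
        refine pderiv_prod_eq_zero k _ _ fun j hj => ?_
        have hji : j ≠ i := by
          rintro rfl; exact hiL (List.mem_toFinset.mp hj)
        rcases hk with rfl | rfl
        · exact pderiv_Dv_of_ne α β (by simp [Ne.symm hji]) (by simp)
        · exact pderiv_Dv_of_ne α β (by simp) (by simp [Ne.symm hji])
      have hdC : ∀ k : Fin n ⊕ Fin n, (k = Sum.inl i ∨ k = Sum.inr i) →
          MvPolynomial.pderiv k Cc = 0 := by
        intro k hk
        refine pderiv_prod_eq_zero k _ _ fun j hj => ?_
        have hji : j ≠ i := (Finset.mem_erase.mp hj).1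
        rcases hk with rfl | rfl
        · exact pderiv_Fm_of_ne α β (by simp [Ne.symm hji]) (by simp)
        · exact pderiv_Fm_of_ne α β (by simp) (by simp [Ne.symm hji])
      have key : MvPolynomial.pderiv (Sum.inl i) (A * (Fm α β i * Cc))
            + MvPolynomial.pderiv (Sum.inr i) (A * (Fm α β i * Cc))
          = A * (Dv α β i * Cc) := by
        have e1 : MvPolynomial.pderiv (Sum.inl i) (A * (Fm α β i * Cc))
            = A * (MvPolynomial.pderiv (Sum.inl i) (Fm α β i) * Cc) := by
          rw [pderiv_mul, hdA _ (Or.inl rfl), pderiv_mul, hdC _ (Or.inl rfl)]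
          ring
        have e2 : MvPolynomial.pderiv (Sum.inr i) (A * (Fm α β i * Cc))
            = A * (MvPolynomial.pderiv (Sum.inr i) (Fm α β i) * Cc) := by
          rw [pderiv_mul, hdA _ (Or.inr rfl), pderiv_mul, hdC _ (Or.inr rfl)]
          ring
        rw [e1, e2, ← Dstep_Fm_self α β i (hα i) (hβ i)]
        ring
      rw [key]
      have ht : (i :: L).toFinset = insert i L.toFinset := by simp
      rw [ht, Finset.prod_insert (by simp [List.mem_toFinset, hiL]),
        Finset.compl_insert, ← hCc]
      ring

/-! ### `applyMon` on a multiaffine monomial -/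

lemma foldr_applyMon_monomial (m m' : Fin n →₀ ℕ) (hm : ∀ i, m i ≤ 1) (hm' : ∀ i, m' i ≤ 1)
    (c : ℝ) (L : List (Fin n)) (hL : L.Nodup) :
    L.foldr (fun i g => (fun h => MvPolynomial.pderiv i h)^[m i] g)
        (MvPolynomial.monomial m' c)
      = if ∀ i ∈ L, m i ≤ m' i then
          MvPolynomial.monomial (m' - ∑ i ∈ L.toFinset, Finsupp.single i (m i)) c
        else 0 := by
  classical
  induction L with
  | nil => simp
  | cons i L ih =>
      obtain ⟨hiL, hLn⟩ := List.nodup_cons.mp hL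
      rw [List.foldr_cons, ih hLn]
      have ht : (i :: L).toFinset = insert i L.toFinset := by simp
      have hins : i ∉ L.toFinset := by simp [List.mem_toFinset, hiL]
      rcases nat_cases (hm i) with hmi | hmi
      · have hcond : (∀ j ∈ i :: L, m j ≤ m' j) ↔ (∀ j ∈ L, m j ≤ m' j) := by
          constructor
          · intro h j hj; exact h j (List.mem_cons_of_mem i hj)
          · intro h j hj
            rcases List.mem_cons.mp hj with rfl | hj
            · simp [hmi]
            · exact h j hj
        have hsum : ∑ j ∈ (i :: L).toFinset, Finsupp.single j (m j)
            = ∑ j ∈ L.toFinset, Finsupp.single j (m j) := by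
          rw [ht, Finset.sum_insert hins, hmi, Finsupp.single_zero, zero_add]
        rw [hmi, Function.iterate_zero, id_eq, hsum]
        exact if_congr hcond.symm rfl rfl
      · rw [hmi, Function.iterate_one]
        by_cases hc : ∀ j ∈ L, m j ≤ m' j
        · rw [if_pos hc, pderiv_monomial]
          have hSi : (∑ j ∈ L.toFinset, Finsupp.single j (m j)) i = 0 := by
            rw [Finsupp.finset_sum_apply]
            refine Finset.sum_eq_zero fun j hj => ?_
            exact Finsupp.single_eq_of_ne' fun h => hins (h ▸ hj)
          have hti : (m' - ∑ j ∈ L.toFinset, Finsupp.single j (m j)) i = m' i := by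
            rw [Finsupp.tsub_apply, hSi, Nat.sub_zero]
          rcases nat_cases (hm' i) with hpi | hpi
          · rw [hti, hpi]
            have hcond : ¬ ∀ j ∈ i :: L, m j ≤ m' j := by
              intro h
              have := h i List.mem_cons_self
              omega
            rw [if_neg hcond]
            simp
          · rw [hti, hpi]
            have hcond : ∀ j ∈ i :: L, m j ≤ m' j := by
              intro j hj
              rcases List.mem_cons.mp hj with rfl | hj
              · omega
              · exact hc j hj
            rw [if_pos hcond]
            have hexp : m' - (∑ j ∈ L.toFinset, Finsupp.single j (m j)) - Finsupp.single i 1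
                = m' - ∑ j ∈ (i :: L).toFinset, Finsupp.single j (m j) := by
              rw [ht, Finset.sum_insert hins, hmi, tsub_tsub, add_comm]
            rw [hexp]
            norm_num
        · rw [if_neg hc, if_neg (fun h => hc fun j hj => h j (List.mem_cons_of_mem i hj))]
          simp

lemma applyMon_monomial (m m' : Fin n →₀ ℕ) (hm : ∀ i, m i ≤ 1) (hm' : ∀ i, m' i ≤ 1) (c : ℝ) :
    applyMon m (MvPolynomial.monomial m' c)
      = if m ≤ m' then MvPolynomial.monomial (m' - m) c else 0 := by
  classical
  rw [applyMon, foldr_applyMon_monomial m m' hm hm' c _ (Finset.nodup_toList _)]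
  have h1 : (∀ i ∈ Finset.univ.toList (α := Fin n), m i ≤ m' i) ↔ m ≤ m' := by
    rw [Finsupp.le_def]
    constructor
    · intro h i; exact h i (by simp [Finset.mem_toList])
    · intro h i _; exact h i
  have h2 : ∑ i ∈ (Finset.univ.toList (α := Fin n)).toFinset, Finsupp.single i (m i) = m := by
    rw [Finset.toList_toFinset, Finsupp.univ_sum_single]
  rw [h2]
  exact if_congr h1 rfl rfl

/-! ### the key monomial identity -/

lemma key (m m' : Fin n →₀ ℕ) (hm : ∀ i, m i ≤ 1) (hm' : ∀ i, m' i ≤ 1) (a c : ℝ) :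
    a • (MvPolynomial.aeval
        (fun i : Fin n =>
          (MvPolynomial.X (Sum.inl i) + MvPolynomial.X (Sum.inr i) :
            MvPolynomial (Fin n ⊕ Fin n) ℝ))
        (applyMon m (MvPolynomial.monomial m' c)))
    = (List.finRange n).foldr
        (fun i g => MvPolynomial.pderiv (Sum.inl i) g + MvPolynomial.pderiv (Sum.inr i) g)
        (MvPolynomial.rename Sum.inl (MvPolynomial.monomial m' c)
          * MvPolynomial.rename Sum.inr
              (MvPolynomial.monomial (Finsupp.equivFunOnFinite.symm fun i => 1 - m i) a)) := by
  classical
  set α : Fin n → ℕ := fun j => m' j with hαdef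
  set β : Fin n → ℕ := fun j => 1 - m j with hβdef
  have hα : ∀ i, α i ≤ 1 := fun i => hm' i
  have hβ : ∀ i, β i ≤ 1 := fun i => Nat.sub_le 1 (m i)
  -- RHS
  have hw : ∀ i, (Finsupp.equivFunOnFinite.symm fun i => 1 - m i) i = β i := fun i => rfl
  have hRmon : MvPolynomial.rename Sum.inl (MvPolynomial.monomial m' c)
      * MvPolynomial.rename Sum.inr
          (MvPolynomial.monomial (Finsupp.equivFunOnFinite.symm fun i => 1 - m i) a)
      = (c * a) • ∏ j, Fm α β j := by
    rw [rename_monomial, rename_monomial, monomial_mul]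
    set e := Finsupp.mapDomain Sum.inl m'
      + Finsupp.mapDomain Sum.inr (Finsupp.equivFunOnFinite.symm fun i => 1 - m i) with he
    have hel : ∀ i, e (Sum.inl i) = α i := by
      intro i
      rw [he, Finsupp.add_apply,
        Finsupp.mapDomain_apply Sum.inl_injective,
        Finsupp.mapDomain_notin_range _ _ (by simp)]
      rfl
    have her : ∀ i, e (Sum.inr i) = β i := by
      intro i
      rw [he, Finsupp.add_apply,
        Finsupp.mapDomain_apply Sum.inr_injective,
        Finsupp.mapDomain_notin_range _ _ (by simp)]
      simp [hw]
    rw [monomial_eq, Finsupp.prod_fintype _ _ (fun i => pow_zero _)]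
    rw [Fintype.prod_sum_type]
    simp only [hel, her]
    rw [← Finset.prod_mul_distrib, MvPolynomial.smul_eq_C_mul]
    rfl
  rw [hRmon, foldrD_smul,
    foldrD_prod α β hα hβ _ (List.nodup_finRange n)]
  rw [List.toFinset_finRange]
  simp only [Finset.compl_univ, Finset.prod_empty, mul_one]
  -- LHS
  rw [applyMon_monomial m m' hm hm' c]
  by_cases hle : m ≤ m'
  · rw [if_pos hle, aeval_monomial, Finsupp.prod_fintype _ _ (fun i => pow_zero _)]
    have hprod : (∏ i, ((MvPolynomial.X (Sum.inl i) + MvPolynomial.X (Sum.inr i) :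
          MvPolynomial (Fin n ⊕ Fin n) ℝ)) ^ (m' - m) i)
        = ∏ j, Dv α β j := by
      refine Finset.prod_congr rfl fun j _ => ?_
      have hj := Finsupp.le_def.mp hle j
      have hsub : (m' - m) j = m' j - m j := Finsupp.tsub_apply m' m j
      rcases nat_cases (hm j) with h1 | h1 <;> rcases nat_cases (hm' j) with h2 | h2
      · rw [hsub, h1, h2]
        simp [Dv, hαdef, hβdef, h1, h2]
      · rw [hsub, h1, h2]
        simp [Dv, hαdef, hβdef, h1, h2, add_comm]
      · omega
      · rw [hsub, h1, h2]
        simp [Dv, hαdef, hβdef, h1, h2]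
    rw [hprod, algebraMap_eq, ← MvPolynomial.smul_eq_C_mul, smul_smul, mul_comm a c]
  · rw [if_neg hle, map_zero, smul_zero]
    obtain ⟨j, hj⟩ : ∃ j, ¬ m j ≤ m' j := by
      by_contra h
      push_neg at h
      exact hle (Finsupp.le_def.mpr h)
    have h1 : m j = 1 := by have := hm j; omega
    have h2 : m' j = 0 := by omega
    have hDj : Dv α β j = 0 := by
      simp [Dv, hαdef, hβdef, h1, h2]
    rw [Finset.prod_eq_zero (Finset.mem_univ j) hDj, smul_zero]

end DiffOpAux

open DiffOpAux in
/-- For multiaffine real stable `p, q` and `r = q(∂)p`, in the `2n` variables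
`z₁,…,zₙ,y₁,…,yₙ` (the `z`'s indexed by `Sum.inl`, the `y`'s by `Sum.inr`) one has
`r(z₁+y₁,…,zₙ+yₙ) = [∏ᵢ (∂/∂zᵢ + ∂/∂yᵢ)] (p(z)·q̄(y))` where `q̄` is the flip of `q`. -/
theorem diffOp_sum_vars_eq {n : ℕ} (p q : MvPolynomial (Fin n) ℝ)
    (hps : RealStable p) (hqs : RealStable q)
    (hpm : MultiAffine p) (hqm : MultiAffine q) :
    MvPolynomial.aeval
        (fun i : Fin n =>
          (MvPolynomial.X (Sum.inl i) + MvPolynomial.X (Sum.inr i) :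
            MvPolynomial (Fin n ⊕ Fin n) ℝ))
        (diffOp q p) =
      (List.finRange n).foldr
        (fun i g => MvPolynomial.pderiv (Sum.inl i) g + MvPolynomial.pderiv (Sum.inr i) g)
        (MvPolynomial.rename Sum.inl p * MvPolynomial.rename Sum.inr (flipPoly q)) := by
  classical
  rw [diffOp, map_sum, flipPoly, map_sum, Finset.mul_sum, foldrD_sum]
  refine Finset.sum_congr rfl fun m hmq => ?_
  rw [map_smul]
  conv_lhs => rw [← MvPolynomial.support_sum_monomial_coeff p]
  conv_rhs => rw [← MvPolynomial.support_sum_monomial_coeff p]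
  rw [applyMon_sum, map_sum, Finset.smul_sum, map_sum, Finset.sum_mul, foldrD_sum]
  refine Finset.sum_congr rfl fun m' hm'p => ?_
  exact key m m' (hqm m hmq) (hpm m' hm'p) (MvPolynomial.coeff m q) (MvPolynomial.coeff m' p)
end

section
/- Let p and q be multiaffine real stable polynomials in ℝ[z_1,…,z_n]. Then the convolution p∗q is multiaffine, and it is either identically zero or real stable. -/
section
open Complex Polynomial
lemma RL2 (u : ℂ → ℂ) (hu : ContinuousAt u 0) (h0 : u 0 ≠ 0) (k : ℕ) (hk : 1 ≤ k)
    (ε : ℝ) (hε : 0 < ε) : ∃ s : ℂ, s ≠ 0 ∧ ‖s‖ < ε ∧ 0 < (u s * s ^ k).im := by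
  obtain ⟨ζ, hζ⟩ := IsAlgClosed.exists_pow_nat_eq (Complex.I / u 0) hk
  have hζ0 : ζ ≠ 0 := by
    intro h; rw [h, zero_pow (by omega)] at hζ
    exact (div_ne_zero Complex.I_ne_zero h0) hζ.symm
  set g : ℝ → ℝ := fun t => (u ((t : ℂ) * ζ) * ζ ^ k).im with hgdef
  have hinner : ContinuousAt (fun t : ℝ => (t : ℂ) * ζ) 0 :=
    (Complex.continuous_ofReal.mul continuous_const).continuousAt
  have h1 : ContinuousAt (fun t : ℝ => u ((t : ℂ) * ζ)) 0 := by
    refine ContinuousAt.comp ?_ hinner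
    simpa using hu
  have hg : ContinuousAt g 0 :=
    Complex.continuous_im.continuousAt.comp (h1.mul continuousAt_const)
  have hg0 : 0 < g 0 := by
    have h2 : u 0 * (I / u 0) = I := by field_simp
    rw [hgdef]
    simp only [Complex.ofReal_zero, zero_mul, hζ, h2]
    norm_num
  have hev : ∀ᶠ t : ℝ in nhds 0, 0 < g t := hg.eventually (eventually_gt_nhds hg0)
  obtain ⟨δ, hδ0, hδ⟩ := Metric.eventually_nhds_iff.mp hev
  set t : ℝ := min (δ / 2) (ε / (2 * (‖ζ‖ + 1))) with htdef
  have habsζ : 0 < ‖ζ‖ + 1 := by positivity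
  have ht0 : 0 < t := by positivity
  have htδ : t < δ := lt_of_le_of_lt (min_le_left _ _) (by linarith)
  refine ⟨(t : ℂ) * ζ, mul_ne_zero (by exact_mod_cast ht0.ne') hζ0, ?_, ?_⟩
  · rw [norm_mul, Complex.norm_real, Real.norm_eq_abs, abs_of_pos ht0]
    have h2 : t ≤ ε / (2 * (‖ζ‖ + 1)) := min_le_right _ _
    calc t * ‖ζ‖ ≤ t * (‖ζ‖ + 1) := by nlinarith [norm_nonneg ζ]
      _ ≤ ε / (2 * (‖ζ‖ + 1)) * (‖ζ‖ + 1) := by nlinarith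
      _ < ε := by rw [div_mul_eq_mul_div]; rw [div_lt_iff₀ (by positivity)]; nlinarith
  · have : ((t : ℂ) * ζ) ^ k = (t : ℂ) ^ k * ζ ^ k := by ring
    rw [this, show u ((t:ℂ)*ζ) * ((t:ℂ)^k * ζ^k) = (((t:ℝ)^k : ℝ) : ℂ) * (u ((t:ℂ)*ζ) * ζ^k) by push_cast; ring]
    rw [Complex.im_ofReal_mul]
    have hgt : 0 < g t := hδ (by simpa [abs_of_pos ht0] using htδ)
    exact mul_pos (pow_pos ht0 k) hgt

end

section
open Complex

/-- roots of the "reversed" quadratic lie in the closed upper half plane -/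
lemma QUAD (a b c : ℂ) (ha : a ≠ 0)
    (H : ∀ w : ℂ, 0 < w.im → a + b * w + c * w ^ 2 ≠ 0) :
    (b / a).im ≤ 0 ∧ (b = 0 → (c / a).im = 0) := by
  obtain ⟨d, hd⟩ := IsAlgClosed.exists_pow_nat_eq (b ^ 2 - 4 * a * c) (n := 2) (by norm_num)
  set v₁ : ℂ := (-b + d) / (2 * a) with hv₁
  set v₂ : ℂ := (-b - d) / (2 * a) with hv₂
  have hsum : v₁ + v₂ = -(b / a) := by rw [hv₁, hv₂]; field_simp; ring
  have hnum : (-b + d) * (-b - d) = 4 * a * c := by linear_combination -hd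
  have hprod : v₁ * v₂ = c / a := by
    rw [hv₁, hv₂, div_mul_div_comm, hnum]; field_simp; ring
  have key : ∀ v : ℂ, c + b * v + a * v ^ 2 = a * (v - v₁) * (v - v₂) := by
    intro v
    have h1 : a * (v - v₁) * (v - v₂) = a * (v ^ 2 - (v₁ + v₂) * v + v₁ * v₂) := by ring
    rw [h1, hsum, hprod]
    field_simp; ring
  have hroot : ∀ v : ℂ, (c + b * v + a * v ^ 2 = 0) → 0 ≤ v.im := by
    intro v hv
    by_contra hneg
    push_neg at hneg
    have hv0 : v ≠ 0 := fun h => by simp [h] at hneg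
    have hw : 0 < (v⁻¹).im := by
      rw [Complex.inv_im]
      have hp := Complex.normSq_pos.mpr hv0
      apply div_pos (by linarith) hp
    refine H v⁻¹ hw ?_
    have : a + b * v⁻¹ + c * (v⁻¹) ^ 2 = (v⁻¹) ^ 2 * (c + b * v + a * v ^ 2) := by
      field_simp; ring
    rw [this, hv, mul_zero]
  have h1 : 0 ≤ v₁.im := hroot v₁ (by rw [key]; simp)
  have h2 : 0 ≤ v₂.im := hroot v₂ (by rw [key]; simp)
  constructor
  · have : (b / a).im = -(v₁.im + v₂.im) := by
      have := congrArg Complex.im hsum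
      simp at this; linarith
    linarith
  · intro hb
    have hsum0 : v₁ + v₂ = 0 := by rw [hsum, hb]; simp
    have hv2 : v₂ = -v₁ := by linear_combination hsum0
    have him : v₁.im = 0 := by
      have := congrArg Complex.im hv2; simp at this; linarith
    have : (c / a).im = (v₁ * v₂).im := by rw [hprod]
    rw [this, hv2]
    simp [Complex.mul_im, him]

/-- the easy Gauss–Lucas step at a point where the leading coefficient is nonzero -/
lemma QUAD2 (a b c zi : ℂ) (hc : c ≠ 0) (him : 0 < zi.im)
    (H : ∀ w : ℂ, 0 < w.im → a + b * w + c * w ^ 2 ≠ 0) (hz : b + 2 * c * zi = 0) :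
    False := by
  obtain ⟨d, hd⟩ := IsAlgClosed.exists_pow_nat_eq (b ^ 2 - 4 * a * c) (n := 2) (by norm_num)
  set w₁ : ℂ := (-b + d) / (2 * c) with hw₁
  set w₂ : ℂ := (-b - d) / (2 * c) with hw₂
  have hsum : w₁ + w₂ = -(b / c) := by rw [hw₁, hw₂]; field_simp; ring
  have hnum : (-b + d) * (-b - d) = 4 * c * a := by linear_combination -hd
  have hprod : w₁ * w₂ = a / c := by
    rw [hw₁, hw₂, div_mul_div_comm, hnum]; field_simp; ring
  have key : ∀ w : ℂ, a + b * w + c * w ^ 2 = c * (w - w₁) * (w - w₂) := by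
    intro w
    have h1 : c * (w - w₁) * (w - w₂) = c * (w ^ 2 - (w₁ + w₂) * w + w₁ * w₂) := by ring
    rw [h1, hsum, hprod]
    field_simp; ring
  have hroot : ∀ w : ℂ, (a + b * w + c * w ^ 2 = 0) → w.im ≤ 0 := by
    intro w hw
    by_contra hpos
    push_neg at hpos
    exact H w hpos hw
  have h1 : w₁.im ≤ 0 := hroot w₁ (by rw [key]; ring)
  have h2 : w₂.im ≤ 0 := hroot w₂ (by rw [key]; ring)
  have hsum2 : w₁ + w₂ = 2 * zi := by
    rw [hsum]
    have : b = -(2 * c * zi) := by linear_combination hz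
    rw [this]; field_simp
  have : w₁.im + w₂.im = 2 * zi.im := by
    have := congrArg Complex.im hsum2
    simpa [Complex.mul_im] using this
  linarith

end

section
open Complex MvPolynomial

lemma UHP_infinite : {z : ℂ | 0 < z.im}.Infinite := by
  apply Set.infinite_of_injective_forall_mem (f := fun t : ℝ => (⟨t, 1⟩ : ℂ))
  · intro a b hab
    simpa using congrArg Complex.re hab
  · intro t; simp [Set.mem_setOf_eq]

lemma NZ : ∀ (n : ℕ) (p : MvPolynomial (Fin n) ℂ), p ≠ 0 →
    ∃ z : Fin n → ℂ, (∀ j, 0 < (z j).im) ∧ MvPolynomial.eval z p ≠ 0 := by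
  intro n
  induction n with
  | zero =>
    intro p hp
    refine ⟨fun j => j.elim0, fun j => j.elim0, ?_⟩
    rw [eq_C_of_isEmpty p] at hp ⊢
    simpa using fun h => hp (by rw [h]; simp)
  | succ n ih =>
    intro p hp
    set q := finSuccEquiv ℂ n p with hq
    have hq0 : q ≠ 0 := by
      simp only [hq, ne_eq, EmbeddingLike.map_eq_zero_iff]
      exact hp
    obtain ⟨k, hk⟩ : ∃ k, q.coeff k ≠ 0 := by
      by_contra h
      push_neg at h
      exact hq0 (Polynomial.ext fun k => by simp [h k])
    obtain ⟨z', hz', hev⟩ := ih (q.coeff k) hk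
    set Q : Polynomial ℂ := Polynomial.map (eval z') q with hQ
    have hQ0 : Q ≠ 0 := by
      intro h
      apply hev
      have := congrArg (fun r => Polynomial.coeff r k) h
      simpa [hQ] using this
    have hfin : {x : ℂ | Q.IsRoot x}.Finite := Polynomial.finite_setOf_isRoot hQ0
    obtain ⟨w, hw, hwr⟩ := (UHP_infinite.diff hfin).nonempty
    refine ⟨Fin.cons w z', ?_, ?_⟩
    · intro j
      refine Fin.cases ?_ ?_ j
      · exact hw
      · exact hz'
    · rw [eval_eq_eval_mv_eval']
      exact hwr

end

section
open MvPolynomial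

lemma support_pderiv_subset {n : ℕ} (r : MvPolynomial (Fin n) ℝ) (i : Fin n) :
    (pderiv i r).support ⊆ r.support.image (fun m => m - Finsupp.single i 1) := by
  have h : pderiv i r = ∑ m ∈ r.support, monomial (m - Finsupp.single i 1) (coeff m r * m i) := by
    conv_lhs => rw [← support_sum_monomial_coeff r]
    rw [map_sum]
    exact Finset.sum_congr rfl fun m _ => by rw [pderiv_monomial]
  rw [h]
  refine Finset.Subset.trans MvPolynomial.support_sum ?_
  intro m hm
  simp only [Finset.mem_biUnion] at hm
  obtain ⟨m', hm', hmem⟩ := hm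
  have := MvPolynomial.support_monomial_subset hmem
  simp only [Finset.mem_singleton] at this
  exact Finset.mem_image.mpr ⟨m', hm', this.symm⟩

lemma degreeOf_pderiv_le {n : ℕ} (r : MvPolynomial (Fin n) ℝ) (i j : Fin n) :
    degreeOf j (pderiv i r) ≤ degreeOf j r := by
  rw [degreeOf_le_iff]
  intro m hm
  obtain ⟨m', hm', hEq⟩ := Finset.mem_image.mp (support_pderiv_subset r i hm)
  rw [← hEq]
  show ((m' - Finsupp.single i 1 : Fin n →₀ ℕ)) j ≤ _
  rw [Finsupp.tsub_apply]
  exact le_trans (Nat.sub_le _ _) (monomial_le_degreeOf j hm')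

lemma degreeOf_pderiv_self_le {n : ℕ} (r : MvPolynomial (Fin n) ℝ) (i : Fin n) {k : ℕ}
    (h : degreeOf i r ≤ k + 1) : degreeOf i (pderiv i r) ≤ k := by
  rw [degreeOf_le_iff]
  intro m hm
  obtain ⟨m', hm', hEq⟩ := Finset.mem_image.mp (support_pderiv_subset r i hm)
  rw [← hEq]
  show ((m' - Finsupp.single i 1 : Fin n →₀ ℕ)) i ≤ _
  rw [Finsupp.tsub_apply]
  have h1 : m' i ≤ k + 1 := le_trans (monomial_le_degreeOf i hm') h
  simp [Finsupp.single_apply]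
  omega

end

section
open MvPolynomial Polynomial

noncomputable section
variable {n : ℕ} (i : Fin n) (v d : Fin n → ℂ)

/-- substitution: `X i ↦ X` (outer var `w`), `X j ↦ v j + s * d j` (inner var `s`) -/
def theta (i : Fin n) (v d : Fin n → ℂ) : MvPolynomial (Fin n) ℝ →ₐ[ℝ] Polynomial (Polynomial ℂ) :=
  MvPolynomial.aeval (fun j => if j = i then Polynomial.X
    else Polynomial.C (Polynomial.C (v j) + Polynomial.C (d j) * Polynomial.X))

lemma theta_eval (r : MvPolynomial (Fin n) ℝ) (s w : ℂ) :
    Polynomial.eval w (Polynomial.map (Polynomial.evalRingHom s) (theta i v d r)) =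
      MvPolynomial.aeval (Function.update (fun j => v j + s * d j) i w) r := by
  induction r using MvPolynomial.induction_on with
  | C a => simp [theta, MvPolynomial.algebraMap_eq, Polynomial.algebraMap_apply]
  | add p q hp hq => simp [map_add, hp, hq]
  | mul_X p j hp =>
    rw [map_mul, Polynomial.map_mul, Polynomial.eval_mul, hp, map_mul, MvPolynomial.aeval_X]
    congr 1
    by_cases h : j = i
    · subst h
      simp [theta, MvPolynomial.aeval_X, Function.update_self]
    · simp only [theta, MvPolynomial.aeval_X, if_neg h, Polynomial.map_add, Polynomial.map_C,
        Polynomial.map_mul, Polynomial.map_X, Polynomial.eval_C, Function.update_of_ne h]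
      simp [Polynomial.eval_C]
      ring

lemma theta_pderiv (r : MvPolynomial (Fin n) ℝ) :
    theta i v d (pderiv i r) = Polynomial.derivative (theta i v d r) := by
  induction r using MvPolynomial.induction_on with
  | C a => simp [theta, MvPolynomial.algebraMap_eq]
  | add p q hp hq => simp [map_add, hp, hq]
  | mul_X p j hp =>
    rw [pderiv_mul, map_add, map_mul, map_mul, hp, map_mul, Polynomial.derivative_mul]
    rw [add_right_inj]
    refine congrArg (HMul.hMul (theta i v d p)) ?_
    by_cases h : j = i
    · rw [h, pderiv_X_self, map_one]
      have : theta i v d (MvPolynomial.X i) = Polynomial.X := by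
        simp [theta, MvPolynomial.aeval_X]
      rw [this, Polynomial.derivative_X]
    · rw [pderiv_X_of_ne h, map_zero]
      have : theta i v d (MvPolynomial.X j) =
          Polynomial.C (Polynomial.C (v j) + Polynomial.C (d j) * Polynomial.X) := by
        simp [theta, MvPolynomial.aeval_X, h]
      rw [this, Polynomial.derivative_C]

lemma theta_natDegree (r : MvPolynomial (Fin n) ℝ) (h : degreeOf i r ≤ 2) :
    (theta i v d r).natDegree ≤ 2 := by
  conv_lhs => rw [← support_sum_monomial_coeff r]
  rw [map_sum]
  apply Polynomial.natDegree_sum_le_of_forall_le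
  intro m hm
  rw [theta, MvPolynomial.aeval_monomial]
  apply le_trans (Polynomial.natDegree_mul_le)
  have h1 : (algebraMap ℝ (Polynomial (Polynomial ℂ)) (coeff m r)).natDegree = 0 := by
    rw [Polynomial.algebraMap_apply]
    exact Polynomial.natDegree_C _
  rw [h1, zero_add]
  refine le_trans (Polynomial.natDegree_prod_le m.support _) ?_
  have h2 : ∀ j ∈ m.support,
      ((if j = i then (Polynomial.X : Polynomial (Polynomial ℂ))
        else Polynomial.C (Polynomial.C (v j) + Polynomial.C (d j) * Polynomial.X)) ^ m j).natDegree
      ≤ if j = i then m j else 0 := by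
    intro j _
    by_cases h : j = i
    · simp only [h, if_pos rfl]
      apply le_trans (Polynomial.natDegree_pow_le)
      simp [Polynomial.natDegree_X]
    · simp only [if_neg h]
      refine le_trans Polynomial.natDegree_pow_le ?_
      rw [Polynomial.natDegree_C, mul_zero]
  refine le_trans (Finset.sum_le_sum h2) ?_
  rw [Finset.sum_ite_eq' m.support i (fun j => m j)]
  by_cases hi : i ∈ m.support
  · simp only [if_pos hi]
    exact le_trans (monomial_le_degreeOf i hm) h
  · simp [hi]
end

end

section
open Complex
lemma KL {n : ℕ} (r : MvPolynomial (Fin n) ℝ) (i : Fin n)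
    (hdeg : MvPolynomial.degreeOf i r ≤ 2) (hstab : RealStable r) :
    MvPolynomial.pderiv i r = 0 ∨ RealStable (MvPolynomial.pderiv i r) := by
  by_cases h0 : MvPolynomial.pderiv i r = 0
  · exact Or.inl h0
  right
  intro z hz hval
  -- get a point zs in UHP^n where the derivative does not vanish
  have hmapne : MvPolynomial.map (algebraMap ℝ ℂ) (MvPolynomial.pderiv i r) ≠ 0 := by
    intro h
    exact h0 (MvPolynomial.map_injective _ (algebraMap ℝ ℂ).injective (by simpa using h))
  obtain ⟨zs, hzs, hzsne⟩ := NZ n _ hmapne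
  have hzsne' : MvPolynomial.aeval zs (MvPolynomial.pderiv i r) ≠ 0 := by
    rwa [MvPolynomial.aeval_def, MvPolynomial.eval₂_eq_eval_map]
  set dd : Fin n → ℂ := fun j => zs j - z j with hdd
  set T : Polynomial (Polynomial ℂ) := theta i z dd r with hT
  have hTdeg : T.natDegree ≤ 2 := theta_natDegree i z dd r hdeg
  set a : ℂ → ℂ := fun s => (T.coeff 0).eval s with ha
  set b : ℂ → ℂ := fun s => (T.coeff 1).eval s with hb
  set c : ℂ → ℂ := fun s => (T.coeff 2).eval s with hc
  -- expansion of the slice polynomial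
  have G1 : ∀ s w : ℂ, MvPolynomial.aeval (Function.update (fun j => z j + s * dd j) i w) r
      = a s + b s * w + c s * w ^ 2 := by
    intro s w
    rw [← theta_eval i z dd r s w, ← hT, Polynomial.eval_map,
      Polynomial.eval₂_eq_sum_range' _ (lt_of_le_of_lt hTdeg (by norm_num : (2:ℕ) < 3)) w]
    simp [Finset.sum_range_succ, ha, hb, hc]
  have G2 : ∀ s w : ℂ, MvPolynomial.aeval (Function.update (fun j => z j + s * dd j) i w)
      (MvPolynomial.pderiv i r) = b s + 2 * c s * w := by
    intro s w
    rw [← theta_eval i z dd _ s w, theta_pderiv, ← hT, Polynomial.eval_map]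
    have hd1 : (Polynomial.derivative T).natDegree < 2 := by
      have := Polynomial.natDegree_derivative_le T
      omega
    rw [Polynomial.eval₂_eq_sum_range' _ hd1 w]
    simp only [Finset.sum_range_succ, Finset.sum_range_one, Polynomial.coeff_derivative,
      pow_zero, pow_one, mul_one, hb, hc]
    push_cast
    simp only [map_mul, Polynomial.coe_evalRingHom]
    simp only [Finset.sum_range_zero, Polynomial.eval_add, Polynomial.eval_one,
      Polynomial.eval_zero, zero_add]
    ring
  -- the radius of the good disc
  have : Nonempty (Fin n) := ⟨i⟩
  set δ : ℝ := Finset.univ.inf' Finset.univ_nonempty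
      (fun j => (z j).im / (‖dd j‖ + 1)) with hδ
  have hδpos : 0 < δ := by
    rw [hδ, Finset.lt_inf'_iff]
    intro j _
    have := hz j
    positivity
  have hline : ∀ s : ℂ, ‖s‖ < δ → ∀ j, 0 < (z j + s * dd j).im := by
    intro s hsδ j
    have h1 : |(s * dd j).im| ≤ ‖s‖ * ‖dd j‖ := by
      refine le_trans (Complex.abs_im_le_norm _) ?_
      rw [norm_mul]
    have h2 : δ ≤ (z j).im / (‖dd j‖ + 1) :=
      Finset.inf'_le _ (Finset.mem_univ j)
    have h3 : ‖s‖ * (‖dd j‖ + 1) < (z j).im := by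
      rw [← lt_div_iff₀ (by positivity)]
      exact lt_of_lt_of_le hsδ h2
    have h4 := abs_le.mp h1
    have h5 : 0 ≤ ‖s‖ := norm_nonneg s
    simp only [Complex.add_im]
    nlinarith
  -- stability along the line
  have STL : ∀ s : ℂ, ‖s‖ < δ → ∀ w : ℂ, 0 < w.im →
      a s + b s * w + c s * w ^ 2 ≠ 0 := by
    intro s hsδ w hw
    rw [← G1 s w]
    apply hstab
    intro j
    by_cases hji : j = i
    · subst hji; rw [Function.update_self]; exact hw
    · rw [Function.update_of_ne hji]; exact hline s hsδ j
  -- value at the point z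
  have hz0 : b 0 + 2 * c 0 * z i = 0 := by
    rw [← G2 0 (z i)]
    have hupd : Function.update (fun j => z j + 0 * dd j) i (z i) = z := by
      funext j
      by_cases hji : j = i
      · subst hji; rw [Function.update_self]
      · rw [Function.update_of_ne hji]; ring
    rw [hupd]; exact hval
  -- value at the point zs
  have hstar : b 1 + 2 * c 1 * zs i ≠ 0 := by
    rw [← G2 1 (zs i)]
    have hupd : Function.update (fun j => z j + 1 * dd j) i (zs i) = zs := by
      funext j
      by_cases hji : j = i
      · subst hji; rw [Function.update_self]
      · rw [Function.update_of_ne hji, hdd]; ring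
    rw [hupd]; exact hzsne'
  by_cases hc0 : c 0 ≠ 0
  · exact QUAD2 (a 0) (b 0) (c 0) (z i) hc0 (hz i)
      (STL 0 (by simpa using hδpos)) hz0
  push_neg at hc0
  have hb0 : b 0 = 0 := by linear_combination hz0 - 2 * z i * hc0
  have ha0 : a 0 ≠ 0 := by
    have := STL 0 (by simpa using hδpos) Complex.I (by simp)
    rw [hb0, hc0] at this
    simpa using this
  -- a s ≠ 0 on a small disc
  have hAcont : ContinuousAt (fun s => (T.coeff 0).eval s) 0 :=
    (Polynomial.continuous _).continuousAt
  obtain ⟨ε₂, hε₂pos, hε₂⟩ := Metric.eventually_nhds_iff.mp (hAcont.eventually_ne ha0)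
  have hane : ∀ s : ℂ, ‖s‖ < ε₂ → a s ≠ 0 := by
    intro s hs
    exact hε₂ (by simpa [Complex.dist_eq] using hs)
  set ε := min δ ε₂ with hε
  have hεpos : 0 < ε := lt_min hδpos hε₂pos
  have CONSTR : ∀ s : ℂ, ‖s‖ < ε →
      ((b s / a s).im ≤ 0 ∧ (b s = 0 → (c s / a s).im = 0)) := by
    intro s hs
    exact QUAD (a s) (b s) (c s) (hane s (lt_of_lt_of_le hs (min_le_right _ _)))
      (STL s (lt_of_lt_of_le hs (min_le_left _ _)))
  by_cases hBp : T.coeff 1 ≠ 0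
  · -- case B ≠ 0
    set jm := Polynomial.rootMultiplicity 0 (T.coeff 1) with hjm
    have hroot : Polynomial.IsRoot (T.coeff 1) 0 := hb0
    have hj1 : 1 ≤ jm := (Polynomial.rootMultiplicity_pos hBp).mpr hroot
    set Bt := (T.coeff 1) /ₘ (Polynomial.X - Polynomial.C 0) ^ jm with hBt
    have hkey : (Polynomial.X - Polynomial.C 0) ^ jm * Bt = T.coeff 1 :=
      Polynomial.pow_mul_divByMonic_rootMultiplicity_eq _ 0
    have hBt0 : Bt.eval 0 ≠ 0 :=
      Polynomial.eval_divByMonic_pow_rootMultiplicity_ne_zero 0 hBp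
    set u : ℂ → ℂ := fun s => Bt.eval s / (T.coeff 0).eval s with hu
    have hucont : ContinuousAt u 0 :=
      ((Polynomial.continuous _).continuousAt).div
        ((Polynomial.continuous _).continuousAt) ha0
    have hu0 : u 0 ≠ 0 := div_ne_zero hBt0 ha0
    obtain ⟨s, hs0, hslt, him⟩ := RL2 u hucont hu0 jm hj1 ε hεpos
    have hbs : b s = s ^ jm * Bt.eval s := by
      rw [hb, ← hkey]
      simp [Polynomial.eval_pow]
    have heq : u s * s ^ jm = b s / a s := by
      rw [hu, hbs, ha]
      field_simp
    rw [heq] at him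
    exact absurd (CONSTR s hslt).1 (by linarith)
  · -- case B = 0, so C ≠ 0
    push_neg at hBp
    have hCp : T.coeff 2 ≠ 0 := by
      intro hC
      apply hstar
      rw [hb, hc, hBp, hC]
      simp
    have hballs : ∀ s : ℂ, b s = 0 := by intro s; rw [hb, hBp]; simp
    set km := Polynomial.rootMultiplicity 0 (T.coeff 2) with hkm
    have hroot : Polynomial.IsRoot (T.coeff 2) 0 := hc0
    have hk1 : 1 ≤ km := (Polynomial.rootMultiplicity_pos hCp).mpr hroot
    set Ct := (T.coeff 2) /ₘ (Polynomial.X - Polynomial.C 0) ^ km with hCt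
    have hkey : (Polynomial.X - Polynomial.C 0) ^ km * Ct = T.coeff 2 :=
      Polynomial.pow_mul_divByMonic_rootMultiplicity_eq _ 0
    have hCt0 : Ct.eval 0 ≠ 0 :=
      Polynomial.eval_divByMonic_pow_rootMultiplicity_ne_zero 0 hCp
    set u : ℂ → ℂ := fun s => Ct.eval s / (T.coeff 0).eval s with hu
    have hucont : ContinuousAt u 0 :=
      ((Polynomial.continuous _).continuousAt).div
        ((Polynomial.continuous _).continuousAt) ha0
    have hu0 : u 0 ≠ 0 := div_ne_zero hCt0 ha0
    obtain ⟨s, hs0, hslt, him⟩ := RL2 u hucont hu0 km hk1 ε hεpos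
    have hcs : c s = s ^ km * Ct.eval s := by
      rw [hc, ← hkey]
      simp [Polynomial.eval_pow]
    have heq : u s * s ^ km = c s / a s := by
      rw [hu, hcs, ha]
      field_simp
    rw [heq] at him
    have := (CONSTR s hslt).2 (hballs s)
    linarith

end

section
open MvPolynomial

lemma FOLD {n : ℕ} (l : List (Fin n)) (r : MvPolynomial (Fin n) ℝ)
    (h2 : ∀ j, degreeOf j r ≤ 2) (hst : RealStable r) :
    (∀ j, degreeOf j (l.foldr (fun i g => pderiv i g) r) ≤ 2) ∧
    (∀ j ∈ l, degreeOf j (l.foldr (fun i g => pderiv i g) r) ≤ 1) ∧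
    (l.foldr (fun i g => pderiv i g) r = 0 ∨
      RealStable (l.foldr (fun i g => pderiv i g) r)) := by
  induction l with
  | nil => exact ⟨h2, by simp, Or.inr hst⟩
  | cons i l ih =>
    obtain ⟨ih2, ih1, ihso⟩ := ih
    set res' := l.foldr (fun i g => pderiv i g) r with hres'
    have key : ∀ j, degreeOf j (pderiv i res') ≤ 2 :=
      fun j => le_trans (degreeOf_pderiv_le res' i j) (ih2 j)
    refine ⟨key, ?_, ?_⟩
    · intro j hj
      rcases List.mem_cons.mp hj with hji | hjl
      · subst hji
        exact degreeOf_pderiv_self_le res' j (ih2 j)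
      · exact le_trans (degreeOf_pderiv_le res' i j) (ih1 j hjl)
    · rcases ihso with h0 | hstable
      · left
        show pderiv i res' = 0
        rw [h0, map_zero]
      · exact KL res' i (ih2 i) hstable

lemma support_aeval_scale {n : ℕ} (c0 : ℝ) (D : MvPolynomial (Fin n) ℝ) :
    (MvPolynomial.aeval (fun i => MvPolynomial.C c0 * MvPolynomial.X i) D).support ⊆
      D.support := by
  conv_lhs => rw [← support_sum_monomial_coeff D, map_sum]
  refine Finset.Subset.trans MvPolynomial.support_sum ?_
  intro m hm
  simp only [Finset.mem_biUnion] at hm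
  obtain ⟨m', hm', hmem⟩ := hm
  have hcalc : MvPolynomial.aeval (fun i => MvPolynomial.C c0 * MvPolynomial.X i)
      (monomial m' (coeff m' D)) =
      monomial m' (coeff m' D * m'.prod fun _ e => c0 ^ e) := by
    rw [aeval_monomial, MvPolynomial.algebraMap_eq]
    have h1 : (m'.prod fun j e => (MvPolynomial.C c0 * MvPolynomial.X j) ^ e) =
        MvPolynomial.C (m'.prod fun _ e => c0 ^ e) *
          (m'.prod fun j e => (MvPolynomial.X j : MvPolynomial (Fin n) ℝ) ^ e) := by
      rw [Finsupp.prod, Finsupp.prod, Finsupp.prod, map_prod, ← Finset.prod_mul_distrib]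
      exact Finset.prod_congr rfl fun j _ => by rw [mul_pow, map_pow]
    rw [h1, monomial_eq, map_mul]
    ring
  rw [hcalc] at hmem
  have := MvPolynomial.support_monomial_subset hmem
  simp only [Finset.mem_singleton] at this
  rw [this]
  exact hm'

theorem aux_conv_multiAffine_realStable {n : ℕ} (p q : MvPolynomial (Fin n) ℝ)
    (hps : RealStable p) (hqs : RealStable q)
    (hpm : MultiAffine p) (hqm : MultiAffine q) :
    MultiAffine (conv p q) ∧ (conv p q = 0 ∨ RealStable (conv p q)) := by
  have hp1 : ∀ j, degreeOf j p ≤ 1 := fun j => degreeOf_le_iff.mpr fun m hm => hpm m hm j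
  have hq1 : ∀ j, degreeOf j q ≤ 1 := fun j => degreeOf_le_iff.mpr fun m hm => hqm m hm j
  have h2 : ∀ j, degreeOf j (p * q) ≤ 2 := by
    intro j
    calc degreeOf j (p * q) ≤ degreeOf j p + degreeOf j q := degreeOf_mul_le j p q
      _ ≤ 2 := by have := hp1 j; have := hq1 j; omega
  have hpqst : RealStable (p * q) := by
    intro z hz
    rw [map_mul]
    exact mul_ne_zero (hps z hz) (hqs z hz)
  obtain ⟨hD2, hD1, hDso⟩ := FOLD (List.finRange n) (p * q) h2 hpqst
  have hDA : ∀ j, degreeOf j (diffAll (p * q)) ≤ 1 := by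
    intro j
    exact hD1 j (List.mem_finRange j)
  constructor
  · intro m hm j
    have hmem : m ∈ (diffAll (p * q)).support := support_aeval_scale _ _ hm
    exact le_trans (monomial_le_degreeOf j hmem) (hDA j)
  · rcases hDso with h0 | hst
    · left
      show MvPolynomial.aeval _ (diffAll (p * q)) = 0
      rw [show diffAll (p * q) = (List.finRange n).foldr (fun i g => pderiv i g) (p * q)
        from rfl] at *
      rw [h0, map_zero]
    · right
      intro z hz
      show MvPolynomial.aeval z (conv p q) ≠ 0
      rw [show conv p q = MvPolynomial.aeval (fun i => MvPolynomial.C (2⁻¹ : ℝ) *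
        MvPolynomial.X i) (diffAll (p * q)) from rfl,
        MvPolynomial.comp_aeval_apply (φ := MvPolynomial.aeval z) (p := diffAll (p * q))]
      apply hst
      intro j
      simp only [map_mul, MvPolynomial.aeval_X, MvPolynomial.aeval_C]
      have : (algebraMap ℝ ℂ) (2⁻¹ : ℝ) = ((2⁻¹ : ℝ) : ℂ) := rfl
      rw [this, Complex.im_ofReal_mul]
      have := hz j
      positivity
end

/-- The convolution of multiaffine real stable polynomials is multiaffine, and is
either identically zero or real stable. -/
theorem conv_multiAffine_realStable {n : ℕ} (p q : MvPolynomial (Fin n) ℝ)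
    (hps : RealStable p) (hqs : RealStable q)
    (hpm : MultiAffine p) (hqm : MultiAffine q) :
    MultiAffine (conv p q) ∧ (conv p q = 0 ∨ RealStable (conv p q)) := by
  exact aux_conv_multiAffine_realStable p q hps hqs hpm hqm
end

section
/- Let p be a nonzero multiaffine real stable polynomial in ℝ[z_1,…,z_n] with a ∈ ℝ^n above the roots of p, normalized so that p(a) > 0, and let i, j, k ∈ [n]. Assume (∂_i p + ∂_j p)(a) > 0 and let δ_i, δ_j ≥ 0 satisfy δ_i + δ_j ≤ p(a)/((∂_i p + ∂_j p)(a)). Then the point a − δ_i e_i − δ_j e_j is above the roots of (∂_i + ∂_j)p, in particular ((∂_i + ∂_j)p)(a − δ_i e_i − δ_j e_j) > 0, and moreover ( ∂_k((∂_i+∂_j)p) / ((∂_i+∂_j)p) )(a − δ_i e_i − δ_j e_j) ≤ (∂_k p / p)(a). -/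
set_option linter.unusedSectionVars false
set_option linter.unusedVariables false

open MvPolynomial

def AboveRoots {σ : Type*} (p : MvPolynomial σ ℝ) (a : σ → ℝ) : Prop :=
  ∀ t : σ → ℝ, (∀ i, 0 ≤ t i) → MvPolynomial.eval (a + t) p ≠ 0

noncomputable def shiftPt {n : ℕ} (a : Fin n → ℝ) (i j : Fin n) (δi δj : ℝ) :
    Fin n → ℝ :=
  a - δi • (Pi.single i 1 : Fin n → ℝ) - δj • (Pi.single j 1 : Fin n → ℝ)

variable {σ : Type*} [DecidableEq σ]

lemma eval_update_monomial' {S : Type*} [CommSemiring S] (m : σ →₀ ℕ) (c : S)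
    (v : σ) (hm : m v ≤ 1) (x : σ → S) (s : S) :
    eval (Function.update x v (x v + s)) (monomial m c)
      = eval x (monomial m c) + s * eval x (pderiv v (monomial m c)) := by
  rw [pderiv_monomial, eval_monomial, eval_monomial, eval_monomial]
  interval_cases h : m v
  · have hv : v ∉ m.support := by simp [Finsupp.notMem_support_iff, h]
    have hp : (m.prod fun u e => Function.update x v (x v + s) u ^ e)
        = m.prod fun u e => x u ^ e := by
      refine Finset.prod_congr rfl fun u hu => ?_
      have huv : u ≠ v := fun huv => hv (huv ▸ hu)
      simp [Function.update_of_ne huv]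
    rw [hp]
    push_cast
    ring
  · have hv : v ∈ m.support := by simp [Finsupp.mem_support_iff, h]
    have herase : m - Finsupp.single v 1 = m.erase v := by
      ext u
      rcases eq_or_ne u v with rfl | hu
      · simp [h]
      · simp [hu, Finsupp.single_eq_of_ne (Ne.symm hu)]
    have hagree : ∀ y : σ → S, y v = x v + s → (m.prod fun u e => y u ^ e)
        = (x v + s) * ∏ u ∈ m.support.erase v, y u ^ m u := by
      intro y hy
      rw [Finsupp.prod, ← Finset.prod_erase_mul _ _ hv, h, hy, pow_one, mul_comm]
    have h1 : (m.prod fun u e => Function.update x v (x v + s) u ^ e)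
        = (x v + s) * ∏ u ∈ m.support.erase v, x u ^ m u := by
      rw [hagree _ (Function.update_self _ _ _)]
      congr 1
      refine Finset.prod_congr rfl fun u hu => ?_
      rw [Function.update_of_ne (Finset.ne_of_mem_erase hu)]
    have h2 : (m.prod fun u e => x u ^ e)
        = x v * ∏ u ∈ m.support.erase v, x u ^ m u := by
      rw [Finsupp.prod, ← Finset.prod_erase_mul _ _ hv, h, pow_one, mul_comm]
    have h3 : ((m - Finsupp.single v 1).prod fun u e => x u ^ e)
        = ∏ u ∈ m.support.erase v, x u ^ m u := by
      rw [herase, Finsupp.prod, Finsupp.support_erase]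
      refine Finset.prod_congr rfl fun u hu => ?_
      rw [Finsupp.erase_ne (Finset.ne_of_mem_erase hu)]
    rw [h1, h2, h3]
    push_cast
    ring

lemma eval_update_of_le_one {S : Type*} [CommSemiring S] (q : MvPolynomial σ S) (v : σ)
    (h : ∀ m ∈ q.support, m v ≤ 1) (x : σ → S) (s : S) :
    eval (Function.update x v (x v + s)) q = eval x q + s * eval x (pderiv v q) := by
  have hq := support_sum_monomial_coeff q
  calc eval (Function.update x v (x v + s)) q
      = ∑ m ∈ q.support, eval (Function.update x v (x v + s)) (monomial m (coeff m q)) := by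
        conv_lhs => rw [← hq]
        rw [map_sum]
    _ = ∑ m ∈ q.support, (eval x (monomial m (coeff m q))
          + s * eval x (pderiv v (monomial m (coeff m q)))) :=
        Finset.sum_congr rfl fun m hm => eval_update_monomial' m _ v (h m hm) x s
    _ = eval x q + s * eval x (pderiv v q) := by
        rw [Finset.sum_add_distrib]
        congr 1
        · rw [← map_sum, hq]
        · rw [← Finset.mul_sum, ← map_sum, ← map_sum, hq]

lemma pderiv_support_le {S : Type*} [CommSemiring S] (q : MvPolynomial σ S) (v : σ)
    (h : ∀ m ∈ q.support, ∀ u, m u ≤ 1) :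
    ∀ m ∈ (pderiv v q).support, ∀ u, m u ≤ 1 := by
  intro m hm u
  have hq := support_sum_monomial_coeff q
  rw [← hq, map_sum] at hm
  obtain ⟨m', hm', hmm⟩ := Finset.mem_biUnion.mp (support_sum hm)
  rw [pderiv_monomial] at hmm
  have := support_monomial_subset hmm
  rw [Finset.mem_singleton] at this
  subst this
  calc (m' - Finsupp.single v 1 : σ →₀ ℕ) u ≤ m' u := by
        rw [Finsupp.tsub_apply]; exact tsub_le_self
    _ ≤ 1 := h m' hm' u

lemma pderiv_pderiv_self {S : Type*} [CommSemiring S] (q : MvPolynomial σ S) (v : σ)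
    (h : ∀ m ∈ q.support, m v ≤ 1) :
    pderiv v (pderiv v q) = 0 := by
  have hq := support_sum_monomial_coeff q
  rw [← hq, map_sum, map_sum]
  refine Finset.sum_eq_zero fun m hm => ?_
  rw [pderiv_monomial, pderiv_monomial]
  have := h m hm
  interval_cases hv : m v
  · simp
  · have : (m - Finsupp.single v 1 : σ →₀ ℕ) v = 0 := by
      rw [Finsupp.tsub_apply, Finsupp.single_eq_same, hv]
    rw [this]
    simp

lemma pderiv_comm' {S : Type*} [CommSemiring S] (q : MvPolynomial σ S) (u v : σ) :
    pderiv u (pderiv v q) = pderiv v (pderiv u q) := by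
  have hq := support_sum_monomial_coeff q
  rw [← hq, map_sum, map_sum, map_sum, map_sum]
  refine Finset.sum_congr rfl fun m hm => ?_
  rcases eq_or_ne u v with rfl | huv
  · rfl
  · rw [pderiv_monomial, pderiv_monomial, pderiv_monomial, pderiv_monomial]
    have h1 : (m - Finsupp.single v 1 : σ →₀ ℕ) u = m u := by
      rw [Finsupp.tsub_apply, Finsupp.single_eq_of_ne' (Ne.symm huv), tsub_zero]
    have h2 : (m - Finsupp.single u 1 : σ →₀ ℕ) v = m v := by
      rw [Finsupp.tsub_apply, Finsupp.single_eq_of_ne' huv, tsub_zero]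
    rw [h1, h2, tsub_tsub, tsub_tsub, add_comm]
    ring_nf

lemma lin_ne_root (c d : ℂ) (h : ∀ z : ℂ, 0 < z.im → c * z + d ≠ 0) :
    0 ≤ (d * (starRingEnd ℂ) c).im := by
  by_contra hneg
  push_neg at hneg
  have hc : c ≠ 0 := by
    rintro rfl
    simp at hneg
  have him : 0 < (-(d / c)).im := by
    rw [Complex.neg_im, Complex.div_im]
    have hns : 0 < Complex.normSq c := Complex.normSq_pos.mpr hc
    have : (d * (starRingEnd ℂ) c).im = d.im * c.re - d.re * c.im := by
      simp [Complex.mul_im, Complex.conj_re, Complex.conj_im]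
      ring
    rw [this] at hneg
    rw [neg_sub]
    have h2 : d.re * c.im / Complex.normSq c - d.im * c.re / Complex.normSq c
        = -(d.im * c.re - d.re * c.im) / Complex.normSq c := by ring
    rw [h2]
    apply div_pos (by linarith) hns
  exact h _ him (by field_simp; ring)

lemma eval_coe_map (x : σ → ℝ) (q : MvPolynomial σ ℝ) :
    eval (fun ℓ => (x ℓ : ℂ)) (map (algebraMap ℝ ℂ) q) = ((eval x q : ℝ) : ℂ) := by
  rw [← eval₂_eq_eval_map]
  have h := eval₂_comp_left (algebraMap ℝ ℂ) (RingHom.id ℝ) x q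
  rw [eval₂_id] at h
  simpa [Function.comp_def, Complex.coe_algebraMap] using h.symm

lemma branden {p : MvPolynomial σ ℝ} (hps : RealStable p) (hpm : MultiAffine p)
    (u v : σ) (x : σ → ℝ) :
    eval x p * eval x (pderiv u (pderiv v p))
      ≤ eval x (pderiv u p) * eval x (pderiv v p) := by
  rcases eq_or_ne u v with rfl | huv
  · rw [pderiv_pderiv_self p u (fun m hm => hpm m hm u)]
    simpa using mul_self_nonneg (eval x (pderiv u p))
  set P' : MvPolynomial σ ℂ := map (algebraMap ℝ ℂ) p with hP'
  have hP'm : ∀ m ∈ P'.support, ∀ w, m w ≤ 1 :=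
    fun m hm w => hpm m (support_map_subset _ _ hm) w
  set χ : ℝ → σ → ℂ := fun ε ℓ =>
    (x ℓ : ℂ) + (if ℓ = u ∨ ℓ = v then 0 else (ε : ℂ) * Complex.I) with hχ
  set c : ℝ → ℂ := fun ε =>
    eval (χ ε) (pderiv u (pderiv v P')) * Complex.I + eval (χ ε) (pderiv u P') with hc
  set d : ℝ → ℂ := fun ε =>
    eval (χ ε) (pderiv v P') * Complex.I + eval (χ ε) P' with hd
  have hχu : ∀ ε, χ ε u = (x u : ℂ) := fun ε => by simp [hχ]
  have hχv : ∀ ε, χ ε v = (x v : ℂ) := fun ε => by simp [hχ]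
  -- Step A
  have stepA : ∀ ε : ℝ, 0 < ε → ∀ z : ℂ, 0 < z.im → c ε * z + d ε ≠ 0 := by
    intro ε hε z hz
    set Y : σ → ℂ := Function.update (χ ε) u ((x u : ℂ) + z) with hY
    set ζ : σ → ℂ := Function.update Y v ((x v : ℂ) + Complex.I) with hζ
    have hYv : Y v = (x v : ℂ) := by
      rw [hY, Function.update_of_ne (Ne.symm huv), hχv]
    have hexp1 : eval ζ P' = eval Y P' + Complex.I * eval Y (pderiv v P') := by
      have h := eval_update_of_le_one P' v (fun m hm => hP'm m hm v) Y Complex.I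
      rw [hYv] at h
      exact h
    have hexpu : ∀ r : MvPolynomial σ ℂ, (∀ m ∈ r.support, m u ≤ 1) →
        eval Y r = eval (χ ε) r + z * eval (χ ε) (pderiv u r) := by
      intro r hr
      have := eval_update_of_le_one r u hr (χ ε) z
      rw [hY, ← hχu ε]
      exact this
    have hzeta : eval ζ P' = c ε * z + d ε := by
      rw [hexp1, hexpu P' (fun m hm => hP'm m hm u),
        hexpu (pderiv v P') (fun m hm => pderiv_support_le P' v hP'm m hm u)]
      ring
    have him : ∀ ℓ, 0 < (ζ ℓ).im := by
      intro ℓ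
      rcases eq_or_ne ℓ v with rfl | hlv
      · rw [hζ, Function.update_self]
        simp
      rcases eq_or_ne ℓ u with rfl | hlu
      · rw [hζ, Function.update_of_ne huv, hY, Function.update_self]
        simpa using hz
      · rw [hζ, Function.update_of_ne hlv, hY, Function.update_of_ne hlu, hχ]
        simp [hlu, hlv, hε]
    have hne := hps ζ him
    rw [aeval_def, eval₂_eq_eval_map, ← hP'] at hne
    rw [← hzeta]
    exact hne
  -- Step B
  have stepB : ∀ ε ∈ Set.Ioi (0:ℝ), 0 ≤ (d ε * (starRingEnd ℂ) (c ε)).im :=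
    fun ε hε => lin_ne_root _ _ (stepA ε hε)
  -- Step C : continuity
  have hχcont : Continuous fun ε : ℝ => χ ε := by
    rw [hχ]
    refine continuous_pi fun ℓ => ?_
    by_cases hcase : ℓ = u ∨ ℓ = v <;> simp [hcase] <;> continuity
  have stepC : Filter.Tendsto (fun ε => (d ε * (starRingEnd ℂ) (c ε)).im)
      (nhdsWithin 0 (Set.Ioi 0)) (nhds ((d 0 * (starRingEnd ℂ) (c 0)).im)) := by
    apply Filter.Tendsto.mono_left _ nhdsWithin_le_nhds
    have hcont : Continuous fun ε => (d ε * (starRingEnd ℂ) (c ε)).im := by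
      apply Complex.continuous_im.comp
      apply Continuous.mul
      · rw [hd]
        exact ((MvPolynomial.continuous_eval _).comp hχcont).mul continuous_const |>.add
          ((MvPolynomial.continuous_eval _).comp hχcont)
      · exact Complex.continuous_conj.comp
          (((MvPolynomial.continuous_eval _).comp hχcont).mul continuous_const |>.add
          ((MvPolynomial.continuous_eval _).comp hχcont))
    exact hcont.tendsto 0
  -- Step D
  have stepD : 0 ≤ (d 0 * (starRingEnd ℂ) (c 0)).im := by
    refine ge_of_tendsto stepC ?_
    filter_upwards [self_mem_nhdsWithin] using stepB
  -- Step E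
  have hχ0 : χ 0 = fun ℓ => (x ℓ : ℂ) := by
    funext ℓ
    rw [hχ]
    by_cases hcase : ℓ = u ∨ ℓ = v <;> simp [hcase]
  have hd0 : d 0 = ((eval x (pderiv v p) : ℝ) : ℂ) * Complex.I + ((eval x p : ℝ) : ℂ) := by
    show eval (χ 0) (pderiv v P') * Complex.I + eval (χ 0) P' = _
    rw [hχ0, hP']
    simp only [pderiv_map]
    rw [eval_coe_map, eval_coe_map]
  have hc0 : c 0 = ((eval x (pderiv u (pderiv v p)) : ℝ) : ℂ) * Complex.I
      + ((eval x (pderiv u p) : ℝ) : ℂ) := by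
    show eval (χ 0) (pderiv u (pderiv v P')) * Complex.I + eval (χ 0) (pderiv u P') = _
    rw [hχ0, hP']
    simp only [pderiv_map]
    rw [eval_coe_map, eval_coe_map]
  rw [hd0, hc0] at stepD
  set Pv := eval x p
  set Uv := eval x (pderiv u p)
  set Vv := eval x (pderiv v p)
  set Wv := eval x (pderiv u (pderiv v p))
  simp only [Complex.mul_im, Complex.add_im, Complex.add_re, Complex.mul_re,
    Complex.I_im, Complex.I_re, Complex.ofReal_im, Complex.ofReal_re, Complex.conj_re,
    Complex.conj_im, Complex.neg_im, Complex.neg_re, mul_zero, mul_one, zero_mul, one_mul,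
    zero_add, add_zero, sub_zero, zero_sub, neg_zero, neg_neg] at stepD
  nlinarith [stepD]

lemma eval_add_smul_single (q : MvPolynomial σ ℝ) (v : σ)
    (h : ∀ m ∈ q.support, m v ≤ 1) (x : σ → ℝ) (s : ℝ) :
    eval (x + s • (Pi.single v 1 : σ → ℝ)) q = eval x q + s * eval x (pderiv v q) := by
  have hupd : x + s • (Pi.single v 1 : σ → ℝ) = Function.update x v (x v + s) := by
    funext u
    rcases eq_or_ne u v with rfl | hu
    · simp
    · simp [Function.update_of_ne hu, Pi.single_eq_of_ne hu]
  rw [hupd, eval_update_of_le_one q v h x s]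

set_option maxHeartbeats 1000000 in
lemma master_ineq (Pa A B CC E F G H δi δj w : ℝ)
    (hpa : 0 < Pa) (hAB : 0 < A + B)
    (hEn : 0 ≤ E) (hδi : 0 ≤ δi) (hδj : 0 ≤ δj)
    (hδAB : (δi + δj) * (A + B) ≤ Pa)
    (hbrF : Pa * F ≤ CC * A) (hbrG : Pa * G ≤ CC * B)
    (hw : w = -(Pa / (A + B)))
    (key1 : (Pa + w * B) * (F + w * H) ≤ (CC + w * G) * (A + w * E))
    (key2 : (Pa + w * A) * (G + w * H) ≤ (CC + w * F) * (B + w * E)) :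
    (F + G - (δi + δj) * H) * Pa ≤ CC * ((A + B) - (δi + δj) * E) := by
  have k1 : ((A+B)*Pa - Pa*B)*((A+B)*F - Pa*H)
      ≤ ((A+B)*CC - Pa*G)*((A+B)*A - Pa*E) := by
    have e1 : ((A+B)*CC - Pa*G)*((A+B)*A - Pa*E)
        - ((A+B)*Pa - Pa*B)*((A+B)*F - Pa*H)
        = (A+B)^2 * ((CC + w*G)*(A + w*E) - (Pa + w*B)*(F + w*H)) := by
      rw [hw]
      field_simp
      ring
    nlinarith [e1, mul_nonneg (sq_nonneg (A+B)) (sub_nonneg.mpr key1)]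
  have k2 : ((A+B)*Pa - Pa*A)*((A+B)*G - Pa*H)
      ≤ ((A+B)*CC - Pa*F)*((A+B)*B - Pa*E) := by
    have e2 : ((A+B)*CC - Pa*F)*((A+B)*B - Pa*E)
        - ((A+B)*Pa - Pa*A)*((A+B)*G - Pa*H)
        = (A+B)^2 * ((CC + w*F)*(B + w*E) - (Pa + w*A)*(G + w*H)) := by
      rw [hw]
      field_simp
      ring
    nlinarith [e2, mul_nonneg (sq_nonneg (A+B)) (sub_nonneg.mpr key2)]
  have halpha : 0 ≤ CC*(A+B) - Pa*(F+G) := by nlinarith [hbrF, hbrG]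
  have hstar : 0 ≤ CC*(A+B)^2 - Pa*CC*E - Pa*(A+B)*(F+G) + Pa^2*H := by
    have hA1 : 0 ≤ (A+B) * ((((A+B)*CC - Pa*G)*((A+B)*A - Pa*E)
        - ((A+B)*Pa - Pa*B)*((A+B)*F - Pa*H))
        + (((A+B)*CC - Pa*F)*((A+B)*B - Pa*E)
        - ((A+B)*Pa - Pa*A)*((A+B)*G - Pa*H))) :=
      mul_nonneg hAB.le (by linarith [k1, k2])
    have hB1 : 0 ≤ Pa*(A+B)*E*(CC*(A+B) - Pa*(F+G)) :=
      mul_nonneg (mul_nonneg (mul_nonneg hpa.le hAB.le) hEn) halpha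
    have e3 : (A+B)^2*(CC*(A+B)^2 - Pa*CC*E - Pa*(A+B)*(F+G) + Pa^2*H)
        = (A+B) * ((((A+B)*CC - Pa*G)*((A+B)*A - Pa*E)
          - ((A+B)*Pa - Pa*B)*((A+B)*F - Pa*H))
          + (((A+B)*CC - Pa*F)*((A+B)*B - Pa*E)
          - ((A+B)*Pa - Pa*A)*((A+B)*G - Pa*H)))
          + Pa*(A+B)*E*(CC*(A+B) - Pa*(F+G)) := by
      ring
    have h0 : 0 ≤ (A+B)^2*(CC*(A+B)^2 - Pa*CC*E - Pa*(A+B)*(F+G) + Pa^2*H) := by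
      rw [e3]
      exact add_nonneg hA1 hB1
    by_contra hc
    push_neg at hc
    nlinarith [h0, mul_pos (pow_pos hAB 2) (by linarith :
      (0:ℝ) < -(CC*(A+B)^2 - Pa*CC*E - Pa*(A+B)*(F+G) + Pa^2*H))]
  have e4 : ((A+B)*Pa)*(CC*((A+B) - (δi+δj)*E) - (F + G - (δi+δj)*H)*Pa)
      = (CC*(A+B) - Pa*(F+G))*(A+B)*(Pa - (δi+δj)*(A+B))
        + ((δi+δj)*(A+B))*(CC*(A+B)^2 - Pa*CC*E - Pa*(A+B)*(F+G) + Pa^2*H) := by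
    ring
  have h4 : 0 ≤ ((A+B)*Pa)*(CC*((A+B) - (δi+δj)*E) - (F + G - (δi+δj)*H)*Pa) := by
    rw [e4]
    have t1 : 0 ≤ (CC*(A+B) - Pa*(F+G))*(A+B)*(Pa - (δi+δj)*(A+B)) :=
      mul_nonneg (mul_nonneg halpha hAB.le) (by linarith [hδAB])
    have t2 : 0 ≤ ((δi+δj)*(A+B))*(CC*(A+B)^2 - Pa*CC*E - Pa*(A+B)*(F+G) + Pa^2*H) :=
      mul_nonneg (mul_nonneg (by linarith) hAB.le) hstar
    linarith
  have h5 : 0 ≤ CC*((A+B) - (δi+δj)*E) - (F + G - (δi+δj)*H)*Pa := by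
    by_contra hc
    push_neg at hc
    nlinarith [h4, mul_pos hAB hpa, hc]
  linarith

set_option maxHeartbeats 1000000 in
/-- Potential shift upon applying `∂ᵢ + ∂ⱼ` to a multiaffine real stable polynomial:
if `δᵢ + δⱼ ≤ p(a)/((∂ᵢp + ∂ⱼp)(a))` then `a - δᵢeᵢ - δⱼeⱼ` is above the roots of
`(∂ᵢ + ∂ⱼ)p` and `Φ^k` does not increase. -/
theorem potential_shift_partial_sum {n : ℕ} (p : MvPolynomial (Fin n) ℝ)
    (hp0 : p ≠ 0) (hps : RealStable p) (hpm : MultiAffine p)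
    (a : Fin n → ℝ) (ha : AboveRoots p a) (hpa : 0 < MvPolynomial.eval a p)
    (i j k : Fin n)
    (hij : 0 < MvPolynomial.eval a (MvPolynomial.pderiv i p + MvPolynomial.pderiv j p))
    (δi δj : ℝ) (hδi : 0 ≤ δi) (hδj : 0 ≤ δj)
    (hδ : δi + δj ≤ MvPolynomial.eval a p /
      MvPolynomial.eval a (MvPolynomial.pderiv i p + MvPolynomial.pderiv j p)) :
    AboveRoots (MvPolynomial.pderiv i p + MvPolynomial.pderiv j p) (shiftPt a i j δi δj) ∧
      0 < MvPolynomial.eval (shiftPt a i j δi δj)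
          (MvPolynomial.pderiv i p + MvPolynomial.pderiv j p) ∧
      MvPolynomial.eval (shiftPt a i j δi δj)
            (MvPolynomial.pderiv k (MvPolynomial.pderiv i p + MvPolynomial.pderiv j p)) /
          MvPolynomial.eval (shiftPt a i j δi δj)
            (MvPolynomial.pderiv i p + MvPolynomial.pderiv j p) ≤
        MvPolynomial.eval a (MvPolynomial.pderiv k p) / MvPolynomial.eval a p := by
  set q : MvPolynomial (Fin n) ℝ := pderiv i p + pderiv j p with hq
  -- multiaffineness
  have hpmv : ∀ v, ∀ m ∈ (pderiv v p).support, ∀ u, m u ≤ 1 :=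
    fun v => pderiv_support_le p v hpm
  have hqm : ∀ m ∈ q.support, ∀ u, m u ≤ 1 := by
    intro m hm u
    rcases Finset.mem_union.mp (support_add hm) with h | h
    · exact hpmv i m h u
    · exact hpmv j m h u
  -- p positive on the region above the roots
  have hP0 : ∀ t : Fin n → ℝ, (∀ w, 0 ≤ t w) → 0 < eval (a + t) p := by
    intro t ht
    set f : ℝ → ℝ := fun s => eval (a + s • t) p with hf
    have hfc : Continuous f :=
      (MvPolynomial.continuous_eval p).comp
        (continuous_const.add (continuous_pi fun w =>
          (continuous_id.mul continuous_const)))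
    have hfne : ∀ s ∈ Set.Icc (0:ℝ) 1, f s ≠ 0 := by
      intro s hs
      exact ha (s • t) (fun w => mul_nonneg hs.1 (ht w))
    have hf0 : 0 < f 0 := by simpa [hf] using hpa
    have hf1 : f 1 ≠ 0 := hfne 1 (by norm_num)
    by_contra hcon
    push_neg at hcon
    have hf1' : f 1 < 0 := by
      have : eval (a + t) p = f 1 := by simp [hf]
      rcases lt_or_eq_of_le (by rw [this] at hcon; exact hcon) with h | h
      · exact h
      · exact absurd h hf1
    have : (0:ℝ) ∈ Set.Icc (f 1) (f 0) := ⟨hf1'.le, hf0.le⟩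
    obtain ⟨s, hs, hfs⟩ := intermediate_value_Icc' (by norm_num : (0:ℝ) ≤ 1)
      hfc.continuousOn this
    exact hfne s hs hfs
  -- first partial derivatives nonnegative on the region
  have hD1 : ∀ v, ∀ t : Fin n → ℝ, (∀ w, 0 ≤ t w) → 0 ≤ eval (a + t) (pderiv v p) := by
    intro v t ht
    by_contra hcon
    push_neg at hcon
    set c := eval (a + t) p with hc
    set d := eval (a + t) (pderiv v p) with hd
    have hcpos : 0 < c := hP0 t ht
    set s : ℝ := c / (-d) with hs
    have hspos : 0 < s := div_pos hcpos (by linarith)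
    have hzero : eval (a + (t + s • (Pi.single v 1 : Fin n → ℝ))) p = 0 := by
      rw [← add_assoc, eval_add_smul_single p v (fun m hm => hpm m hm v)]
      rw [← hc, ← hd, hs]
      have hdne : d ≠ 0 := ne_of_lt hcon
      rw [div_mul_eq_mul_div, div_neg, mul_div_assoc, div_self hdne]
      ring
    exact ha (t + s • (Pi.single v 1 : Fin n → ℝ))
      (fun w => by
        have : (0:ℝ) ≤ s • (Pi.single v 1 : Fin n → ℝ) w := by
          rcases eq_or_ne w v with rfl | hw
          · simp [hspos.le]
          · simp [Pi.single_eq_of_ne hw]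
        have := add_nonneg (ht w) this
        simpa using this) hzero
  -- generic upgrade: nonneg on region implies derivative nonneg on region
  have hkey : ∀ r : MvPolynomial (Fin n) ℝ, (∀ m ∈ r.support, ∀ u, m u ≤ 1) →
      (∀ t : Fin n → ℝ, (∀ w, 0 ≤ t w) → 0 ≤ eval (a + t) r) →
      ∀ v, ∀ t : Fin n → ℝ, (∀ w, 0 ≤ t w) → 0 ≤ eval (a + t) (pderiv v r) := by
    intro r hrm hnn v t ht
    by_contra hcon
    push_neg at hcon
    set c := eval (a + t) r with hc
    set d := eval (a + t) (pderiv v r) with hd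
    have hcnn : 0 ≤ c := hnn t ht
    set s : ℝ := (c + 1) / (-d) with hs
    have hspos : 0 < s := div_pos (by linarith) (by linarith)
    have hval : eval (a + (t + s • (Pi.single v 1 : Fin n → ℝ))) r = c + s * d := by
      rw [← add_assoc, eval_add_smul_single r v (fun m hm => hrm m hm v), ← hc, ← hd]
    have hsd : s * d = -(c + 1) := by
      have hdne : d ≠ 0 := ne_of_lt hcon
      rw [hs, div_mul_eq_mul_div, div_neg, mul_div_assoc, div_self hdne]
      ring
    have hnn' := hnn (t + s • (Pi.single v 1 : Fin n → ℝ))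
      (fun w => by
        have h1 : (0:ℝ) ≤ s • (Pi.single v 1 : Fin n → ℝ) w := by
          rcases eq_or_ne w v with rfl | hw
          · simp [hspos.le]
          · simp [Pi.single_eq_of_ne hw]
        have := add_nonneg (ht w) h1
        simpa using this)
    rw [hval, hsd] at hnn'
    linarith
  have hD2 : ∀ u v, ∀ t : Fin n → ℝ, (∀ w, 0 ≤ t w) →
      0 ≤ eval (a + t) (pderiv u (pderiv v p)) :=
    fun u v => hkey (pderiv v p) (hpmv v) (hD1 v) u
  have hD3 : ∀ w u v, ∀ t : Fin n → ℝ, (∀ w', 0 ≤ t w') →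
      0 ≤ eval (a + t) (pderiv w (pderiv u (pderiv v p))) :=
    fun w u v => hkey (pderiv u (pderiv v p)) (pderiv_support_le _ u (hpmv v)) (hD2 u v) w
  -- q positive on region
  have hQpos : ∀ t : Fin n → ℝ, (∀ w, 0 ≤ t w) → 0 < eval (a + t) q := by
    intro t ht
    have main : ∀ s : Finset (Fin n),
        0 < eval (a + fun w => if w ∈ s then t w else 0) q := by
      intro s
      induction s using Finset.induction_on with
      | empty =>
        have he : (fun w => if w ∈ (∅ : Finset (Fin n)) then t w else 0) = (0 : Fin n → ℝ) := by
          funext w; simp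
        rw [he, add_zero]
        exact hij
      | @insert v s hv ih =>
        have hdec : (fun w => if w ∈ insert v s then t w else 0)
            = (fun w => if w ∈ s then t w else 0) + (t v) • (Pi.single v 1 : Fin n → ℝ) := by
          funext w
          rcases eq_or_ne w v with rfl | hw
          · simp [hv]
          · simp [hw, Pi.single_eq_of_ne hw]
        have hts : ∀ w, 0 ≤ (if w ∈ s then t w else 0) := by
          intro w; by_cases h : w ∈ s <;> simp [h, ht w]
        have hder : 0 ≤ eval (a + fun w => if w ∈ s then t w else 0) (pderiv v q) := by
          rw [hq, map_add, map_add]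
          exact add_nonneg (hD2 v i _ hts) (hD2 v j _ hts)
        rw [hdec, ← add_assoc, eval_add_smul_single q v (fun m hm => hqm m hm v)]
        nlinarith [mul_nonneg (ht v) hder, ih]
    have hfin := main Finset.univ
    have he : (fun w => if w ∈ (Finset.univ : Finset (Fin n)) then t w else 0) = t := by
      funext w; simp
    rwa [he] at hfin
  -- monotonicity of the potential of q
  have hPhiMono : ∀ t : Fin n → ℝ, (∀ w, 0 ≤ t w) →
      eval (a + t) q * eval a p ≤ eval (a + t) p * eval a q := by
    intro t ht
    have main : ∀ s : Finset (Fin n),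
        eval (a + fun w => if w ∈ s then t w else 0) q * eval a p ≤
          eval (a + fun w => if w ∈ s then t w else 0) p * eval a q := by
      intro s
      induction s using Finset.induction_on with
      | empty =>
        have he : (fun w => if w ∈ (∅ : Finset (Fin n)) then t w else 0) = (0 : Fin n → ℝ) := by
          funext w; simp
        rw [he, add_zero]
        exact le_of_eq (mul_comm _ _)
      | @insert v s hv ih =>
        have hdec : (fun w => if w ∈ insert v s then t w else 0)
            = (fun w => if w ∈ s then t w else 0) + (t v) • (Pi.single v 1 : Fin n → ℝ) := by
          funext w
          rcases eq_or_ne w v with rfl | hw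
          · simp [hv]
          · simp [hw, Pi.single_eq_of_ne hw]
        have hts : ∀ w, 0 ≤ (if w ∈ s then t w else 0) := by
          intro w; by_cases h : w ∈ s <;> simp [h, ht w]
        set x : Fin n → ℝ := a + fun w => if w ∈ s then t w else 0 with hx
        have hqv : eval x (pderiv v q) =
            eval x (pderiv v (pderiv i p)) + eval x (pderiv v (pderiv j p)) := by
          rw [hq, map_add, map_add]
        have hqxe : eval x q = eval x (pderiv i p) + eval x (pderiv j p) := by
          rw [hq, map_add]
        have hbrsum : eval x p * eval x (pderiv v q) ≤ eval x (pderiv v p) * eval x q := by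
          rw [hqv, hqxe]
          have b1 := branden hps hpm v i x
          have b2 := branden hps hpm v j x
          nlinarith [b1, b2]
        have hpx : 0 < eval x p := hP0 _ hts
        have hpv : 0 ≤ eval x (pderiv v p) := hD1 v _ hts
        have h3 : eval x (pderiv v q) * eval a p ≤ eval x (pderiv v p) * eval a q := by
          nlinarith [mul_le_mul_of_nonneg_right hbrsum hpa.le,
            mul_le_mul_of_nonneg_left ih hpv, hpx]
        rw [hdec, ← add_assoc, ← hx, eval_add_smul_single q v (fun m hm => hqm m hm v),
          eval_add_smul_single p v (fun m hm => hpm m hm v)]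
        nlinarith [ih, mul_le_mul_of_nonneg_left h3 (ht v)]
    have hfin := main Finset.univ
    have he : (fun w => if w ∈ (Finset.univ : Finset (Fin n)) then t w else 0) = t := by
      funext w; simp
    rwa [he] at hfin
  -- bound on δ at a
  have hu : (0:ℝ) < eval a q := hij
  have hδQa : (δi + δj) * eval a q ≤ eval a p := (le_div_iff₀ hu).mp hδ
  -- the second mixed derivative of q in directions i j vanishes
  have hijq : pderiv i (pderiv j q) = 0 := by
    rw [hq, map_add, map_add]
    have h1 : pderiv i (pderiv j (pderiv i p)) = 0 := by
      rw [pderiv_comm' p j i]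
      exact pderiv_pderiv_self (pderiv j p) i (fun m hm => hpmv j m hm i)
    have h2 : pderiv i (pderiv j (pderiv j p)) = 0 := by
      rw [pderiv_pderiv_self p j (fun m hm => hpm m hm j)]
      simp
    rw [h1, h2, add_zero]
  -- the value of q at shifted points
  have hval : ∀ t : Fin n → ℝ,
      eval (shiftPt a i j δi δj + t) q
        = eval (a + t) q - δi * eval (a + t) (pderiv i q)
          - δj * eval (a + t) (pderiv j q) := by
    intro t
    have hrearr : shiftPt a i j δi δj + t
        = ((a + t) + (-δi) • (Pi.single i 1 : Fin n → ℝ))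
            + (-δj) • (Pi.single j 1 : Fin n → ℝ) := by
      funext w
      simp [shiftPt, sub_eq_add_neg, neg_smul]
      ring
    rw [hrearr, eval_add_smul_single q j (fun m hm => hqm m hm j),
      eval_add_smul_single q i (fun m hm => hqm m hm i),
      eval_add_smul_single (pderiv j q) i
        (fun m hm => pderiv_support_le q j hqm m hm i),
      hijq]
    simp
    ring
  -- main positivity statement (goal 1)
  have hW : ∀ t : Fin n → ℝ, (∀ w, 0 ≤ t w) →
      0 < eval (shiftPt a i j δi δj + t) q := by
    intro t ht
    rw [hval t]
    set x : Fin n → ℝ := a + t with hx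
    rcases eq_or_ne i j with rfl | hij'
    · have hiq : pderiv i q = 0 := by
        rw [hq, map_add, pderiv_pderiv_self p i (fun m hm => hpm m hm i)]
        simp
      rw [hiq]
      simpa using hQpos t ht
    · have hiq : pderiv i q = pderiv i (pderiv j p) := by
        rw [hq, map_add, pderiv_pderiv_self p i (fun m hm => hpm m hm i)]
        simp
      have hjq : pderiv j q = pderiv i (pderiv j p) := by
        rw [hq, map_add, pderiv_pderiv_self p j (fun m hm => hpm m hm j)]
        rw [pderiv_comm' p j i]
        simp
      rw [hiq, hjq]
      set Ex := eval x (pderiv i (pderiv j p)) with hEdef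
      have hqx := hQpos t ht
      have hpx := hP0 t ht
      have hAx := hD1 i t ht
      have hBx := hD1 j t ht
      have hEx : 0 ≤ Ex := hD2 i j t ht
      have hbr := branden hps hpm i j x
      have hqxe : eval x q = eval x (pderiv i p) + eval x (pderiv j p) := by
        rw [hq, map_add]
      have hmono := hPhiMono t ht
      have hδx : (δi + δj) * eval x q ≤ eval x p := by
        nlinarith [mul_le_mul_of_nonneg_right hδQa hqx.le, hmono, hu]
      nlinarith [mul_le_mul_of_nonneg_right hδx hEx, hbr, hEx, hAx, hBx, hqx, hpx,
        hqxe, sq_nonneg (eval x (pderiv i p) - eval x (pderiv j p))]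
  refine ⟨fun t ht => (hW t ht).ne', ?_, ?_⟩
  · have h0 := hW 0 (fun w => le_refl 0)
    simpa using h0
  · -- goal 3 : the potential does not increase
    have hQb : 0 < eval (shiftPt a i j δi δj) q := by
      simpa using hW 0 (fun w => le_refl 0)
    rw [div_le_div_iff₀ hQb hpa]
    -- evaluation of a multiaffine polynomial at the shifted point
    have hshift : ∀ r : MvPolynomial (Fin n) ℝ, (∀ m ∈ r.support, ∀ u, m u ≤ 1) →
        eval (shiftPt a i j δi δj) r = eval a r - δi * eval a (pderiv i r)
          - δj * eval a (pderiv j r) + δi * δj * eval a (pderiv i (pderiv j r)) := by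
      intro r hr
      have hrearr : shiftPt a i j δi δj
          = (a + (-δi) • (Pi.single i 1 : Fin n → ℝ))
              + (-δj) • (Pi.single j 1 : Fin n → ℝ) := by
        funext w
        simp [shiftPt, sub_eq_add_neg, neg_smul]
        try ring
      rw [hrearr, eval_add_smul_single r j (fun m hm => hr m hm j),
        eval_add_smul_single r i (fun m hm => hr m hm i),
        eval_add_smul_single (pderiv j r) i
          (fun m hm => pderiv_support_le r j hr m hm i)]
      ring
    have hD1a : ∀ v, 0 ≤ eval a (pderiv v p) := fun v => by
      simpa using hD1 v 0 (fun w => le_refl 0)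
    have hD2a : ∀ w v, 0 ≤ eval a (pderiv w (pderiv v p)) := fun w v => by
      simpa using hD2 w v 0 (fun w => le_refl 0)
    have hD3a : ∀ w' w v, 0 ≤ eval a (pderiv w' (pderiv w (pderiv v p))) := fun w' w v => by
      simpa using hD3 w' w v 0 (fun w => le_refl 0)
    rcases eq_or_ne i j with rfl | hij'
    · -- case i = j
      rcases eq_or_ne k i with rfl | hki
      · -- k = i = j
        have hk0 : pderiv k q = 0 := by
          rw [hq, map_add, pderiv_pderiv_self p k (fun m hm => hpm m hm k)]
          simp
        rw [hk0]
        simp only [map_zero, zero_mul]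
        exact mul_nonneg (hD1a k) hQb.le
      · -- k ≠ i = j
        have hii0 : pderiv i (pderiv i p) = 0 :=
          pderiv_pderiv_self p i (fun m hm => hpm m hm i)
        have hiq : pderiv i q = 0 := by rw [hq, map_add, hii0]; simp
        have hQbv : eval (shiftPt a i i δi δj) q = eval a q := by
          rw [hshift q hqm, hiq]
          simp
        have hir : pderiv i (pderiv k (pderiv i p)) = 0 := by
          rw [pderiv_comm' p k i]
          exact pderiv_pderiv_self (pderiv k p) i (fun m hm => hpmv k m hm i)
        have hkq : pderiv k q = pderiv k (pderiv i p) + pderiv k (pderiv i p) := by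
          rw [hq, map_add]
        have hikq : pderiv i (pderiv k q) = 0 := by
          rw [hkq, map_add, hir]; simp
        have hbk : eval (shiftPt a i i δi δj) (pderiv k q)
            = 2 * eval a (pderiv k (pderiv i p)) := by
          rw [hshift (pderiv k q) (pderiv_support_le q k hqm)]
          rw [show pderiv i (pderiv i (pderiv k q)) = 0 by rw [hikq]; simp]
          rw [show pderiv i (pderiv k q) = 0 from hikq]
          rw [hkq, map_add]
          simp only [map_zero]
          ring
        rw [hbk, hQbv]
        have hbr := branden hps hpm k i a
        have hqa2 : eval a q = eval a (pderiv i p) + eval a (pderiv i p) := by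
          rw [hq, map_add]
        rw [hqa2]
        nlinarith [hbr]
    · -- case i ≠ j
      have hii0 : pderiv i (pderiv i p) = 0 :=
        pderiv_pderiv_self p i (fun m hm => hpm m hm i)
      have hjj0 : pderiv j (pderiv j p) = 0 :=
        pderiv_pderiv_self p j (fun m hm => hpm m hm j)
      have hiq : pderiv i q = pderiv i (pderiv j p) := by
        rw [hq, map_add, hii0]; simp
      have hjq : pderiv j q = pderiv i (pderiv j p) := by
        rw [hq, map_add, hjj0, pderiv_comm' p j i]; simp
      set A := eval a (pderiv i p) with hA
      set B := eval a (pderiv j p) with hB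
      set CC := eval a (pderiv k p) with hCC
      set E := eval a (pderiv i (pderiv j p)) with hE
      have hqae : eval a q = A + B := by rw [hq, map_add]
      have hAn : 0 ≤ A := hD1a i
      have hBn : 0 ≤ B := hD1a j
      have hCn : 0 ≤ CC := hD1a k
      have hEn : 0 ≤ E := hD2a i j
      have huAB : (0:ℝ) < A + B := by rw [← hqae]; exact hu
      have hδAB : (δi + δj) * (A + B) ≤ eval a p := by rw [← hqae]; exact hδQa
      have hQbE : eval (shiftPt a i j δi δj) q = (A + B) - (δi + δj) * E := by
        rw [hshift q hqm, hijq, hiq, hjq, hqae]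
        simp only [map_zero, mul_zero, add_zero]
        rw [← hE]
        ring
      rcases eq_or_ne k i with rfl | hki
      · -- k = i
        have hkq : pderiv k q = pderiv k (pderiv j p) := hiq
        have hikq : pderiv k (pderiv k (pderiv j p)) = 0 :=
          pderiv_pderiv_self (pderiv j p) k (fun m hm => hpmv j m hm k)
        have hjkq : pderiv j (pderiv k (pderiv j p)) = 0 := by
          rw [pderiv_comm' (pderiv j p) j k, hjj0]
          simp
        have hbk : eval (shiftPt a k j δi δj) (pderiv k q) = E := by
          rw [hkq, hshift (pderiv k (pderiv j p))
            (pderiv_support_le (pderiv j p) k (hpmv j)), hikq, hjkq]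
          simp
          rfl
        rw [hbk, hQbE]
        have hbr := branden hps hpm k j a
        nlinarith [hbr, mul_le_mul_of_nonneg_right hδAB hEn,
          mul_le_mul_of_nonneg_left (le_trans (mul_le_mul_of_nonneg_right hδAB hEn)
            (le_trans (le_of_eq rfl) hbr)) hAn,
          mul_le_mul_of_nonneg_left hbr huAB.le,
          mul_nonneg (mul_nonneg hAn hAn) hAn, huAB, hpa]
      rcases eq_or_ne k j with rfl | hkj
      · -- k = j
        have hkq : pderiv k q = pderiv i (pderiv k p) := by
          rw [hjq, pderiv_comm' p i k]
        have hikq : pderiv i (pderiv i (pderiv k p)) = 0 :=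
          pderiv_pderiv_self (pderiv k p) i (fun m hm => hpmv k m hm i)
        have hjkq : pderiv k (pderiv i (pderiv k p)) = 0 := by
          rw [pderiv_comm' (pderiv k p) k i]
          rw [show pderiv k (pderiv k p) = 0 from
            pderiv_pderiv_self p k (fun m hm => hpm m hm k)]
          simp
        have hbk : eval (shiftPt a i k δi δj) (pderiv k q) = E := by
          rw [hkq, hshift (pderiv i (pderiv k p))
            (pderiv_support_le (pderiv k p) i (hpmv k)), hikq, hjkq]
          simp only [map_zero, mul_zero, sub_zero, add_zero, ← hE]
        rw [hbk, hQbE]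
        have hbr := branden hps hpm i k a
        nlinarith [hbr, mul_le_mul_of_nonneg_right hδAB hEn,
          mul_le_mul_of_nonneg_left hbr huAB.le,
          mul_nonneg (mul_nonneg hBn hBn) hBn, huAB, hpa]
      · -- k ∉ {i, j} : the main case
        set F := eval a (pderiv k (pderiv i p)) with hF
        set G := eval a (pderiv k (pderiv j p)) with hG
        set T : MvPolynomial (Fin n) ℝ := pderiv i (pderiv j (pderiv k p)) with hT
        set H := eval a T with hH
        have hFn : 0 ≤ F := hD2a k i
        have hGn : 0 ≤ G := hD2a k j
        have hHn : 0 ≤ H := hD3a i j k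
        -- polynomial identities
        have hkki : pderiv i (pderiv k (pderiv i p)) = 0 := by
          rw [pderiv_comm' p k i]
          exact pderiv_pderiv_self (pderiv k p) i (fun m hm => hpmv k m hm i)
        have hkkj : pderiv j (pderiv k (pderiv j p)) = 0 := by
          rw [pderiv_comm' p k j]
          exact pderiv_pderiv_self (pderiv k p) j (fun m hm => hpmv k m hm j)
        have hTi : pderiv i (pderiv k (pderiv j p)) = T := by
          rw [pderiv_comm' p k j, hT]
        have hTj : pderiv j (pderiv k (pderiv i p)) = T := by
          rw [pderiv_comm' p k i, pderiv_comm' (pderiv k p) j i, hT]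
        have hkq : pderiv k q = pderiv k (pderiv i p) + pderiv k (pderiv j p) := by
          rw [hq, map_add]
        have hikq : pderiv i (pderiv k q) = T := by
          rw [hkq, map_add, hkki, hTi, zero_add]
        have hjkq : pderiv j (pderiv k q) = T := by
          rw [hkq, map_add, hkkj, hTj, add_zero]
        have hiT : pderiv i T = 0 := by
          rw [hT]
          exact pderiv_pderiv_self (pderiv j (pderiv k p)) i
            (fun m hm => pderiv_support_le (pderiv k p) j (hpmv k) m hm i)
        have hbk : eval (shiftPt a i j δi δj) (pderiv k q)
            = F + G - (δi + δj) * H := by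
          rw [hshift (pderiv k q) (pderiv_support_le q k hqm), hikq, hjkq, hiT]
          rw [hkq, map_add]
          simp only [map_zero, mul_zero, add_zero]
          rw [← hF, ← hG, ← hH]
          ring
        rw [hbk, hQbE]
        -- Brändén inequalities at a
        have hbrF := branden hps hpm k i a
        have hbrG := branden hps hpm k j a
        -- Brändén inequalities at the shifted points
        set w : ℝ := -(eval a p / (A + B)) with hw
        have key1 := branden hps hpm k i (a + w • (Pi.single j 1 : Fin n → ℝ))
        have key2 := branden hps hpm k j (a + w • (Pi.single i 1 : Fin n → ℝ))
        rw [eval_add_smul_single p j (fun m hm => hpm m hm j),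
          eval_add_smul_single (pderiv k (pderiv i p)) j
            (fun m hm => pderiv_support_le (pderiv i p) k (hpmv i) m hm j),
          eval_add_smul_single (pderiv k p) j (fun m hm => hpmv k m hm j),
          eval_add_smul_single (pderiv i p) j (fun m hm => hpmv i m hm j),
          hTj, show pderiv j (pderiv k p) = pderiv k (pderiv j p) from pderiv_comm' p j k,
          show pderiv j (pderiv i p) = pderiv i (pderiv j p) from pderiv_comm' p j i,
          ← hA, ← hB, ← hCC, ← hE, ← hF, ← hG, ← hH] at key1
        rw [eval_add_smul_single p i (fun m hm => hpm m hm i),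
          eval_add_smul_single (pderiv k (pderiv j p)) i
            (fun m hm => pderiv_support_le (pderiv j p) k (hpmv j) m hm i),
          eval_add_smul_single (pderiv k p) i (fun m hm => hpmv k m hm i),
          eval_add_smul_single (pderiv j p) i (fun m hm => hpmv j m hm i),
          hTi, show pderiv i (pderiv k p) = pderiv k (pderiv i p) from pderiv_comm' p i k,
          ← hA, ← hB, ← hCC, ← hE, ← hF, ← hG, ← hH] at key2
        exact master_ineq (eval a p) A B CC E F G H δi δj w hpa huAB hEn hδi hδj
          hδAB hbrF hbrG hw key1 key2
end

section
/- Let p ∈ ℝ[z_1,…,z_n] be a polynomial of degree at most k in each variable and let q ∈ ℝ[z_1,…,z_n] be multiaffine. Let Pol(p) be the polarization of p in the nk variables z_{i,j} (i ∈ [n], j ∈ [k]), and define q̃(z_{1,1},…,z_{n,k}) := q(z_{1,1}+⋯+z_{1,k}, …, z_{n,1}+⋯+z_{n,k}). Then evaluating the polynomial q̃(∂)Pol(p) at z_{i,j} = z_i for all i ∈ [n], j ∈ [k] yields exactly the polynomial (q(∂)p)(z_1,…,z_n); this is the identity Sym(q̃(∂)Pol(p)) = q(∂)p. -/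
/-- the polarization of `p ∈ ℝ[z₁,…,zₙ]` (degree at most `k` in each variable) in the
`nk` variables `z_{i,j}`:  each `zᵢ^m` is replaced by `e_m(z_{i,1},…,z_{i,k})/(k choose m)`. -/
noncomputable def polarizeMv {n : ℕ} (k : ℕ) (p : MvPolynomial (Fin n) ℝ) :
    MvPolynomial (Fin n × Fin k) ℝ :=
  ∑ m ∈ p.support,
    MvPolynomial.C (MvPolynomial.coeff m p) *
      ∏ i : Fin n,
        MvPolynomial.C ((k.choose (m i) : ℝ))⁻¹ *
          MvPolynomial.rename (fun j => (i, j)) (MvPolynomial.esymm (Fin k) ℝ (m i))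

/-- `q̃(z_{1,1},…,z_{n,k}) = q(z_{1,1}+⋯+z_{1,k},…,z_{n,1}+⋯+z_{n,k})` -/
noncomputable def tildeQ {n : ℕ} (k : ℕ) (q : MvPolynomial (Fin n) ℝ) :
    MvPolynomial (Fin n × Fin k) ℝ :=
  MvPolynomial.aeval (fun i : Fin n => ∑ j : Fin k, MvPolynomial.X (i, j)) q


open MvPolynomial Finset

variable {σ : Type*} [Fintype σ]

theorem pderiv_comm (i j : σ) (p : MvPolynomial σ ℝ) :
    pderiv i (pderiv j p) = pderiv j (pderiv i p) := by
  rcases eq_or_ne i j with rfl | hij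
  · rfl
  · induction p using MvPolynomial.induction_on' with
    | monomial s a =>
      simp only [pderiv_monomial]
      rw [tsub_tsub, tsub_tsub, add_comm]
      congr 1
      simp [Finsupp.tsub_apply, Finsupp.single_apply, hij, hij.symm]
      ring
    | add p q hp hq => simp [hp, hq]

theorem pderiv_iter_comm (i j : σ) (s t : ℕ) (p : MvPolynomial σ ℝ) :
    (fun h => pderiv i h)^[s] ((fun h => pderiv j h)^[t] p)
      = (fun h => pderiv j h)^[t] ((fun h => pderiv i h)^[s] p) :=
  Function.Commute.iterate_iterate (fun p => pderiv_comm i j p) s t p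

theorem iter_pderiv_add (i : σ) (t : ℕ) (p q : MvPolynomial σ ℝ) :
    (fun h => pderiv i h)^[t] (p + q)
      = (fun h => pderiv i h)^[t] p + (fun h => pderiv i h)^[t] q := by
  induction t generalizing p q with
  | zero => rfl
  | succ t ih => simp [Function.iterate_succ_apply, map_add, ih]

theorem iter_pderiv_smul (i : σ) (t : ℕ) (c : ℝ) (p : MvPolynomial σ ℝ) :
    (fun h => pderiv i h)^[t] (c • p) = c • (fun h => pderiv i h)^[t] p := by
  induction t generalizing p with
  | zero => rfl
  | succ t ih => simp [Function.iterate_succ_apply, map_smul, ih]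

theorem applyMon_add_right (m : σ →₀ ℕ) (p q : MvPolynomial σ ℝ) :
    applyMon m (p + q) = applyMon m p + applyMon m q := by
  unfold applyMon
  induction (Finset.univ.toList (α := σ)) with
  | nil => rfl
  | cons x l ih => simp [List.foldr_cons, ih, iter_pderiv_add]

theorem applyMon_smul_right (m : σ →₀ ℕ) (c : ℝ) (p : MvPolynomial σ ℝ) :
    applyMon m (c • p) = c • applyMon m p := by
  unfold applyMon
  induction (Finset.univ.toList (α := σ)) with
  | nil => rfl
  | cons x l ih => simp [List.foldr_cons, ih, iter_pderiv_smul]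

theorem applyMon_zero (p : MvPolynomial σ ℝ) : applyMon (0 : σ →₀ ℕ) p = p := by
  unfold applyMon
  induction (Finset.univ.toList (α := σ)) with
  | nil => rfl
  | cons x l ih => simp [List.foldr_cons, ih]

set_option linter.unusedSectionVars false

theorem foldr_iter_comm (m : σ →₀ ℕ) (i : σ) (t : ℕ) (l : List σ) (p : MvPolynomial σ ℝ) :
    (fun h => pderiv i h)^[t]
        (l.foldr (fun x g => (fun h => pderiv x h)^[m x] g) p)
      = l.foldr (fun x g => (fun h => pderiv x h)^[m x] g)
          ((fun h => pderiv i h)^[t] p) := by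
  induction l generalizing p with
  | nil => rfl
  | cons x l ih =>
    simp only [List.foldr_cons]
    rw [pderiv_iter_comm, ih]

theorem applyMon_add_mon (m m' : σ →₀ ℕ) (p : MvPolynomial σ ℝ) :
    applyMon (m + m') p = applyMon m (applyMon m' p) := by
  unfold applyMon
  induction (Finset.univ.toList (α := σ)) generalizing p with
  | nil => rfl
  | cons x l ih =>
    simp only [List.foldr_cons]
    rw [ih p, Finsupp.add_apply, Function.iterate_add_apply, foldr_iter_comm m x (m' x) l,
      foldr_iter_comm m' x (m' x) l, foldr_iter_comm m x (m x) l]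

theorem foldr_of_zero (m : σ →₀ ℕ) (l : List σ) (h : ∀ x ∈ l, m x = 0)
    (p : MvPolynomial σ ℝ) :
    l.foldr (fun x g => (fun h => pderiv x h)^[m x] g) p = p := by
  induction l with
  | nil => rfl
  | cons x l ih =>
    simp only [List.foldr_cons, h x List.mem_cons_self,
      ih (fun y hy => h y (List.mem_cons_of_mem x hy)), Function.iterate_zero_apply]

theorem foldr_single (i : σ) (p : MvPolynomial σ ℝ) : ∀ l : List σ, l.Nodup → i ∈ l →
    l.foldr (fun x g => (fun h => pderiv x h)^[(Finsupp.single i 1) x] g) p = pderiv i p := by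
  intro l
  induction l with
  | nil => intro _ h; simp at h
  | cons x l ih =>
    intro hnd hmem
    rcases List.mem_cons.1 hmem with rfl | hil
    · have hz : ∀ y ∈ l, (Finsupp.single i 1) y = 0 := by
        intro y hy
        have : y ≠ i := by rintro rfl; exact (List.nodup_cons.1 hnd).1 hy
        simp [Finsupp.single_apply, this.symm]
      simp only [List.foldr_cons, Finsupp.single_eq_same, Function.iterate_one]
      rw [foldr_of_zero _ _ hz]
    · have hx : (Finsupp.single i 1) x = 0 := by
        have : x ≠ i := by rintro rfl; exact (List.nodup_cons.1 hnd).1 hil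
        simp [Finsupp.single_apply, this.symm]
      simp only [List.foldr_cons, hx, Function.iterate_zero_apply]
      exact ih (List.nodup_cons.1 hnd).2 hil

theorem applyMon_single (i : σ) (p : MvPolynomial σ ℝ) :
    applyMon (Finsupp.single i 1) p = pderiv i p := by
  unfold applyMon
  exact foldr_single i p _ (Finset.univ.nodup_toList) (by simp [Finset.mem_toList])

theorem diffOp_eq_sum (q p : MvPolynomial σ ℝ) :
    diffOp q p = Finsupp.sum (AddMonoidAlgebra.coeff q) fun m c => c • applyMon m p := rfl

theorem diffOp_add_left (q q' p : MvPolynomial σ ℝ) :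
    diffOp (q + q') p = diffOp q p + diffOp q' p := by
  simp only [diffOp_eq_sum, AddMonoidAlgebra.coeff_add]
  exact Finsupp.sum_add_index' (fun m => zero_smul ℝ _)
    (fun m c c' => add_smul c c' _)

theorem diffOp_monomial (m : σ →₀ ℕ) (c : ℝ) (p : MvPolynomial σ ℝ) :
    diffOp (MvPolynomial.monomial m c) p = c • applyMon m p := by
  classical
  unfold diffOp
  rcases eq_or_ne c 0 with rfl | hc
  · simp [support_monomial]
  · rw [support_monomial, if_neg hc, Finset.sum_singleton, coeff_monomial, if_pos rfl]

theorem diffOp_one (p : MvPolynomial σ ℝ) : diffOp 1 p = p := by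
  have : (1 : MvPolynomial σ ℝ) = MvPolynomial.monomial 0 1 := by
    simp [MvPolynomial.monomial_zero']
  rw [this, diffOp_monomial, applyMon_zero, one_smul]

theorem diffOp_C (c : ℝ) (p : MvPolynomial σ ℝ) :
    diffOp (MvPolynomial.C c) p = c • p := by
  rw [MvPolynomial.C_apply, diffOp_monomial, applyMon_zero]

theorem diffOp_X (i : σ) (p : MvPolynomial σ ℝ) :
    diffOp (MvPolynomial.X i) p = pderiv i p := by
  rw [MvPolynomial.X, diffOp_monomial, applyMon_single, one_smul]

theorem diffOp_add_right (q p p' : MvPolynomial σ ℝ) :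
    diffOp q (p + p') = diffOp q p + diffOp q p' := by
  unfold diffOp
  rw [← Finset.sum_add_distrib]
  refine Finset.sum_congr rfl fun m _ => ?_
  rw [applyMon_add_right, smul_add]

theorem diffOp_smul_right (c : ℝ) (q p : MvPolynomial σ ℝ) :
    diffOp q (c • p) = c • diffOp q p := by
  unfold diffOp
  rw [Finset.smul_sum]
  refine Finset.sum_congr rfl fun m _ => ?_
  rw [applyMon_smul_right, smul_comm]

theorem diffOp_zero_right (q : MvPolynomial σ ℝ) : diffOp q 0 = 0 := by
  have := diffOp_smul_right (0 : ℝ) q 0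
  simpa using this

theorem diffOp_zero_left (p : MvPolynomial σ ℝ) : diffOp 0 p = 0 := by
  unfold diffOp; simp

theorem diffOp_mul (q r p : MvPolynomial σ ℝ) :
    diffOp (q * r) p = diffOp q (diffOp r p) := by
  induction q using MvPolynomial.induction_on' with
  | add q q' hq hq' => simp [add_mul, diffOp_add_left, hq, hq']
  | monomial m c =>
    induction r using MvPolynomial.induction_on' with
    | add r r' hr hr' => simp [mul_add, diffOp_add_left, diffOp_add_right, hr, hr']
    | monomial m' c' =>
      rw [MvPolynomial.monomial_mul, diffOp_monomial, diffOp_monomial, diffOp_monomial,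
        applyMon_add_mon, applyMon_smul_right, mul_smul]

theorem diffOp_smul_left (c : ℝ) (q p : MvPolynomial σ ℝ) :
    diffOp (c • q) p = c • diffOp q p := by
  rw [MvPolynomial.smul_eq_C_mul, diffOp_mul, diffOp_C]

theorem indicator_apply {τ : Type*} [DecidableEq τ] (T : Finset τ) (j : τ) :
    (∑ x ∈ T, Finsupp.single x (1 : ℕ)) j = if j ∈ T then 1 else 0 := by
  rw [Finset.sum_apply']
  simp only [Finsupp.single_apply]
  exact Finset.sum_ite_eq' T j fun _ => 1

theorem sum_pderiv_esymm (k s : ℕ) :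
    ∑ j : Fin k, pderiv j (esymm (Fin k) ℝ (s + 1))
      = ((k - s : ℕ) : ℝ) • esymm (Fin k) ℝ s := by
  classical
  rw [esymm_eq_sum_monomial, esymm_eq_sum_monomial]
  have step1 : ∀ (j : Fin k) (T : Finset (Fin k)),
      pderiv j (monomial (∑ x ∈ T, Finsupp.single x 1) (1 : ℝ))
        = if j ∈ T then
            monomial ((∑ x ∈ T, Finsupp.single x 1) - Finsupp.single j 1) 1 else 0 := by
    intro j T
    rw [pderiv_monomial, indicator_apply]
    split_ifs with h
    · norm_num
    · norm_num
  calc ∑ j : Fin k, pderiv j (∑ T ∈ Finset.powersetCard (s+1) Finset.univ,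
        monomial (∑ x ∈ T, Finsupp.single x 1) (1 : ℝ))
      = ∑ j : Fin k, ∑ T ∈ Finset.powersetCard (s+1) Finset.univ,
          (if j ∈ T then
            monomial ((∑ x ∈ T, Finsupp.single x 1) - Finsupp.single j 1) (1:ℝ) else 0) := by
        refine Finset.sum_congr rfl fun j _ => ?_
        rw [map_sum]
        exact Finset.sum_congr rfl fun T _ => step1 j T
    _ = ∑ T ∈ Finset.powersetCard (s+1) Finset.univ, ∑ j ∈ T,
          monomial ((∑ x ∈ T, Finsupp.single x 1) - Finsupp.single j 1) (1:ℝ) := by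
        rw [Finset.sum_comm]
        refine Finset.sum_congr rfl fun T _ => ?_
        rw [Finset.sum_ite_mem, Finset.univ_inter]
    _ = ∑ T ∈ Finset.powersetCard (s+1) Finset.univ, ∑ j ∈ T,
          monomial (∑ x ∈ T.erase j, Finsupp.single x 1) (1:ℝ) := by
        refine Finset.sum_congr rfl fun T _ => Finset.sum_congr rfl fun j hj => ?_
        congr 1
        rw [← Finset.add_sum_erase T _ hj, add_tsub_cancel_left]
    _ = ∑ U ∈ Finset.powersetCard s Finset.univ, ∑ j ∈ Finset.univ \ U,
          monomial (∑ x ∈ U, Finsupp.single x 1) (1:ℝ) := by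
        rw [Finset.sum_sigma', Finset.sum_sigma']
        refine Finset.sum_nbij' (fun a => ⟨a.1.erase a.2, a.2⟩)
          (fun a => ⟨insert a.2 a.1, a.2⟩) ?_ ?_ ?_ ?_ ?_
        · rintro ⟨T, j⟩ h
          simp only [Finset.mem_sigma, Finset.mem_powersetCard_univ] at h ⊢
          refine ⟨?_, ?_⟩
          · rw [Finset.card_erase_of_mem h.2, h.1]; rfl
          · simp [Finset.mem_sdiff]
        · rintro ⟨U, j⟩ h
          simp only [Finset.mem_sigma, Finset.mem_powersetCard_univ, Finset.mem_sdiff] at h ⊢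
          refine ⟨?_, Finset.mem_insert_self _ _⟩
          rw [Finset.card_insert_of_notMem h.2.2, h.1]
        · rintro ⟨T, j⟩ h
          simp only [Finset.mem_sigma, Finset.mem_powersetCard_univ] at h
          simp [Finset.insert_erase h.2]
        · rintro ⟨U, j⟩ h
          simp only [Finset.mem_sigma, Finset.mem_powersetCard_univ, Finset.mem_sdiff] at h
          simp [Finset.erase_insert h.2.2]
        · rintro ⟨T, j⟩ h
          rfl
    _ = ((k - s : ℕ) : ℝ) • ∑ U ∈ Finset.powersetCard s Finset.univ,
          monomial (∑ x ∈ U, Finsupp.single x 1) (1:ℝ) := by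
        rw [Finset.smul_sum]
        refine Finset.sum_congr rfl fun U hU => ?_
        rw [Finset.sum_const, Finset.card_sdiff_of_subset (Finset.subset_univ U),
          Finset.card_univ, Fintype.card_fin,
          (Finset.mem_powersetCard_univ.1 hU),
          ← Nat.cast_smul_eq_nsmul ℝ]

theorem aeval_const_esymm {A : Type*} [CommRing A] [Algebra ℝ A] (k t : ℕ) (y : A) :
    MvPolynomial.aeval (fun _ : Fin k => y) (esymm (Fin k) ℝ t)
      = (k.choose t : ℝ) • y ^ t := by
  rw [MvPolynomial.esymm, map_sum]
  have : ∀ T ∈ Finset.powersetCard t (Finset.univ : Finset (Fin k)),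
      MvPolynomial.aeval (fun _ : Fin k => y) (∏ i ∈ T, (X i : MvPolynomial (Fin k) ℝ)) = y ^ t := by
    intro T hT
    rw [map_prod (MvPolynomial.aeval (fun _ : Fin k => y)) (fun i => (X i : MvPolynomial (Fin k) ℝ)) T]
    simp only [aeval_X]
    rw [Finset.prod_const, Finset.mem_powersetCard_univ.1 hT]
  rw [Finset.sum_congr rfl this, Finset.sum_const, Finset.card_powersetCard,
    Finset.card_univ, Fintype.card_fin, ← Nat.cast_smul_eq_nsmul ℝ]

theorem pderiv_rename_not_mem {σ' τ : Type*} (f : σ' → τ) (x : τ)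
    (hx : x ∉ Set.range f) (r : MvPolynomial σ' ℝ) :
    pderiv x (rename f r) = 0 := by
  induction r using MvPolynomial.induction_on with
  | C a => simp [pderiv_C]
  | add p q hp hq => simp [map_add, hp, hq]
  | mul_X p i hp =>
    rw [map_mul, rename_X, pderiv_mul, hp, pderiv_X_of_ne, zero_mul, mul_zero, add_zero]
    exact fun h => hx ⟨i, h⟩

/-- the per-block factor of the polarization -/
noncomputable def Fblock (n k : ℕ) (i : Fin n) (t : ℕ) : MvPolynomial (Fin n × Fin k) ℝ :=
  MvPolynomial.C ((k.choose t : ℝ))⁻¹ *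
    MvPolynomial.rename (fun j => (i, j)) (MvPolynomial.esymm (Fin k) ℝ t)

theorem pderiv_Fblock_ne {n k : ℕ} {i i' : Fin n} (j : Fin k) (hne : i ≠ i') (t : ℕ) :
    pderiv (i, j) (Fblock n k i' t) = 0 := by
  rw [Fblock, pderiv_C_mul, pderiv_rename_not_mem, mul_zero]
  rintro ⟨j', hj'⟩
  exact hne (congrArg Prod.fst hj').symm

theorem sum_pderiv_Fblock {n k : ℕ} (i : Fin n) (t : ℕ) (ht : t ≤ k) :
    ∑ j : Fin k, pderiv (i, j) (Fblock n k i t) = (t : ℝ) • Fblock n k i (t - 1) := by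
  cases t with
  | zero =>
    simp only [Fblock, esymm_zero, map_one, mul_one, Nat.cast_zero, zero_smul]
    simp [pderiv_C]
  | succ s =>
    have hinj : Function.Injective (fun j : Fin k => (i, j)) := by
      intro a b h; simpa using congrArg Prod.snd h
    have key : ∀ j : Fin k, pderiv (i, j) (Fblock n k i (s+1))
        = C ((k.choose (s+1) : ℝ))⁻¹ *
            rename (fun j : Fin k => (i, j)) (pderiv j (esymm (Fin k) ℝ (s+1))) := by
      intro j
      rw [Fblock, pderiv_C_mul, pderiv_rename hinj]
    rw [Finset.sum_congr rfl fun j _ => key j, ← Finset.mul_sum, ← map_sum,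
      sum_pderiv_esymm, map_smul]
    rw [Nat.add_sub_cancel, Fblock]
    rw [smul_eq_C_mul, smul_eq_C_mul, ← mul_assoc, ← mul_assoc, ← C_mul, ← C_mul]
    congr 2
    have h1 : (k.choose s : ℝ) ≠ 0 := by
      exact_mod_cast (Nat.choose_pos (le_trans (Nat.le_succ s) ht)).ne'
    have h2 : (k.choose (s+1) : ℝ) ≠ 0 := by
      exact_mod_cast (Nat.choose_pos ht).ne'
    have hid := Nat.choose_succ_right_eq k s
    have hid' : (k.choose (s+1) : ℝ) * (s+1) = (k.choose s : ℝ) * ((k:ℝ) - s) := by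
      have hs : s ≤ k := le_trans (Nat.le_succ s) ht
      have := congrArg (fun x : ℕ => (x : ℝ)) hid
      push_cast [Nat.cast_sub hs] at this
      exact this
    have hcast : ((k - s : ℕ) : ℝ) = (k : ℝ) - s := by
      rw [Nat.cast_sub (le_trans (Nat.le_succ s) ht)]
    rw [hcast]
    field_simp
    push_cast
    linarith [hid']

theorem pderiv_prod_zero {σ' : Type*} (x : σ') {ι : Type*} (s : Finset ι)
    (h : ι → MvPolynomial σ' ℝ) (hz : ∀ i ∈ s, pderiv x (h i) = 0) :
    pderiv x (∏ i ∈ s, h i) = 0 := by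
  classical
  induction s using Finset.induction_on with
  | empty => simp [pderiv_one]
  | @insert a s' hnotmem ih =>
    rw [Finset.prod_insert hnotmem, pderiv_mul, hz a (Finset.mem_insert_self a s'),
      ih (fun i hi => hz i (Finset.mem_insert_of_mem hi)), zero_mul, mul_zero, add_zero]

theorem sum_pderiv_prod_Fblock {n k : ℕ} (g : Fin n → ℕ) (i₀ : Fin n) (hg : g i₀ ≤ k) :
    ∑ j : Fin k, pderiv (i₀, j) (∏ i : Fin n, Fblock n k i (g i))
      = (g i₀ : ℝ) • ∏ i : Fin n, Fblock n k i (if i = i₀ then g i - 1 else g i) := by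
  classical
  have hsplit : (∏ i : Fin n, Fblock n k i (g i))
      = Fblock n k i₀ (g i₀) * ∏ i ∈ Finset.univ.erase i₀, Fblock n k i (g i) :=
    (Finset.mul_prod_erase Finset.univ _ (Finset.mem_univ i₀)).symm
  have hrest : ∀ j : Fin k,
      pderiv (i₀, j) (∏ i ∈ Finset.univ.erase i₀, Fblock n k i (g i)) = 0 := by
    intro j
    refine pderiv_prod_zero _ _ _ fun i hi => ?_
    exact pderiv_Fblock_ne j (fun h => (Finset.mem_erase.1 hi).1 h.symm) _
  calc ∑ j : Fin k, pderiv (i₀, j) (∏ i : Fin n, Fblock n k i (g i))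
      = ∑ j : Fin k, (pderiv (i₀, j) (Fblock n k i₀ (g i₀)) *
          ∏ i ∈ Finset.univ.erase i₀, Fblock n k i (g i)) := by
        refine Finset.sum_congr rfl fun j _ => ?_
        rw [hsplit, pderiv_mul, hrest j, mul_zero, add_zero]
    _ = (g i₀ : ℝ) • (Fblock n k i₀ (g i₀ - 1) *
          ∏ i ∈ Finset.univ.erase i₀, Fblock n k i (g i)) := by
        rw [← Finset.sum_mul, sum_pderiv_Fblock i₀ (g i₀) hg, smul_mul_assoc]
    _ = (g i₀ : ℝ) • ∏ i : Fin n, Fblock n k i (if i = i₀ then g i - 1 else g i) := by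
        congr 1
        rw [← Finset.mul_prod_erase Finset.univ _ (Finset.mem_univ i₀), if_pos rfl]
        congr 1
        refine Finset.prod_congr rfl fun i hi => ?_
        rw [if_neg (Finset.mem_erase.1 hi).1]

theorem aeval_sym_Fblock {n k : ℕ} (i : Fin n) (t : ℕ) (ht : t ≤ k) :
    MvPolynomial.aeval (fun ij : Fin n × Fin k => MvPolynomial.X ij.1)
        (Fblock n k i t) = (MvPolynomial.X i : MvPolynomial (Fin n) ℝ) ^ t := by
  rw [Fblock, map_mul, aeval_C, aeval_rename]
  have : ((fun ij : Fin n × Fin k => (MvPolynomial.X ij.1 : MvPolynomial (Fin n) ℝ))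
      ∘ fun j : Fin k => (i, j)) = fun _ : Fin k => MvPolynomial.X i := rfl
  rw [this, aeval_const_esymm, algebraMap_eq, smul_eq_C_mul, ← mul_assoc, ← C_mul,
    inv_mul_cancel₀, C_1, one_mul]
  exact_mod_cast (Nat.choose_pos ht).ne'

theorem diffOp_sum_left {ι : Type*} (s : Finset ι) (f : ι → MvPolynomial σ ℝ)
    (p : MvPolynomial σ ℝ) :
    diffOp (∑ i ∈ s, f i) p = ∑ i ∈ s, diffOp (f i) p :=
  map_sum (AddMonoidHom.mk' (fun q => diffOp q p) (fun q q' => diffOp_add_left q q' p)) f s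

theorem diffOp_sum_right {ι : Type*} (s : Finset ι) (q : MvPolynomial σ ℝ)
    (f : ι → MvPolynomial σ ℝ) :
    diffOp q (∑ i ∈ s, f i) = ∑ i ∈ s, diffOp q (f i) :=
  map_sum (AddMonoidHom.mk' (fun p => diffOp q p) (fun p p' => diffOp_add_right q p p')) f s

theorem polarizeMv_eq_sum {n : ℕ} (k : ℕ) (p : MvPolynomial (Fin n) ℝ) :
    polarizeMv k p = Finsupp.sum (AddMonoidAlgebra.coeff p) fun m c =>
      MvPolynomial.C c * ∏ i : Fin n, Fblock n k i (m i) := rfl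

theorem polarizeMv_add {n : ℕ} (k : ℕ) (p p' : MvPolynomial (Fin n) ℝ) :
    polarizeMv k (p + p') = polarizeMv k p + polarizeMv k p' := by
  simp only [polarizeMv_eq_sum, AddMonoidAlgebra.coeff_add]
  exact Finsupp.sum_add_index' (fun m => by rw [map_zero, zero_mul])
    (fun m c c' => by rw [map_add, add_mul])

theorem polarizeMv_sum {n : ℕ} (k : ℕ) {ι : Type*} (s : Finset ι)
    (f : ι → MvPolynomial (Fin n) ℝ) :
    polarizeMv k (∑ i ∈ s, f i) = ∑ i ∈ s, polarizeMv k (f i) :=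
  map_sum (AddMonoidHom.mk' (polarizeMv k) (fun p p' => polarizeMv_add k p p')) f s

theorem polarizeMv_monomial {n k : ℕ} (a : Fin n →₀ ℕ) (c : ℝ) :
    polarizeMv k (MvPolynomial.monomial a c) = c • ∏ i : Fin n, Fblock n k i (a i) := by
  classical
  rcases eq_or_ne c 0 with rfl | hc
  · rw [monomial_zero, zero_smul]
    rw [polarizeMv_eq_sum, AddMonoidAlgebra.coeff_zero, Finsupp.sum_zero_index]
  · rw [polarizeMv]
    rw [support_monomial, if_neg hc, Finset.sum_singleton, coeff_monomial, if_pos rfl,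
      smul_eq_C_mul]
    rfl

theorem tildeQ_monomial_one {n k : ℕ} (b : Fin n →₀ ℕ) (hb : ∀ i, b i ≤ 1) :
    tildeQ k (MvPolynomial.monomial b 1)
      = ∏ i ∈ b.support, ∑ j : Fin k, MvPolynomial.X (i, j) := by
  rw [tildeQ, aeval_monomial, map_one, one_mul]
  refine Finset.prod_congr rfl fun i hi => ?_
  have : b i = 1 := le_antisymm (hb i) (Nat.one_le_iff_ne_zero.2 (Finsupp.mem_support_iff.1 hi))
  simp only [this, pow_one]

theorem monomial_one_eq_prod {n : ℕ} (b : Fin n →₀ ℕ) (hb : ∀ i, b i ≤ 1) :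
    MvPolynomial.monomial b (1 : ℝ) = ∏ i ∈ b.support, MvPolynomial.X i := by
  rw [monomial_eq, C_1, one_mul, Finsupp.prod]
  refine Finset.prod_congr rfl fun i hi => ?_
  have : b i = 1 := le_antisymm (hb i) (Nat.one_le_iff_ne_zero.2 (Finsupp.mem_support_iff.1 hi))
  simp only [this, pow_one]

theorem monomial_one_eq_prod_pow {n : ℕ} (m : Fin n →₀ ℕ) :
    MvPolynomial.monomial m (1 : ℝ) = ∏ i : Fin n, MvPolynomial.X (R := ℝ) i ^ m i := by
  rw [monomial_eq, C_1, one_mul]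
  exact Finsupp.prod_fintype m _ fun i => pow_zero _

/-- LemA: applying the polarized operator to the product of blocks -/
theorem diffOp_prod_sumX {n k : ℕ} (a : Fin n →₀ ℕ) (ha : ∀ i, a i ≤ k)
    (S : Finset (Fin n)) :
    diffOp (∏ i ∈ S, ∑ j : Fin k, MvPolynomial.X (i, j))
        (∏ i : Fin n, Fblock n k i (a i))
      = (∏ i ∈ S, (a i : ℝ)) •
          ∏ i : Fin n, Fblock n k i (a i - if i ∈ S then 1 else 0) := by
  classical
  induction S using Finset.induction_on with
  | empty =>
    simp [diffOp_one]
  | @insert i₀ S hi₀ ih =>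
    rw [Finset.prod_insert hi₀, diffOp_mul, ih, diffOp_smul_right, diffOp_sum_left]
    simp only [diffOp_X]
    set g : Fin n → ℕ := fun i => a i - if i ∈ S then 1 else 0 with hg
    have hgk : g i₀ ≤ k := le_trans (Nat.sub_le _ _) (ha i₀)
    rw [show (∏ i : Fin n, Fblock n k i (a i - if i ∈ S then 1 else 0))
        = ∏ i : Fin n, Fblock n k i (g i) from rfl]
    rw [sum_pderiv_prod_Fblock g i₀ hgk]
    have hgi₀ : g i₀ = a i₀ := by rw [hg]; simp [hi₀]
    rw [smul_smul, Finset.prod_insert hi₀, hgi₀, mul_comm ((a i₀ : ℝ))]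
    refine congrArg (((∏ i ∈ S, (a i : ℝ)) * (a i₀ : ℝ)) • ·) ?_
    refine Finset.prod_congr rfl fun i _ => ?_
    congr 1
    by_cases h : i = i₀
    · subst h
      simp [hgi₀]
    · rw [if_neg h, hg]
      simp only []
      by_cases hiS : i ∈ S
      · rw [if_pos hiS, if_pos (Finset.mem_insert_of_mem hiS)]
      · rw [if_neg hiS, if_neg (by simp [h, hiS]), Nat.sub_zero]

/-- LemB: applying a squarefree derivative monomial to a monomial -/
theorem diffOp_prod_X {n : ℕ} (S : Finset (Fin n)) (a : Fin n →₀ ℕ) :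
    diffOp (∏ i ∈ S, MvPolynomial.X i) (MvPolynomial.monomial a (1:ℝ))
      = (∏ i ∈ S, (a i : ℝ)) •
          MvPolynomial.monomial (a - ∑ i ∈ S, Finsupp.single i 1) 1 := by
  classical
  induction S using Finset.induction_on with
  | empty =>
    simp only [Finset.prod_empty, diffOp_one, Finset.sum_empty, tsub_zero, one_smul]
  | @insert i₀ S hi₀ ih =>
    rw [Finset.prod_insert hi₀, diffOp_mul, ih, diffOp_X, Derivation.map_smul, pderiv_monomial]
    have happ : ((a - ∑ i ∈ S, Finsupp.single i 1 : Fin n →₀ ℕ)) i₀ = a i₀ := by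
      rw [Finsupp.tsub_apply, indicator_apply, if_neg hi₀, Nat.sub_zero]
    rw [happ, one_mul]
    have hmono : MvPolynomial.monomial
        ((a - ∑ i ∈ S, Finsupp.single i 1) - Finsupp.single i₀ 1) ((a i₀ : ℝ))
        = (a i₀ : ℝ) • MvPolynomial.monomial
            ((a - ∑ i ∈ S, Finsupp.single i 1) - Finsupp.single i₀ 1) (1:ℝ) := by
      rw [smul_monomial, smul_eq_mul, mul_one]
    rw [hmono, smul_smul, Finset.prod_insert hi₀, mul_comm ((a i₀ : ℝ))]
    congr 2
    rw [Finset.sum_insert hi₀, tsub_add_eq_tsub_tsub_swap]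

theorem tildeQ_sum {n k : ℕ} {ι : Type*} (s : Finset ι) (f : ι → MvPolynomial (Fin n) ℝ) :
    tildeQ k (∑ i ∈ s, f i) = ∑ i ∈ s, tildeQ k (f i) := by
  simp only [tildeQ]
  exact map_sum _ _ _

theorem tildeQ_smul {n k : ℕ} (c : ℝ) (q : MvPolynomial (Fin n) ℝ) :
    tildeQ k (c • q) = c • tildeQ k q := by
  simp only [tildeQ]
  exact map_smul _ _ _

theorem mono_case_one {n k : ℕ} (a b : Fin n →₀ ℕ) (ha : ∀ i, a i ≤ k)
    (hb : ∀ i, b i ≤ 1) :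
    MvPolynomial.aeval (fun ij : Fin n × Fin k => MvPolynomial.X ij.1)
        (diffOp (tildeQ k (MvPolynomial.monomial b 1))
          (∏ i : Fin n, Fblock n k i (a i)))
      = diffOp (MvPolynomial.monomial b 1) (MvPolynomial.monomial a 1) := by
  classical
  rw [tildeQ_monomial_one b hb, diffOp_prod_sumX a ha b.support, map_smul,
    map_prod, monomial_one_eq_prod b hb, diffOp_prod_X b.support a]
  have hfac : ∀ i : Fin n,
      MvPolynomial.aeval (fun ij : Fin n × Fin k => MvPolynomial.X ij.1)
        (Fblock n k i (a i - if i ∈ b.support then 1 else 0))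
      = (MvPolynomial.X i : MvPolynomial (Fin n) ℝ) ^
          (a i - if i ∈ b.support then 1 else 0) :=
    fun i => aeval_sym_Fblock i _ (le_trans (Nat.sub_le _ _) (ha i))
  rw [Finset.prod_congr rfl fun i _ => hfac i]
  congr 1
  rw [monomial_one_eq_prod_pow]
  refine Finset.prod_congr rfl fun i _ => ?_
  congr 1
  rw [Finsupp.tsub_apply, indicator_apply]

theorem mono_case {n k : ℕ} (a b : Fin n →₀ ℕ) (c : ℝ) (ha : ∀ i, a i ≤ k)
    (hb : ∀ i, b i ≤ 1) :
    MvPolynomial.aeval (fun ij : Fin n × Fin k => MvPolynomial.X ij.1)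
        (diffOp (tildeQ k (MvPolynomial.monomial b 1))
          (polarizeMv k (MvPolynomial.monomial a c)))
      = diffOp (MvPolynomial.monomial b 1) (MvPolynomial.monomial a c) := by
  have h1 : MvPolynomial.monomial a c = c • MvPolynomial.monomial a (1:ℝ) := by
    rw [smul_monomial, smul_eq_mul, mul_one]
  rw [polarizeMv_monomial a c, diffOp_smul_right, map_smul, h1, diffOp_smul_right]
  congr 1
  exact mono_case_one a b ha hb

/-- `Sym(q̃(∂)Pol(p)) = q(∂)p`: evaluating `q̃(∂)Pol(p)` at `z_{i,j} = zᵢ` yields `q(∂)p`. -/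
theorem sym_diffOp_polarize {n k : ℕ} (p q : MvPolynomial (Fin n) ℝ)
    (hp : ∀ m ∈ p.support, ∀ i, m i ≤ k) (hq : MultiAffine q) :
    MvPolynomial.aeval (fun ij : Fin n × Fin k => MvPolynomial.X ij.1)
        (diffOp (tildeQ k q) (polarizeMv k p)) =
      diffOp q p := by
  classical
  rw [MvPolynomial.as_sum p, polarizeMv_sum, diffOp_sum_right, map_sum, diffOp_sum_right]
  refine Finset.sum_congr rfl fun v hv => ?_
  rw [MvPolynomial.as_sum q, tildeQ_sum, diffOp_sum_left, map_sum, diffOp_sum_left]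
  refine Finset.sum_congr rfl fun m hm => ?_
  have hm1 : MvPolynomial.monomial m (MvPolynomial.coeff m q)
      = (MvPolynomial.coeff m q) • MvPolynomial.monomial m (1:ℝ) := by
    rw [smul_monomial, smul_eq_mul, mul_one]
  rw [hm1, tildeQ_smul, diffOp_smul_left, map_smul, diffOp_smul_left]
  congr 1
  exact mono_case v m (MvPolynomial.coeff v p) (fun i => hp v hv i) (fun i => hq m hm i)
end
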